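/- arXiv:2404.07599 — 5 statements merged into one kernel-verified Lean document; each statement's English description precedes it below -/
import Mathlib

section
/- There exists a linear isometry T from ℓ∞ into ℓ∞ (i.e., ‖T(a)‖_∞ = ‖a‖_∞ for every bounded real sequence a) such that for every nonzero a ∈ ℓ∞ and every n ∈ ℕ, the n-th coordinate of T(a) satisfies |(T a)(n)| < ‖a‖_∞; in other words, no nonzero element of the range of T has'a coordinate of maximum modulus. -/
noncomputable def cseq (j : ℕ) : ℝ := 1 - 1/(j+2)

lemma cseq_nonneg (j : ℕ) : 0 ≤ cseq j := by
  have h : (1:ℝ)/(j+2) ≤ 1 := by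
    rw [div_le_one (by positivity)]
    have := Nat.cast_nonneg (α := ℝ) j
    linarith
  rw [cseq]; linarith

lemma cseq_lt_one (j : ℕ) : cseq j < 1 := by
  have : 0 < 1/((j:ℝ)+2) := by positivity
  rw [cseq]; linarith

lemma cseq_tendsto : Filter.Tendsto cseq Filter.atTop (nhds 1) := by
  have h0 : Filter.Tendsto (fun j : ℕ => (j:ℝ)+2) Filter.atTop Filter.atTop :=
    Filter.tendsto_atTop_add_const_right _ 2 tendsto_natCast_atTop_atTop
  have h : Filter.Tendsto (fun j : ℕ => ((j:ℝ)+2)⁻¹) Filter.atTop (nhds 0) :=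
    tendsto_inv_atTop_zero.comp h0
  have h2 := (tendsto_const_nhds (x := (1:ℝ)) (f := Filter.atTop (α := ℕ))).sub h
  have he : cseq = fun j : ℕ => 1 - ((j:ℝ)+2)⁻¹ := by funext j; simp [cseq, one_div]
  rw [he]; simpa using h2

set_option synthInstance.maxHeartbeats 400000
set_option maxHeartbeats 1600000

noncomputable def Tfun (a : ℕ → ℝ) (m : ℕ) : ℝ := cseq m.unpair.1 * a m.unpair.2

/-- There is a linear isometry `T` from `ℓ∞` into `ℓ∞` such that no nonzero element of the
range of `T` has a coordinate of maximum modulus: `|(T a) n| < ‖a‖` for all `n` whenever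
`a ≠ 0`. -/
theorem linear_isometry_linfty_no_max_coordinate :
    ∃ T : lp (fun _ : ℕ => ℝ) ⊤ →ₗ[ℝ] lp (fun _ : ℕ => ℝ) ⊤,
      (∀ a : lp (fun _ : ℕ => ℝ) ⊤, ‖T a‖ = ‖a‖) ∧
      (∀ a : lp (fun _ : ℕ => ℝ) ⊤, a ≠ 0 → ∀ n : ℕ, |(T a) n| < ‖a‖) := by
  have key : ∀ (a : lp (fun _ : ℕ => ℝ) ⊤) (m : ℕ), ‖Tfun (a : ∀ _ : ℕ, ℝ) m‖ ≤ ‖a‖ := by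
    intro a m
    have h1 : ‖(a : ∀ _ : ℕ, ℝ) m.unpair.2‖ ≤ ‖a‖ :=
      lp.norm_apply_le_norm ENNReal.top_ne_zero a _
    simp only [Tfun, Real.norm_eq_abs, abs_mul, abs_of_nonneg (cseq_nonneg _)]
    calc cseq m.unpair.1 * |(a : ∀ _ : ℕ, ℝ) m.unpair.2| ≤ 1 * ‖a‖ :=
          mul_le_mul (cseq_lt_one _).le (by simpa using h1) (abs_nonneg _) zero_le_one
      _ = ‖a‖ := one_mul _
  have hmem : ∀ a : lp (fun _ : ℕ => ℝ) ⊤, Memℓp (Tfun (a : ∀ _ : ℕ, ℝ)) ⊤ := by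
    intro a
    rw [memℓp_infty_iff]
    exact ⟨‖a‖, by rintro x ⟨m, rfl⟩; exact key a m⟩
  refine ⟨{ toFun := fun a => ⟨Tfun (a : ∀ _ : ℕ, ℝ), hmem a⟩
            map_add' := ?_
            map_smul' := ?_ }, ?_, ?_⟩
  · intro a b; ext m; simp [Tfun, lp.coeFn_add, Pi.add_apply]; erw [Pi.add_apply]; simp only [Tfun]; ring
  · intro c a; ext m; simp [Tfun, lp.coeFn_smul, Pi.smul_apply, smul_eq_mul]; ring
  · intro a
    apply le_antisymm
    · exact lp.norm_le_of_forall_le (norm_nonneg a) (key a)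
    · apply lp.norm_le_of_forall_le (norm_nonneg _)
      intro k
      set b : lp (fun _ : ℕ => ℝ) ⊤ := ⟨Tfun (a : ∀ _ : ℕ, ℝ), hmem a⟩ with hb
      show ‖(a : ∀ _ : ℕ, ℝ) k‖ ≤ ‖b‖
      have hjk : ∀ j : ℕ, cseq j * ‖(a : ∀ _ : ℕ, ℝ) k‖ ≤ ‖b‖ := by
        intro j
        have := lp.norm_apply_le_norm ENNReal.top_ne_zero b (Nat.pair j k)
        have hbm : (b : ∀ _ : ℕ, ℝ) (Nat.pair j k) = cseq j * (a : ∀ _ : ℕ, ℝ) k := by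
          simp [hb, Tfun, Nat.unpair_pair]
        rw [hbm] at this
        simpa [Real.norm_eq_abs, abs_mul, abs_of_nonneg (cseq_nonneg j)] using this
      have hlim : Filter.Tendsto (fun j => cseq j * ‖(a : ∀ _ : ℕ, ℝ) k‖)
          Filter.atTop (nhds (‖(a : ∀ _ : ℕ, ℝ) k‖)) := by
        simpa using cseq_tendsto.mul_const (‖(a : ∀ _ : ℕ, ℝ) k‖)
      exact le_of_tendsto hlim (Filter.Eventually.of_forall hjk)
  · intro a ha n
    have hpos : 0 < ‖a‖ := norm_pos_iff.mpr ha
    have h1 : ‖(a : ∀ _ : ℕ, ℝ) n.unpair.2‖ ≤ ‖a‖ :=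
      lp.norm_apply_le_norm ENNReal.top_ne_zero a _
    show |Tfun (a : ∀ _ : ℕ, ℝ) n| < ‖a‖
    simp only [Tfun, abs_mul, abs_of_nonneg (cseq_nonneg _)]
    calc cseq n.unpair.1 * |(a : ∀ _ : ℕ, ℝ) n.unpair.2|
        ≤ cseq n.unpair.1 * ‖a‖ := by
          apply mul_le_mul_of_nonneg_left (by simpa using h1) (cseq_nonneg _)
      _ < 1 * ‖a‖ := by apply mul_lt_mul_of_pos_right (cseq_lt_one _) hpos
      _ = ‖a‖ := one_mul _
end

section
/- Let M be an infinite pointed metric space containing sequences of points (p_n) and (q_n) with p_n ≠ q_n for all n and d(p_n, p_m) > d(p_n, q_n) + d(p_m, q_m) whenever n ≠ m. Suppose (g_n) ⊆ Lip₀(M) satisfies ‖g_n‖ = 1 and |g_n(p)| ≤ max{0, d(p_n, q_n) − d(p_n, p)} for all n ∈ ℕ and p ∈ M. Then for every nonzero bounded real sequence λ = (λ_n), the function g^(λ) defined pointwise by g^(λ)(p) = Σ_n λ_n g_n(p) (at most one term of the series is nonzero at each point, since the g_n have pairwise disjoint supports) belongs to Lip₀(M) and satisfies ‖g^(λ)‖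 = ‖λ‖_∞. Moreover, if no g_n strongly attains its norm, then g^(λ) does not strongly attain its norm. -/
open Filter Set
open scoped ZeroAtInfty ENNReal NNReal

/-- The optimal Lipschitz constant (Lipschitz norm) of `f : M → ℝ`. -/
noncomputable def lipNorm {M : Type*} [MetricSpace M] (f : M → ℝ) : ℝ :=
  sSup {r : ℝ | ∃ p q : M, p ≠ q ∧ r = |f p - f q| / dist p q}

/-- `f` belongs to `Lip₀(M)`: it is Lipschitz and vanishes at the base point. -/
def MemLip0 {M : Type*} [MetricSpace M] (base : M) (f : M → ℝ) : Prop :=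
  f base = 0 ∧ ∃ K : ℝ≥0, LipschitzWith K f

/-- `f` strongly attains its (Lipschitz) norm. -/
def StronglyAttains {M : Type*} [MetricSpace M] (f : M → ℝ) : Prop :=
  ∃ p q : M, p ≠ q ∧ |f p - f q| = lipNorm f * dist p q

/-- `f` attains its pointwise norm. -/
def PointwiseAttains {M : Type*} [MetricSpace M] (f : M → ℝ) : Prop :=
  ∃ p : M, sSup {r : ℝ | ∃ q : M, q ≠ p ∧ r = |f p - f q| / dist p q} = lipNorm f

/-- Lemma on disjointly supported "cone-dominated" Lipschitz functions: the pointwise sum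
`g^(λ) = Σ λ_n g_n` has Lipschitz norm `‖λ‖_∞`, and it does not strongly attain its norm
if no `g_n` does. -/
theorem disjoint_cone_sum_lipNorm {M : Type*} [MetricSpace M] [Infinite M] (base : M)
    (p q : ℕ → M) (hpq : ∀ n, p n ≠ q n)
    (hsep : ∀ n m, n ≠ m → dist (p n) (p m) > dist (p n) (q n) + dist (p m) (q m))
    (g : ℕ → M → ℝ) (hg0 : ∀ n, g n base = 0)
    (hgnorm : ∀ n, lipNorm (g n) = 1)
    (hgcone : ∀ n, ∀ x : M, |g n x| ≤ max 0 (dist (p n) (q n) - dist (p n) x))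
    (a : lp (fun _ : ℕ => ℝ) ⊤) (ha : a ≠ 0) :
    MemLip0 base (fun x => ∑' n, a n * g n x) ∧
    lipNorm (fun x => ∑' n, a n * g n x) = ‖a‖ ∧
    ((∀ n, ¬ StronglyAttains (g n)) →
      ¬ StronglyAttains (fun x => ∑' n, a n * g n x)) := by
  classical
  have hnorm_pos : 0 < ‖a‖ := norm_pos_iff.mpr ha
  have habd : ∀ n, |a n| ≤ ‖a‖ := fun n => by
    have := lp.norm_apply_le_norm (show (⊤ : ℝ≥0∞) ≠ 0 by simp) a n
    rwa [Real.norm_eq_abs] at this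
  -- each `g n` is 1-Lipschitz
  have glip : ∀ n (x y : M), |g n x - g n y| ≤ dist x y := by
    intro n x y
    rcases eq_or_ne x y with rfl | hxy
    · simp
    · have h1 : sSup {r : ℝ | ∃ u v : M, u ≠ v ∧ r = |g n u - g n v| / dist u v} = 1 :=
        hgnorm n
      have hbdd : BddAbove {r : ℝ | ∃ u v : M, u ≠ v ∧ r = |g n u - g n v| / dist u v} := by
        by_contra h
        rw [Real.sSup_of_not_bddAbove h] at h1
        norm_num at h1
      have hmem : |g n x - g n y| / dist x y ∈
          {r : ℝ | ∃ u v : M, u ≠ v ∧ r = |g n u - g n v| / dist u v} := ⟨x, y, hxy, rfl⟩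
      have h2 := le_csSup hbdd hmem
      rw [h1] at h2
      exact (div_le_one (dist_pos.mpr hxy)).mp h2
  -- points where `g n` is nonzero lie in the open cone ball
  have hsupp : ∀ n (x : M), g n x ≠ 0 → dist (p n) x < dist (p n) (q n) := by
    intro n x hx
    have h3 : 0 < |g n x| := abs_pos.mpr hx
    have h4 : 0 < max 0 (dist (p n) (q n) - dist (p n) x) := lt_of_lt_of_le h3 (hgcone n x)
    rcases lt_max_iff.mp h4 with h | h
    · exact absurd h (lt_irrefl 0)
    · linarith
  have hcone' : ∀ n (x : M), g n x ≠ 0 → |g n x| ≤ dist (p n) (q n) - dist (p n) x := by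
    intro n x hx
    have h4 := hsupp n x hx
    have := hgcone n x
    rwa [max_eq_right (by linarith)] at this
  -- disjoint supports
  have hdisj : ∀ n m (x : M), n ≠ m → g n x ≠ 0 → g m x = 0 := by
    intro n m x hnm hn
    by_contra hm
    have d1 := hsupp n x hn
    have d2 := hsupp m x hm
    have hs := hsep n m hnm
    have tri := dist_triangle (p n) x (p m)
    have hc : dist x (p m) = dist (p m) x := dist_comm _ _
    linarith
  -- two active supports are far apart
  have hstrict : ∀ n m (x y : M), n ≠ m → g n x ≠ 0 → g m y ≠ 0 →
      |g n x| + |g m y| < dist x y := by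
    intro n m x y hnm hx hy
    have c1 := hcone' n x hx
    have c2 := hcone' m y hy
    have hs := hsep n m hnm
    have tri := dist_triangle4 (p n) x y (p m)
    have hc : dist y (p m) = dist (p m) y := dist_comm _ _
    linarith
  -- at each point the sum reduces to a single term
  have key : ∀ x : M, ∃ n, (∑' k, a k * g k x) = a n * g n x ∧ ∀ m, m ≠ n → g m x = 0 := by
    intro x
    by_cases h : ∃ n, g n x ≠ 0
    · obtain ⟨n, hn⟩ := h
      have hz : ∀ m, m ≠ n → g m x = 0 := fun m hm => hdisj n m x hm.symm hn
      exact ⟨n, tsum_eq_single n (fun m hm => by rw [hz m hm, mul_zero]), hz⟩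
    · push_neg at h
      exact ⟨0, by simp [h], fun m _ => h m⟩
  -- the global Lipschitz estimate
  have hGlip : ∀ x y : M,
      |(∑' k, a k * g k x) - ∑' k, a k * g k y| ≤ ‖a‖ * dist x y := by
    intro x y
    obtain ⟨n, hx1, hx2⟩ := key x
    obtain ⟨m, hy1, hy2⟩ := key y
    rw [hx1, hy1]
    rcases eq_or_ne n m with rfl | hnm
    · rw [← mul_sub, abs_mul]
      exact mul_le_mul (habd n) (glip n x y) (abs_nonneg _) (norm_nonneg _)
    · have hgny : g n y = 0 := hy2 n hnm
      have hgmx : g m x = 0 := hx2 m hnm.symm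
      by_cases hx0 : g n x = 0
      · have e : |a n * g n x - a m * g m y| = |a m| * |g m x - g m y| := by
          rw [hx0, hgmx, mul_zero, zero_sub, abs_neg, abs_mul, zero_sub, abs_neg]
        rw [e]
        exact mul_le_mul (habd m) (glip m x y) (abs_nonneg _) (norm_nonneg _)
      · by_cases hy0 : g m y = 0
        · have e : |a n * g n x - a m * g m y| = |a n| * |g n x - g n y| := by
            rw [hy0, hgny, mul_zero, sub_zero, abs_mul, sub_zero]
          rw [e]
          exact mul_le_mul (habd n) (glip n x y) (abs_nonneg _) (norm_nonneg _)
        · have hs := hstrict n m x y hnm hx0 hy0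
          have b1 : |a n * g n x - a m * g m y| ≤ |a n| * |g n x| + |a m| * |g m y| := by
            rw [← abs_mul, ← abs_mul]
            exact abs_sub _ _
          nlinarith [mul_le_mul_of_nonneg_right (habd n) (abs_nonneg (g n x)),
            mul_le_mul_of_nonneg_right (habd m) (abs_nonneg (g m y)),
            mul_le_mul_of_nonneg_left hs.le (norm_nonneg a)]
  -- the set of difference quotients of the sum
  set S : Set ℝ := {r : ℝ | ∃ u v : M,
      u ≠ v ∧ r = |(∑' k, a k * g k u) - ∑' k, a k * g k v| / dist u v} with hSdef
  obtain ⟨x0, y0, hxy0⟩ := exists_pair_ne M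
  have hSne : S.Nonempty := ⟨_, x0, y0, hxy0, rfl⟩
  have hSub : ∀ r ∈ S, r ≤ ‖a‖ := by
    rintro r ⟨u, v, huv, rfl⟩
    rw [div_le_iff₀ (dist_pos.mpr huv)]
    exact hGlip u v
  have hSbdd : BddAbove S := ⟨‖a‖, hSub⟩
  -- lower bound: sSup S ≥ |a n| for every n
  have hge : ∀ n, |a n| ≤ sSup S := by
    intro n
    by_contra hcon
    push_neg at hcon
    have hsS : 0 ≤ sSup S :=
      le_trans (div_nonneg (abs_nonneg _) dist_nonneg) (le_csSup hSbdd ⟨x0, y0, hxy0, rfl⟩)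
    set ε : ℝ := min (1 / 2) ((|a n| - sSup S) / (4 * ‖a‖)) with hεdef
    have hεa : 0 < |a n| - sSup S := by linarith
    have hε0 : 0 < ε := lt_min (by norm_num) (div_pos hεa (by linarith))
    have hε1 : ε < 1 := lt_of_le_of_lt (min_le_left _ _) (by norm_num)
    have hεb : 2 * ‖a‖ * ε ≤ (|a n| - sSup S) / 2 := by
      have h2 : ε ≤ (|a n| - sSup S) / (4 * ‖a‖) := min_le_right _ _
      have h3 : ε * (4 * ‖a‖) ≤ |a n| - sSup S := (le_div_iff₀ (by linarith)).mp h2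
      linarith
    -- wlog-style main estimate
    have main : ∀ u v : M, u ≠ v → |g n v| ≤ |g n u| →
        (1 - ε) * dist u v < |g n u - g n v| → |a n| - 2 * ‖a‖ * ε ≤ sSup S := by
      intro u v huv hord hΔ
      have hd : 0 < dist u v := dist_pos.mpr huv
      have hgu : g n u ≠ 0 := by
        intro h0
        have h5 : |g n v| ≤ 0 := by rw [h0, abs_zero] at hord; exact hord
        have h6 : g n v = 0 := abs_eq_zero.mp (le_antisymm h5 (abs_nonneg _))
        rw [h0, h6, sub_zero, abs_zero] at hΔ
        nlinarith
      obtain ⟨j, hu1, hu2⟩ := key u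
      have hjn : j = n := by
        by_contra hj
        exact hgu (hu2 n fun h => hj h.symm)
      rw [hjn] at hu1 hu2
      obtain ⟨m, hv1, hv2⟩ := key v
      have hkey : (|a n| - 2 * ‖a‖ * ε) * dist u v ≤
          |(∑' k, a k * g k u) - ∑' k, a k * g k v| := by
        rw [hu1, hv1]
        by_cases hgnv : g n v = 0
        · have hΔ' : (1 - ε) * dist u v < |g n u| := by rwa [hgnv, sub_zero] at hΔ
          by_cases hgmv : g m v = 0
          · rw [hgmv, mul_zero, sub_zero, abs_mul]
            nlinarith [mul_le_mul_of_nonneg_left hΔ'.le (abs_nonneg (a n)),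
              mul_nonneg (mul_nonneg hε0.le hd.le) (sub_nonneg.mpr (habd n)),
              mul_nonneg (mul_nonneg hε0.le hd.le) (norm_nonneg a)]
          · have hmn : m ≠ n := by rintro rfl; exact hgmv hgnv
            have hs := hstrict n m u v hmn.symm hgu hgmv
            have hsmall : |g m v| < ε * dist u v := by nlinarith
            have habs : |a n| * |g n u| - |a m| * |g m v| ≤ |a n * g n u - a m * g m v| := by
              rw [← abs_mul, ← abs_mul]
              exact abs_sub_abs_le_abs_sub _ _
            nlinarith [mul_le_mul_of_nonneg_left hΔ'.le (abs_nonneg (a n)),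
              mul_le_mul (habd m) hsmall.le (abs_nonneg _) (norm_nonneg a),
              mul_nonneg (mul_nonneg hε0.le hd.le) (sub_nonneg.mpr (habd n)),
              mul_nonneg (mul_nonneg hε0.le hd.le) (norm_nonneg a), habs]
        · have hmn : m = n := by
            by_contra hm
            exact hgnv (hv2 n fun h => hm h.symm)
          subst hmn
          rw [← mul_sub, abs_mul]
          nlinarith [mul_le_mul_of_nonneg_left hΔ.le (abs_nonneg (a m)),
            mul_nonneg (mul_nonneg hε0.le hd.le) (sub_nonneg.mpr (habd m)),
            mul_nonneg (mul_nonneg hε0.le hd.le) (norm_nonneg a)]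
      have hmem : |(∑' k, a k * g k u) - ∑' k, a k * g k v| / dist u v ∈ S :=
        ⟨u, v, huv, rfl⟩
      have h7 := le_csSup hSbdd hmem
      have h8 : |a n| - 2 * ‖a‖ * ε ≤
          |(∑' k, a k * g k u) - ∑' k, a k * g k v| / dist u v :=
        (le_div_iff₀ hd).mpr hkey
      linarith
    -- produce a good pair from `lipNorm (g n) = 1`
    have h1 : sSup {r : ℝ | ∃ u v : M, u ≠ v ∧ r = |g n u - g n v| / dist u v} = 1 :=
      hgnorm n
    have hSnne : {r : ℝ | ∃ u v : M, u ≠ v ∧ r = |g n u - g n v| / dist u v}.Nonempty :=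
      ⟨_, x0, y0, hxy0, rfl⟩
    obtain ⟨s, hsmem, hslt⟩ := exists_lt_of_lt_csSup hSnne
      (show 1 - ε < sSup {r : ℝ | ∃ u v : M, u ≠ v ∧ r = |g n u - g n v| / dist u v} by
        rw [h1]; linarith)
    obtain ⟨u, v, huv, rfl⟩ := hsmem
    have hd : 0 < dist u v := dist_pos.mpr huv
    have hΔ : (1 - ε) * dist u v < |g n u - g n v| := (lt_div_iff₀ hd).mp hslt
    have hfinal : |a n| - 2 * ‖a‖ * ε ≤ sSup S := by
      rcases le_total (|g n v|) (|g n u|) with hcase | hcase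
      · exact main u v huv hcase hΔ
      · exact main v u huv.symm hcase
          (by rw [dist_comm v u, abs_sub_comm]; exact hΔ)
    linarith
  -- the norm equality
  have heq : lipNorm (fun x : M => ∑' k, a k * g k x) = ‖a‖ := by
    have hle : sSup S ≤ ‖a‖ := csSup_le hSne hSub
    have hge2 : ‖a‖ ≤ sSup S := by
      rw [lp.norm_eq_ciSup]
      exact ciSup_le fun n => by rw [Real.norm_eq_abs]; exact hge n
    exact le_antisymm hle hge2
  refine ⟨⟨by simp [hg0], ⟨‖a‖₊, ?_⟩⟩, heq, ?_⟩
  · apply LipschitzWith.of_dist_le_mul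
    intro x y
    rw [Real.dist_eq, coe_nnnorm]
    exact hGlip x y
  · intro hns hSA
    obtain ⟨x, y, hxy, hat⟩ := hSA
    rw [heq] at hat
    have hat' : |(∑' k, a k * g k x) - ∑' k, a k * g k y| = ‖a‖ * dist x y := hat
    have hd : 0 < dist x y := dist_pos.mpr hxy
    obtain ⟨n, hx1, hx2⟩ := key x
    obtain ⟨m, hy1, hy2⟩ := key y
    have same : ∃ j, (∑' k, a k * g k x) = a j * g j x ∧
        (∑' k, a k * g k y) = a j * g j y := by
      by_cases hx0 : g n x = 0
      · refine ⟨m, ?_, hy1⟩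
        have hgmx : g m x = 0 := by
          rcases eq_or_ne m n with rfl | h
          · exact hx0
          · exact hx2 m h
        rw [hx1, hx0, hgmx, mul_zero, mul_zero]
      · by_cases hy0 : g m y = 0
        · refine ⟨n, hx1, ?_⟩
          have hgny : g n y = 0 := by
            rcases eq_or_ne n m with rfl | h
            · exact hy0
            · exact hy2 n h
          rw [hy1, hy0, hgny, mul_zero, mul_zero]
        · rcases eq_or_ne n m with rfl | hnm
          · exact ⟨n, hx1, hy1⟩
          · exfalso
            have hs := hstrict n m x y hnm hx0 hy0
            have b1 : |a n * g n x - a m * g m y| ≤ |a n| * |g n x| + |a m| * |g m y| := by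
              rw [← abs_mul, ← abs_mul]
              exact abs_sub _ _
            rw [hx1, hy1] at hat'
            nlinarith [mul_le_mul_of_nonneg_right (habd n) (abs_nonneg (g n x)),
              mul_le_mul_of_nonneg_right (habd m) (abs_nonneg (g m y)),
              mul_lt_mul_of_pos_left hs hnorm_pos]
    obtain ⟨j, hjx, hjy⟩ := same
    rw [hjx, hjy, ← mul_sub, abs_mul] at hat'
    have hΔle : |g j x - g j y| ≤ dist x y := glip j x y
    have hAle : |a j| ≤ ‖a‖ := habd j
    have e1 : ‖a‖ * dist x y ≤ ‖a‖ * |g j x - g j y| :=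
      calc ‖a‖ * dist x y = |a j| * |g j x - g j y| := hat'.symm
        _ ≤ ‖a‖ * |g j x - g j y| := mul_le_mul_of_nonneg_right hAle (abs_nonneg _)
    have e2 : dist x y ≤ |g j x - g j y| := le_of_mul_le_mul_left e1 hnorm_pos
    have h6 : |g j x - g j y| = dist x y := le_antisymm hΔle e2
    exact hns j ⟨x, y, hxy, by rw [hgnorm j, one_mul]; exact h6⟩
end

section
/- Let M be a metrically convex metric space (with at least two points) with a distinguished base point 0. Then there exists a linear map T : c₀ → Lip₀(M) such that ‖T a‖ = ‖a‖_∞ for every a ∈ c₀, and for every nonzero a ∈ c₀ one has inf{‖T a − g‖ : g ∈ SNA(M)} > 0; in particular, (Lip₀(M) \ closure(SNA(M))) ∪ {0} contains an isometric copy of c₀. -/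
open Filter Set
open scoped ZeroAtInfty ENNReal NNReal

/-- `M` is metrically convex: any two distinct points are joined by an isometric copy of
the interval `[0, dist x y]`. -/
def MetricallyConvex (M : Type*) [MetricSpace M] : Prop :=
  ∀ x y : M, x ≠ y → ∃ γ : ℝ → M, γ 0 = x ∧ γ (dist x y) = y ∧
    ∀ s ∈ Set.Icc 0 (dist x y), ∀ t ∈ Set.Icc 0 (dist x y), dist (γ s) (γ t) = |s - t|


namespace SNAaux
open MeasureTheory Metric


noncomputable def ctr (m k : ℕ) : ℝ := (2 * k + 1) / 2 ^ (m + 1)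
noncomputable def rad (m k : ℕ) : ℝ := (8:ℝ)⁻¹ ^ (m + 1) * (2:ℝ)⁻¹ ^ k

def U : Set ℝ := ⋃ (m : ℕ) (k : ℕ), ball (ctr m k) (rad m k)

lemma rad_pos (m k : ℕ) : 0 < rad m k := by rw [rad]; positivity

lemma rad_le (m k : ℕ) : rad m k ≤ (8:ℝ)⁻¹ ^ (m + 1) := by
  have h1 : (2:ℝ)⁻¹ ^ k ≤ 1 := pow_le_one₀ (by norm_num) (by norm_num)
  have h2 : (0:ℝ) ≤ (8:ℝ)⁻¹ ^ (m+1) := by positivity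
  calc rad m k ≤ (8:ℝ)⁻¹ ^ (m+1) * 1 := mul_le_mul_of_nonneg_left h1 h2
  _ = _ := mul_one _

lemma U_open : IsOpen U := isOpen_iUnion fun _ => isOpen_iUnion fun _ => isOpen_ball

lemma meas_U : MeasurableSet U := U_open.measurableSet

lemma ofReal_half_pow (k : ℕ) : ENNReal.ofReal ((2:ℝ)⁻¹ ^ k) = (2:ℝ≥0∞)⁻¹ ^ k := by
  rw [ENNReal.ofReal_pow (by norm_num)]
  congr 1
  rw [ENNReal.ofReal_inv_of_pos (by norm_num)]
  norm_num

lemma tsum_half_pow : (∑' k : ℕ, (2:ℝ≥0∞)⁻¹ ^ k) = 2 := by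
  rw [ENNReal.tsum_geometric, ENNReal.one_sub_inv_two, inv_inv]

lemma vol_level (m : ℕ) :
    volume (⋃ k, ball (ctr m k) (rad m k)) ≤ ENNReal.ofReal (4 * (8:ℝ)⁻¹ ^ (m + 1)) := by
  calc volume (⋃ k, ball (ctr m k) (rad m k)) ≤ ∑' k, volume (ball (ctr m k) (rad m k)) :=
        measure_iUnion_le _
    _ = ∑' k : ℕ, ENNReal.ofReal (2 * (8:ℝ)⁻¹ ^ (m+1)) * (2:ℝ≥0∞)⁻¹ ^ k := by
        refine tsum_congr fun k => ?_
        rw [Real.volume_ball, rad, ← mul_assoc, ENNReal.ofReal_mul (by positivity),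
          ofReal_half_pow]
    _ = ENNReal.ofReal (2 * (8:ℝ)⁻¹ ^ (m+1)) * 2 := by rw [ENNReal.tsum_mul_left, tsum_half_pow]
    _ = ENNReal.ofReal (4 * (8:ℝ)⁻¹ ^ (m + 1)) := by
        rw [show (2:ℝ≥0∞) = ENNReal.ofReal 2 by norm_num, ← ENNReal.ofReal_mul (by positivity)]
        ring_nf

lemma vol_U_le_one : volume U ≤ 1 := by
  calc volume U ≤ ∑' m, volume (⋃ k, ball (ctr m k) (rad m k)) := measure_iUnion_le _
    _ ≤ ∑' m : ℕ, (2:ℝ≥0∞)⁻¹ ^ (m+1) := by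
        refine ENNReal.tsum_le_tsum fun m => (vol_level m).trans ?_
        rw [← ofReal_half_pow]
        refine ENNReal.ofReal_le_ofReal ?_
        have h8 : (8:ℝ)⁻¹ ^ m ≤ 2⁻¹ ^ m := pow_le_pow_left₀ (by norm_num) (by norm_num) m
        have e1 : (4:ℝ) * 8⁻¹ ^ (m+1) = 2⁻¹ * 8⁻¹ ^ m := by rw [pow_succ']; ring
        have e2 : (2:ℝ)⁻¹ ^ (m+1) = 2⁻¹ * 2⁻¹ ^ m := by rw [pow_succ']
        rw [e1, e2]
        nlinarith [h8]
    _ = 2⁻¹ * ∑' m : ℕ, (2:ℝ≥0∞)⁻¹ ^ m := by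
        rw [← ENNReal.tsum_mul_left]; exact tsum_congr fun m => (pow_succ' _ _)
    _ = 1 := by rw [tsum_half_pow]; exact ENNReal.inv_mul_cancel (by norm_num) (by norm_num)

lemma vol_U_lt_top : volume U < ⊤ := lt_of_le_of_lt vol_U_le_one (by norm_num)


noncomputable def w (t : ℝ) : ℝ := t - (volume (U ∩ Set.Ioc 0 t)).toReal

lemma vol_fin (s : Set ℝ) : volume (U ∩ s) ≠ ⊤ :=
  (lt_of_le_of_lt (measure_mono inter_subset_left) vol_U_lt_top).ne

lemma w_zero : w 0 = 0 := by simp [w]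

lemma w_diff {s t : ℝ} (h0 : 0 ≤ s) (hst : s ≤ t) :
    w t - w s = (t - s) - (volume (U ∩ Set.Ioc s t)).toReal := by
  have hsplit : Set.Ioc 0 t = Set.Ioc 0 s ∪ Set.Ioc s t := (Set.Ioc_union_Ioc_eq_Ioc h0 hst).symm
  have hdisj : Disjoint (U ∩ Set.Ioc 0 s) (U ∩ Set.Ioc s t) :=
    Disjoint.mono inter_subset_right inter_subset_right (Set.Ioc_disjoint_Ioc_of_le le_rfl)
  have : volume (U ∩ Set.Ioc 0 t) = volume (U ∩ Set.Ioc 0 s) + volume (U ∩ Set.Ioc s t) := by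
    rw [hsplit, Set.inter_union_distrib_left]
    exact measure_union hdisj (meas_U.inter measurableSet_Ioc)
  rw [w, w, this, ENNReal.toReal_add (vol_fin _) (vol_fin _)]
  ring

lemma vol_Ioc_le {s t : ℝ} (hst : s ≤ t) : (volume (U ∩ Set.Ioc s t)).toReal ≤ t - s := by
  have h1 : volume (U ∩ Set.Ioc s t) ≤ ENNReal.ofReal (t - s) := by
    refine (measure_mono inter_subset_right).trans ?_
    rw [Real.volume_Ioc]
  exact ENNReal.toReal_le_of_le_ofReal (by linarith) h1

lemma w_mono {s t : ℝ} (h0 : 0 ≤ s) (hst : s ≤ t) : w s ≤ w t := by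
  have := w_diff h0 hst
  have h2 := vol_Ioc_le hst
  linarith

lemma w_lip {s t : ℝ} (h0 : 0 ≤ s) (hst : s ≤ t) : w t - w s ≤ t - s := by
  have := w_diff h0 hst
  have h2 : 0 ≤ (volume (U ∩ Set.Ioc s t)).toReal := ENNReal.toReal_nonneg
  linarith

lemma w_flat {s t : ℝ} (h0 : 0 ≤ s) (hst : s ≤ t) (hU : Set.Ioc s t ⊆ U) : w t = w s := by
  have h1 : U ∩ Set.Ioc s t = Set.Ioc s t := inter_eq_self_of_subset_right hU
  have := w_diff h0 hst
  rw [h1, Real.volume_Ioc, ENNReal.toReal_ofReal (by linarith)] at this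
  linarith

lemma w_nonneg {t : ℝ} (h : 0 ≤ t) : 0 ≤ w t := by
  have := w_mono le_rfl h
  rw [w_zero] at this; exact this

/-- the clamp function -/
noncomputable def cl (t : ℝ) : ℝ := max 0 (min t (1 - t))

lemma cl_nonneg (t : ℝ) : 0 ≤ cl t := le_max_left _ _

lemma cl_le_half (t : ℝ) : cl t ≤ 1 / 2 := by
  rw [cl, max_le_iff]
  constructor
  · norm_num
  · rcases le_total t (1 - t) with h | h
    · rw [min_eq_left h]; linarith
    · rw [min_eq_right h]; linarith

lemma cl_lip {s t : ℝ} : |cl t - cl s| ≤ |t - s| := by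
  have h1 : |cl t - cl s| ≤ max |(0:ℝ) - 0| |min t (1 - t) - min s (1 - s)| :=
    abs_max_sub_max_le_max _ _ _ _
  have h2 : |min t (1 - t) - min s (1 - s)| ≤ max |t - s| |(1 - t) - (1 - s)| :=
    abs_min_sub_min_le_max _ _ _ _
  have h3 : |(1 - t) - (1 - s)| = |t - s| := by rw [show (1-t)-(1-s) = -(t-s) by ring, abs_neg]
  rw [h3, max_self] at h2
  simpa using h1.trans (by simpa using h2)

lemma cl_eq_id {t : ℝ} (h0 : 0 ≤ t) (h1 : t ≤ 1/2) : cl t = t := by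
  rw [cl, min_eq_left (by linarith), max_eq_right h0]

lemma cl_eq_reflect {t : ℝ} (h0 : 1/2 ≤ t) (h1 : t ≤ 1) : cl t = 1 - t := by
  rw [cl, min_eq_right (by linarith), max_eq_right (by linarith)]

lemma cl_eq_zero {t : ℝ} (h : t ≤ 0 ∨ 1 ≤ t) : cl t = 0 := by
  rcases h with h | h
  · rw [cl, max_eq_left]
    exact (min_le_left _ _).trans h
  · rw [cl, max_eq_left]
    exact (min_le_right _ _).trans (by linarith)

noncomputable def block (t : ℝ) : ℝ := w (cl t)

lemma w_lip' {s t : ℝ} (h0 : 0 ≤ s) (h0' : 0 ≤ t) : |w t - w s| ≤ |t - s| := by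
  rcases le_total s t with h | h
  · rw [abs_of_nonneg (by linarith [w_mono h0 h]), abs_of_nonneg (by linarith)]
    exact w_lip h0 h
  · rw [abs_of_nonpos (by linarith [w_mono h0' h]), abs_of_nonpos (by linarith)]
    linarith [w_lip h0' h]

lemma block_lip {s t : ℝ} : |block t - block s| ≤ |t - s| :=
  (w_lip' (cl_nonneg s) (cl_nonneg t)).trans cl_lip

lemma block_nonneg (t : ℝ) : 0 ≤ block t := w_nonneg (cl_nonneg t)

lemma block_zero {t : ℝ} (h : t ≤ 0 ∨ 1 ≤ t) : block t = 0 := by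
  rw [block, cl_eq_zero h, w_zero]

lemma block_eq_w {t : ℝ} (h0 : 0 ≤ t) (h1 : t ≤ 1/2) : block t = w t := by
  rw [block, cl_eq_id h0 h1]

lemma block_eq_w_reflect {t : ℝ} (h0 : 1/2 ≤ t) (h1 : t ≤ 1) : block t = w (1 - t) := by
  rw [block, cl_eq_reflect h0 h1]


lemma pow8_le_pow2 (j : ℕ) : (8:ℝ)⁻¹ ^ j ≤ (2:ℝ)⁻¹ ^ j :=
  pow_le_pow_left₀ (by norm_num) (by norm_num) j

lemma ball_in {p q : ℝ} (hp : 0 ≤ p) (hpq : p < q) :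
    ∃ u v, p < u ∧ u < v ∧ v < q ∧ Set.Ioc u v ⊆ U := by
  set x := (p + q) / 2 with hx
  have hxpos : 0 ≤ x := by rw [hx]; linarith
  have hh : 0 < (q - p) / 2 := by linarith
  obtain ⟨m, hm⟩ := exists_pow_lt_of_lt_one hh (by norm_num : (2:ℝ)⁻¹ < 1)
  set k := Nat.floor (x * 2 ^ m) with hk
  have h2m : (0:ℝ) < 2 ^ m := by positivity
  have h2m1 : (0:ℝ) < 2 ^ (m+1) := by positivity
  have hx0 : 0 ≤ x * 2 ^ m := mul_nonneg hxpos h2m.le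
  have hk1 : (k : ℝ) ≤ x * 2 ^ m := Nat.floor_le hx0
  have hk2 : x * 2 ^ m < k + 1 := Nat.lt_floor_add_one _
  have hc : ctr m k * 2 ^ (m+1) = 2 * k + 1 := by
    rw [ctr]; field_simp
  have hi : (2:ℝ)⁻¹ ^ (m+1) * 2 ^ (m+1) = 1 := by
    rw [inv_pow, inv_mul_cancel₀ (ne_of_gt h2m1)]
  have e2 : (2:ℝ) ^ (m+1) = 2 * 2 ^ m := by ring
  have hctr : |ctr m k - x| ≤ (2:ℝ)⁻¹ ^ (m+1) := by
    rw [abs_le]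
    constructor
    · nlinarith [hc, hi, hk1, h2m1, e2]
    · nlinarith [hc, hi, hk2, h2m1, e2]
  have hrad : rad m k ≤ (2:ℝ)⁻¹ ^ (m+1) := (rad_le m k).trans (pow8_le_pow2 (m+1))
  have hrpos := rad_pos m k
  have hsum : (2:ℝ)⁻¹ ^ (m+1) + (2:ℝ)⁻¹ ^ (m+1) = (2:ℝ)⁻¹ ^ m := by
    rw [pow_succ]; ring
  have hctr1 := (abs_le.1 hctr).1
  have hctr2 := (abs_le.1 hctr).2
  have hxp : x - (q - p) / 2 = p := by rw [hx]; ring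
  have hxq : x + (q - p) / 2 = q := by rw [hx]; ring
  refine ⟨ctr m k - rad m k / 2, ctr m k + rad m k / 2, by linarith, by linarith, by linarith, ?_⟩
  intro z hz
  have hzb : z ∈ ball (ctr m k) (rad m k) := by
    rw [mem_ball, Real.dist_eq, abs_lt]
    constructor
    · linarith [hz.1]
    · linarith [hz.2]
  exact Set.mem_iUnion.mpr ⟨m, Set.mem_iUnion.mpr ⟨k, hzb⟩⟩


lemma block_flat_lo {p q : ℝ} (hp : 0 ≤ p) (hpq : p < q) (hq : q ≤ 1/2) :
    ∃ u v, p < u ∧ u < v ∧ v < q ∧ block u = block v := by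
  obtain ⟨u, v, h1, h2, h3, h4⟩ := ball_in hp hpq
  refine ⟨u, v, h1, h2, h3, ?_⟩
  rw [block_eq_w (by linarith) (by linarith), block_eq_w (by linarith) (by linarith)]
  exact (w_flat (by linarith) (by linarith) h4).symm

lemma block_flat_hi {p q : ℝ} (hp : 1/2 ≤ p) (hpq : p < q) (hq : q ≤ 1) :
    ∃ u v, p < u ∧ u < v ∧ v < q ∧ block u = block v := by
  obtain ⟨u', v', h1, h2, h3, h4⟩ := ball_in (by linarith : (0:ℝ) ≤ 1 - q) (by linarith : 1 - q < 1 - p)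
  refine ⟨1 - v', 1 - u', by linarith, by linarith, by linarith, ?_⟩
  rw [block_eq_w_reflect (by linarith) (by linarith),
    block_eq_w_reflect (by linarith) (by linarith)]
  simp only [sub_sub_cancel]
  exact w_flat (by linarith) (by linarith) h4

lemma block_flat {p q : ℝ} (hp : 0 ≤ p) (hpq : p < q) (hq : q ≤ 1) :
    ∃ u v, p < u ∧ u < v ∧ v < q ∧ block u = block v := by
  rcases le_or_gt q (1/2) with h | h
  · exact block_flat_lo hp hpq h
  rcases le_or_gt (1/2) p with h' | h'
  · exact block_flat_hi h' hpq hq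
  · obtain ⟨u, v, h1, h2, h3, h4⟩ := block_flat_lo hp h' le_rfl
    exact ⟨u, v, h1, h2, by linarith, h4⟩


noncomputable def len (D : ℝ) (n : ℕ) : ℝ := D * (4:ℝ)⁻¹ ^ (n + 1)
noncomputable def lA (D : ℝ) (n : ℕ) : ℝ := 2 * len D n
noncomputable def lB (D : ℝ) (n : ℕ) : ℝ := 3 * len D n
noncomputable def blockN (D : ℝ) (n : ℕ) (t : ℝ) : ℝ := len D n * block ((t - lA D n) / len D n)

variable {D : ℝ}

lemma len_pos (hD : 0 < D) (n : ℕ) : 0 < len D n := by rw [len]; positivity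

lemma lA_pos (hD : 0 < D) (n : ℕ) : 0 < lA D n := by
  rw [lA]; linarith [len_pos hD n]

lemma lA_lt_lB (hD : 0 < D) (n : ℕ) : lA D n < lB D n := by
  rw [lA, lB]; linarith [len_pos hD n]

lemma len_anti (hD : 0 < D) {n m : ℕ} (h : n < m) : len D m ≤ (4:ℝ)⁻¹ * len D n := by
  rw [len, len, ← mul_assoc, mul_comm (4:ℝ)⁻¹ D, mul_assoc]
  refine mul_le_mul_of_nonneg_left ?_ hD.le
  rw [← pow_succ']
  exact pow_le_pow_of_le_one (by norm_num) (by norm_num) (by omega)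

lemma lB_le_lA (hD : 0 < D) {n m : ℕ} (h : n < m) : lB D m ≤ lA D n := by
  have := len_anti hD h
  have hn := len_pos hD n
  rw [lB, lA]; nlinarith

lemma supp_disjoint (hD : 0 < D) {n m : ℕ} {t : ℝ} (htn : t ∈ Set.Ioo (lA D n) (lB D n))
    (htm : t ∈ Set.Ioo (lA D m) (lB D m)) : n = m := by
  by_contra hne
  rcases Nat.lt_or_ge n m with h | h
  · linarith [lB_le_lA hD h, htn.1, htm.2]
  · have h' : m < n := by omega
    linarith [lB_le_lA hD h', htm.1, htn.2]

lemma lB_le_lB0 (hD : 0 < D) (n : ℕ) : lB D n ≤ lB D 0 := by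
  rcases Nat.eq_zero_or_pos n with h | h
  · rw [h]
  · have := len_anti hD h
    have := len_pos hD 0
    rw [lB, lB]; nlinarith

lemma lB0_le_D (hD : 0 < D) : lB D 0 ≤ D := by
  rw [lB, len]; nlinarith

lemma blockN_lip (hD : 0 < D) (n : ℕ) {s t : ℝ} : |blockN D n t - blockN D n s| ≤ |t - s| := by
  have hl := len_pos hD n
  rw [blockN, blockN, ← mul_sub, abs_mul, abs_of_pos hl]
  have h := block_lip (s := (s - lA D n) / len D n) (t := (t - lA D n) / len D n)
  calc len D n * |block ((t - lA D n) / len D n) - block ((s - lA D n) / len D n)|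
      ≤ len D n * |(t - lA D n) / len D n - (s - lA D n) / len D n| :=
        mul_le_mul_of_nonneg_left h hl.le
    _ = |t - s| := by
        rw [div_sub_div_same, abs_div, abs_of_pos hl, show t - lA D n - (s - lA D n) = t - s by ring]
        field_simp

lemma blockN_nonneg (hD : 0 < D) (n : ℕ) (t : ℝ) : 0 ≤ blockN D n t := by
  rw [blockN]; exact mul_nonneg (len_pos hD n).le (block_nonneg _)

lemma blockN_lA (n : ℕ) : blockN D n (lA D n) = 0 := by
  rw [blockN, sub_self, zero_div, block_zero (Or.inl le_rfl), mul_zero]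

lemma blockN_lB (hD : 0 < D) (n : ℕ) : blockN D n (lB D n) = 0 := by
  have hl := len_pos hD n
  rw [blockN, block_zero, mul_zero]
  right
  rw [lB, lA, le_div_iff₀ hl]
  ring_nf
  linarith

open scoped Classical in
noncomputable def F (D : ℝ) (a : C₀(ℕ, ℝ)) (t : ℝ) : ℝ :=
  if h : ∃ n, t ∈ Set.Ioo (lA D n) (lB D n) then a h.choose * blockN D h.choose t else 0

lemma F_on (hD : 0 < D) {a : C₀(ℕ, ℝ)} {t : ℝ} {n : ℕ} (ht : t ∈ Set.Ioo (lA D n) (lB D n)) :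
    F D a t = a n * blockN D n t := by
  have h : ∃ m, t ∈ Set.Ioo (lA D m) (lB D m) := ⟨n, ht⟩
  simp only [F, dif_pos h]
  rw [supp_disjoint hD h.choose_spec ht]

lemma F_off {a : C₀(ℕ, ℝ)} {t : ℝ} (ht : ∀ n, t ∉ Set.Ioo (lA D n) (lB D n)) :
    F D a t = 0 := by
  have h : ¬ ∃ n, t ∈ Set.Ioo (lA D n) (lB D n) := by push_neg; exact ht
  simp only [F, dif_neg h]

lemma norm_apply_le (a : C₀(ℕ, ℝ)) (n : ℕ) : |a n| ≤ ‖a‖ := by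
  have := BoundedContinuousFunction.norm_coe_le_norm a.toBCF n
  rwa [ZeroAtInftyContinuousMap.norm_toBCF_eq_norm] at this

lemma F_bound_left (hD : 0 < D) {a : C₀(ℕ, ℝ)} {t : ℝ} {n : ℕ}
    (ht : t ∈ Set.Ioo (lA D n) (lB D n)) : |F D a t| ≤ ‖a‖ * (t - lA D n) := by
  rw [F_on hD ht, abs_mul]
  have h1 : |blockN D n t| ≤ t - lA D n := by
    have h0 := blockN_lip hD (D := D) n (s := lA D n) (t := t)
    rw [blockN_lA, sub_zero] at h0
    calc |blockN D n t| ≤ |t - lA D n| := h0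
      _ = t - lA D n := abs_of_pos (by linarith [ht.1])
  exact mul_le_mul (norm_apply_le a n) h1 (abs_nonneg _) (norm_nonneg a)

lemma F_bound_right (hD : 0 < D) {a : C₀(ℕ, ℝ)} {t : ℝ} {n : ℕ}
    (ht : t ∈ Set.Ioo (lA D n) (lB D n)) : |F D a t| ≤ ‖a‖ * (lB D n - t) := by
  rw [F_on hD ht, abs_mul]
  have h1 : |blockN D n t| ≤ lB D n - t := by
    have h0 := blockN_lip hD (D := D) n (s := t) (t := lB D n)
    rw [blockN_lB hD, zero_sub, abs_neg] at h0
    calc |blockN D n t| ≤ |lB D n - t| := h0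
      _ = lB D n - t := abs_of_pos (by linarith [ht.2])
  exact mul_le_mul (norm_apply_le a n) h1 (abs_nonneg _) (norm_nonneg a)

lemma F_lip_le (hD : 0 < D) (a : C₀(ℕ, ℝ)) {s t : ℝ} (hst : s ≤ t) :
    |F D a t - F D a s| ≤ ‖a‖ * (t - s) := by
  have hnorm : (0:ℝ) ≤ ‖a‖ := norm_nonneg a
  by_cases hs : ∃ n, s ∈ Set.Ioo (lA D n) (lB D n) <;>
    by_cases ht : ∃ n, t ∈ Set.Ioo (lA D n) (lB D n)
  · obtain ⟨ns, hns⟩ := hs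
    obtain ⟨nt, hnt⟩ := ht
    by_cases hnn : ns = nt
    · subst hnn
      rw [F_on hD hns, F_on hD hnt, ← mul_sub, abs_mul]
      have h1 : |blockN D ns t - blockN D ns s| ≤ t - s := by
        have h0 := blockN_lip hD (D := D) ns (s := s) (t := t)
        calc |blockN D ns t - blockN D ns s| ≤ |t - s| := h0
          _ = t - s := abs_of_nonneg (by linarith)
      exact mul_le_mul (norm_apply_le a ns) h1 (abs_nonneg _) (norm_nonneg a)
    · have hlt : nt < ns := by
        rcases Nat.lt_or_ge ns nt with h | h
        · exfalso; linarith [lB_le_lA hD h, hns.1, hnt.2]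
        · omega
      have hBA : lB D ns ≤ lA D nt := lB_le_lA hD hlt
      have h1 := F_bound_left hD (a := a) hnt
      have h2 := F_bound_right hD (a := a) hns
      calc |F D a t - F D a s| ≤ |F D a t| + |F D a s| := abs_sub _ _
        _ ≤ ‖a‖ * (t - lA D nt) + ‖a‖ * (lB D ns - s) := by linarith
        _ ≤ ‖a‖ * (t - s) := by nlinarith [mul_nonneg hnorm (sub_nonneg.mpr hBA)]
  · obtain ⟨ns, hns⟩ := hs
    rw [F_off (by push_neg at ht; exact ht), abs_sub_comm, sub_zero]
    have hBt : lB D ns ≤ t := by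
      have := ht
      push_neg at this
      have h3 := this ns
      simp only [Set.mem_Ioo, not_and, not_lt] at h3
      exact h3 (by linarith [hns.1])
    have h2 := F_bound_right hD (a := a) hns
    calc |F D a s| ≤ ‖a‖ * (lB D ns - s) := h2
      _ ≤ ‖a‖ * (t - s) := mul_le_mul_of_nonneg_left (by linarith) hnorm
  · obtain ⟨nt, hnt⟩ := ht
    rw [show F D a s = 0 from F_off (by push_neg at hs; exact hs), sub_zero]
    have hAs : s ≤ lA D nt := by
      push_neg at hs
      have h3 := hs nt
      simp only [Set.mem_Ioo, not_and, not_lt] at h3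
      by_contra hcon
      push_neg at hcon
      linarith [h3 hcon, hnt.2]
    have h1 := F_bound_left hD (a := a) hnt
    calc |F D a t| ≤ ‖a‖ * (t - lA D nt) := h1
      _ ≤ ‖a‖ * (t - s) := mul_le_mul_of_nonneg_left (by linarith) hnorm
  · push_neg at hs ht
    rw [F_off hs, F_off ht]
    simpa using mul_nonneg hnorm (by linarith : (0:ℝ) ≤ t - s)

lemma F_lipschitz (hD : 0 < D) (a : C₀(ℕ, ℝ)) (s t : ℝ) :
    |F D a t - F D a s| ≤ ‖a‖ * |t - s| := by
  rcases le_total s t with h | h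
  · rw [abs_of_nonneg (sub_nonneg.mpr h)]
    exact F_lip_le hD a h
  · rw [abs_sub_comm (F D a t) (F D a s), abs_sub_comm t s, abs_of_nonneg (sub_nonneg.mpr h)]
    exact F_lip_le hD a h


variable {D : ℝ}

lemma len_mono (hD : 0 < D) {m n : ℕ} (h : m ≤ n) : len D n ≤ len D m := by
  rw [len, len]
  exact mul_le_mul_of_nonneg_left
    (pow_le_pow_of_le_one (by norm_num) (by norm_num) (by omega)) hD.le

lemma gap_pts (hD : 0 < D) {n : ℕ} {t : ℝ} (h1 : lB D (n+1) ≤ t) (h2 : t ≤ lA D n) :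
    ∀ m, t ∉ Set.Ioo (lA D m) (lB D m) := by
  intro m hm
  rcases le_or_gt m n with h | h
  · have : lA D n ≤ lA D m := by
      rw [lA, lA]; linarith [len_mono hD h]
    linarith [hm.1]
  · have : lB D m ≤ lB D (n+1) := by
      rw [lB, lB]; linarith [len_mono hD (by omega : n + 1 ≤ m)]
    linarith [hm.2]

lemma exists_small (hD : 0 < D) {β : ℝ} (hβ : 0 < β) : ∃ n, lB D (n+1) < β := by
  obtain ⟨j, hj⟩ := exists_pow_lt_of_lt_one (div_pos hβ (by linarith : (0:ℝ) < 3 * D))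
    (by norm_num : (4:ℝ)⁻¹ < 1)
  refine ⟨j, ?_⟩
  have h1 : (4:ℝ)⁻¹ ^ (j + 2) ≤ (4:ℝ)⁻¹ ^ j := by
    exact pow_le_pow_of_le_one (by norm_num) (by norm_num) (by omega)
  have h2 : lB D (j+1) = 3 * D * (4:ℝ)⁻¹ ^ (j + 2) := by rw [lB, len]; ring
  have h3 : (4:ℝ)⁻¹ ^ j < β / (3 * D) := hj
  rw [h2]
  calc 3 * D * (4:ℝ)⁻¹ ^ (j+2) ≤ 3 * D * (4:ℝ)⁻¹ ^ j := by nlinarith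
    _ < 3 * D * (β / (3 * D)) := by
        have : (0:ℝ) < 3 * D := by linarith
        exact mul_lt_mul_of_pos_left h3 this
    _ = β := by field_simp

/-- trisection helper: two interior points of a nondegenerate interval -/
lemma trisect {lo hi : ℝ} (h : lo < hi) :
    lo < lo + (hi - lo) / 3 ∧ lo + (hi - lo) / 3 < lo + 2 * (hi - lo) / 3 ∧
      lo + 2 * (hi - lo) / 3 < hi := by
  refine ⟨by linarith, by linarith, by linarith⟩

lemma F_flat (hD : 0 < D) (a : C₀(ℕ, ℝ)) {α β : ℝ} (hα : 0 ≤ α) (hβ : α < β) :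
    ∃ u v, α < u ∧ u < v ∧ v < β ∧ F D a u = F D a v := by
  by_cases hB0 : lB D 0 < β
  · set lo := max α (lB D 0) with hlo
    have hloβ : lo < β := max_lt hβ hB0
    obtain ⟨t1, t2, t3⟩ := trisect hloβ
    have hoff : ∀ t, lo < t → F D a t = 0 := by
      intro t ht
      refine F_off fun n hn => ?_
      have h1 : lB D n ≤ lB D 0 := by
        rw [lB, lB]
        rcases Nat.eq_zero_or_pos n with h | h
        · rw [h]
        · linarith [len_mono hD (by omega : 0 ≤ n)]
      have h2 : lB D 0 ≤ lo := le_max_right _ _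
      linarith [hn.2]
    exact ⟨_, _, lt_of_le_of_lt (le_max_left _ _) t1, t2, t3,
      by rw [hoff _ t1, hoff _ (by linarith)]⟩
  push_neg at hB0
  have hβpos : 0 < β := by linarith
  have hex := exists_small hD hβpos
  set n := Nat.find hex with hn
  have hn1 : lB D (n+1) < β := Nat.find_spec hex
  have hn2 : β ≤ lB D n := by
    cases' Nat.eq_zero_or_pos n with h h
    · rw [h]; exact hB0
    · have := Nat.find_min hex (m := n - 1) (by omega)
      push_neg at this
      have : β ≤ lB D (n - 1 + 1) := this
      rwa [Nat.sub_add_cancel h] at this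
  have hAB : lA D n < lB D n := by
    rw [lA, lB]; linarith [len_pos hD n]
  have hlen4 : len D (n+1) = (4:ℝ)⁻¹ * len D n := by
    rw [len, len, pow_succ]; ring
  have hgapAB : lB D (n+1) < lA D n := by
    rw [lB, lA, hlen4]; linarith [len_pos hD n]
  by_cases h1 : α < lB D (n+1)
  · -- gap interval (lB (n+1), min β (lA n))
    set hi := min β (lA D n) with hhi
    have hlohi : lB D (n+1) < hi := lt_min hn1 hgapAB
    obtain ⟨t1, t2, t3⟩ := trisect hlohi
    have hin : ∀ t, lB D (n+1) < t → t < hi → F D a t = 0 := fun t ha hb =>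
      F_off (gap_pts hD (le_of_lt ha) (le_of_lt (lt_of_lt_of_le hb (min_le_right _ _))))
    refine ⟨_, _, lt_trans h1 t1, t2, lt_of_lt_of_le t3 (min_le_left _ _), ?_⟩
    rw [hin _ t1 (by linarith), hin _ (by linarith) t3]
  push_neg at h1
  by_cases h2 : β ≤ lA D n
  · obtain ⟨t1, t2, t3⟩ := trisect hβ
    have hin : ∀ t, α < t → t < β → F D a t = 0 := fun t ha hb =>
      F_off (gap_pts hD (by linarith) (by linarith))
    exact ⟨_, _, t1, t2, t3, by rw [hin _ t1 (by linarith), hin _ (by linarith) t3]⟩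
  push_neg at h2
  by_cases h3 : α < lA D n
  · obtain ⟨t1, t2, t3⟩ := trisect h3
    have hin : ∀ t, α < t → t < lA D n → F D a t = 0 := fun t ha hb =>
      F_off (gap_pts hD (by linarith) (by linarith))
    exact ⟨_, _, t1, t2, by linarith, by rw [hin _ t1 (by linarith), hin _ (by linarith) t3]⟩
  push_neg at h3
  -- now lA D n ≤ α < β ≤ lB D n : inside the support
  have hlpos := len_pos hD n
  have hBA : lB D n = lA D n + len D n := by rw [lA, lB]; ring
  set p := (α - lA D n) / len D n with hp
  set q := (β - lA D n) / len D n with hq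
  have hp0 : 0 ≤ p := div_nonneg (by linarith) hlpos.le
  have hpq : p < q := by
    rw [hp, hq, div_lt_div_iff₀ hlpos hlpos]
    nlinarith
  have hq1 : q ≤ 1 := by
    rw [hq, div_le_one hlpos]
    linarith
  obtain ⟨u0, v0, g1, g2, g3, g4⟩ := block_flat hp0 hpq hq1
  have hpe : p * len D n = α - lA D n := by rw [hp]; field_simp
  have hqe : q * len D n = β - lA D n := by rw [hq]; field_simp
  have hmul : ∀ {z1 z2 : ℝ}, z1 < z2 → len D n * z1 < len D n * z2 := fun h =>
    mul_lt_mul_of_pos_left h hlpos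
  have hu : lA D n + len D n * u0 ∈ Set.Ioo (lA D n) (lB D n) := by
    constructor
    · have := hmul (lt_of_le_of_lt hp0 g1)
      rw [mul_zero] at this
      linarith
    · rw [hBA]
      have := hmul (lt_of_lt_of_le (g2.trans g3) hq1)
      rw [mul_one] at this
      linarith
  have hv : lA D n + len D n * v0 ∈ Set.Ioo (lA D n) (lB D n) := by
    constructor
    · have := hmul (lt_of_le_of_lt hp0 (g1.trans g2))
      rw [mul_zero] at this
      linarith
    · rw [hBA]
      have := hmul (lt_of_lt_of_le g3 hq1)
      rw [mul_one] at this
      linarith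
  have e : ∀ z : ℝ, (lA D n + len D n * z - lA D n) / len D n = z := by
    intro z; field_simp; ring
  refine ⟨lA D n + len D n * u0, lA D n + len D n * v0, ?_, ?_, ?_, ?_⟩
  · have := hmul g1
    have hcp : len D n * p = p * len D n := mul_comm _ _
    linarith
  · exact by linarith [hmul g2]
  · have := hmul g3
    have hcq : len D n * q = q * len D n := mul_comm _ _
    linarith
  · rw [F_on hD hu, F_on hD hv, blockN, blockN, e, e, g4]


lemma ofReal_half : ENNReal.ofReal (2:ℝ)⁻¹ = (2:ℝ≥0∞)⁻¹ := by
  rw [ENNReal.ofReal_inv_of_pos (by norm_num)]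
  norm_num

lemma ctr_dist_third (m k : ℕ) : (1/3) * (2:ℝ)⁻¹ ^ (m+1) ≤ |ctr m k - 1/3| := by
  have h2 : (0:ℝ) < 2 ^ (m+1) := by positivity
  have hint : (3 * (2 * (k:ℤ) + 1) - 2 ^ (m+1)) ≠ 0 := by
    intro h
    have h3 : (3:ℤ) ∣ 2 ^ (m+1) := ⟨2*k+1, by linarith⟩
    have hp : Prime (3:ℤ) := Int.prime_three
    have := hp.dvd_of_dvd_pow (n := m+1) (a := 2) h3
    norm_num at this
  have habs : (1:ℝ) ≤ |(3 * (2 * (k:ℝ) + 1) - 2 ^ (m+1))| := by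
    have h1 : (1:ℤ) ≤ |3 * (2 * (k:ℤ) + 1) - 2 ^ (m+1)| := Int.one_le_abs hint
    have : ((|3 * (2 * (k:ℤ) + 1) - 2 ^ (m+1)| : ℤ) : ℝ) = |(3 * (2 * (k:ℝ) + 1) - 2 ^ (m+1))| := by
      push_cast [Int.cast_abs]
      norm_num
    calc (1:ℝ) = ((1:ℤ) : ℝ) := by norm_num
      _ ≤ ((|3 * (2 * (k:ℤ) + 1) - 2 ^ (m+1)| : ℤ) : ℝ) := by exact_mod_cast h1
      _ = _ := this
  have heq : ctr m k - 1/3 = (3 * (2 * (k:ℝ) + 1) - 2 ^ (m+1)) / (3 * 2 ^ (m+1)) := by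
    rw [ctr]
    field_simp
  rw [heq, abs_div, abs_of_pos (by positivity : (0:ℝ) < 3 * 2 ^ (m+1))]
  rw [le_div_iff₀ (by positivity : (0:ℝ) < 3 * 2 ^ (m+1))]
  calc (1/3) * (2:ℝ)⁻¹ ^ (m+1) * (3 * 2 ^ (m+1)) = 1 := by
        rw [inv_pow]
        field_simp
    _ ≤ _ := habs

lemma level_disjoint_third {ρ : ℝ} (hρ : 0 < ρ) {m k : ℕ}
    (hm : 12 * ρ < (2:ℝ)⁻¹ ^ (m+1)) :
    ball (ctr m k) (rad m k) ∩ Set.Ioc (1/3 - ρ) (1/3 + ρ) = ∅ := by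
  rw [Set.eq_empty_iff_forall_notMem]
  rintro x ⟨hx1, hx2⟩
  rw [mem_ball, Real.dist_eq] at hx1
  have h1 : |x - 1/3| ≤ ρ := by
    rw [abs_le]
    constructor <;> [linarith [hx2.1]; linarith [hx2.2]]
  have h2 : |ctr m k - 1/3| ≤ |x - ctr m k| + |x - 1/3| := by
    have := abs_sub (x - ctr m k) (x - 1/3)
    calc |ctr m k - 1/3| = |(x - 1/3) - (x - ctr m k)| := by ring_nf
      _ ≤ |x - 1/3| + |x - ctr m k| := abs_sub _ _
      _ = |x - ctr m k| + |x - 1/3| := by ring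
  have h3 := ctr_dist_third m k
  have h4 : rad m k ≤ (1/4) * (2:ℝ)⁻¹ ^ (m+1) := by
    refine (rad_le m k).trans ?_
    have : (8:ℝ)⁻¹ ^ (m+1) = (4:ℝ)⁻¹ ^ (m+1) * (2:ℝ)⁻¹ ^ (m+1) := by
      rw [← mul_pow]; norm_num
    rw [this]
    have h5 : (4:ℝ)⁻¹ ^ (m+1) ≤ (1/4 : ℝ) := by
      calc (4:ℝ)⁻¹ ^ (m+1) ≤ (4:ℝ)⁻¹ ^ 1 := by
            exact pow_le_pow_of_le_one (by norm_num) (by norm_num) (by omega)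
        _ = 1/4 := by norm_num
    have : (0:ℝ) ≤ (2:ℝ)⁻¹ ^ (m+1) := by positivity
    nlinarith
  nlinarith [abs_nonneg (x - ctr m k)]

lemma vol_third {ρ : ℝ} (hρ : 0 < ρ) (hρ6 : ρ ≤ 1/6) :
    (volume (U ∩ Set.Ioc (1/3 - ρ) (1/3 + ρ))).toReal ≤ 13824 * ρ^3 := by
  have hex : ∃ m, (2:ℝ)⁻¹ ^ (m+1) ≤ 12 * ρ := by
    obtain ⟨m, hm⟩ := exists_pow_lt_of_lt_one (by linarith : (0:ℝ) < 12 * ρ)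
      (by norm_num : (2:ℝ)⁻¹ < 1)
    exact ⟨m, by
      calc (2:ℝ)⁻¹ ^ (m+1) ≤ (2:ℝ)⁻¹ ^ m :=
            pow_le_pow_of_le_one (by norm_num) (by norm_num) (by omega)
        _ ≤ 12 * ρ := hm.le⟩
  set m₁ := Nat.find hex with hm₁
  have hspec : (2:ℝ)⁻¹ ^ (m₁+1) ≤ 12 * ρ := Nat.find_spec hex
  have hmin : ∀ m < m₁, 12 * ρ < (2:ℝ)⁻¹ ^ (m+1) := by
    intro m hm
    have := Nat.find_min hex hm
    push_neg at this
    linarith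
  set I := Set.Ioc (1/3 - ρ : ℝ) (1/3 + ρ) with hI
  have hcover : U ∩ I ⊆ ⋃ (j : ℕ), ((⋃ k, ball (ctr (j + m₁) k) (rad (j + m₁) k)) ∩ I) := by
    rintro x ⟨hxU, hxI⟩
    rw [U] at hxU
    obtain ⟨m, hm⟩ := Set.mem_iUnion.mp hxU
    obtain ⟨k, hk⟩ := Set.mem_iUnion.mp hm
    have hm1 : m₁ ≤ m := by
      by_contra hcon
      push_neg at hcon
      have := level_disjoint_third hρ (hmin m hcon) (k := k)
      rw [Set.eq_empty_iff_forall_notMem] at this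
      exact this x ⟨hk, hxI⟩
    refine Set.mem_iUnion.mpr ⟨m - m₁, ?_⟩
    refine ⟨Set.mem_iUnion.mpr ⟨k, ?_⟩, hxI⟩
    rwa [Nat.sub_add_cancel hm1]
  have hvol : volume (U ∩ I) ≤ ENNReal.ofReal (8 * (8:ℝ)⁻¹ ^ (m₁+1)) := by
    refine (measure_mono hcover).trans ?_
    refine (measure_iUnion_le _).trans ?_
    have hlev : ∀ j : ℕ, volume ((⋃ k, ball (ctr (j + m₁) k) (rad (j + m₁) k)) ∩ I)
        ≤ ENNReal.ofReal (4 * (8:ℝ)⁻¹ ^ (m₁+1)) * ENNReal.ofReal ((8:ℝ)⁻¹) ^ j := by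
      intro j
      refine (measure_mono Set.inter_subset_left).trans ((vol_level (j + m₁)).trans ?_)
      have he : 4 * (8:ℝ)⁻¹ ^ (j + m₁ + 1) = (4 * (8:ℝ)⁻¹ ^ (m₁+1)) * (8:ℝ)⁻¹ ^ j := by
        rw [show j + m₁ + 1 = (m₁ + 1) + j by omega, pow_add]
        ring
      rw [he, ENNReal.ofReal_mul (by positivity), ENNReal.ofReal_pow (by norm_num)]
    refine (ENNReal.tsum_le_tsum hlev).trans ?_
    rw [ENNReal.tsum_mul_left]
    have hgeo : (∑' j : ℕ, ENNReal.ofReal ((8:ℝ)⁻¹) ^ j) ≤ 2 := by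
      rw [← tsum_half_pow]
      refine ENNReal.tsum_le_tsum fun j => ?_
      gcongr
      rw [← ofReal_half]
      exact ENNReal.ofReal_le_ofReal (by norm_num)
    calc ENNReal.ofReal (4 * (8:ℝ)⁻¹ ^ (m₁+1)) * (∑' j : ℕ, ENNReal.ofReal ((8:ℝ)⁻¹) ^ j)
        ≤ ENNReal.ofReal (4 * (8:ℝ)⁻¹ ^ (m₁+1)) * 2 := by gcongr
      _ = ENNReal.ofReal (8 * (8:ℝ)⁻¹ ^ (m₁+1)) := by
          rw [show (2:ℝ≥0∞) = ENNReal.ofReal 2 by norm_num,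
            ← ENNReal.ofReal_mul (by positivity)]
          ring_nf
  have hfin : 8 * (8:ℝ)⁻¹ ^ (m₁+1) ≤ 13824 * ρ^3 := by
    have h1 : (8:ℝ)⁻¹ ^ (m₁+1) = ((2:ℝ)⁻¹ ^ (m₁+1))^3 := by
      rw [show (8:ℝ)⁻¹ = (2:ℝ)⁻¹ ^ 3 by norm_num, ← pow_mul, ← pow_mul, Nat.mul_comm]
    have h2 : ((2:ℝ)⁻¹ ^ (m₁+1))^3 ≤ (12*ρ)^3 := by
      have : (0:ℝ) ≤ (2:ℝ)⁻¹ ^ (m₁+1) := by positivity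
      exact pow_le_pow_left₀ this hspec 3
    rw [h1]
    nlinarith
  exact ENNReal.toReal_le_of_le_ofReal (by positivity)
    (hvol.trans (ENNReal.ofReal_le_ofReal hfin))


variable {M : Type*} [MetricSpace M]

def Qset (f : M → ℝ) : Set ℝ := {r : ℝ | ∃ p q : M, p ≠ q ∧ r = |f p - f q| / dist p q}

lemma lipNorm_eq (f : M → ℝ) : lipNorm f = sSup (Qset f) := rfl

lemma Qset_nonneg {f : M → ℝ} {r : ℝ} (h : r ∈ Qset f) : 0 ≤ r := by
  obtain ⟨p, q, hpq, rfl⟩ := h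
  exact div_nonneg (abs_nonneg _) dist_nonneg

lemma lipNorm_nonneg (f : M → ℝ) : 0 ≤ lipNorm f :=
  Real.sSup_nonneg fun _ h => Qset_nonneg h

lemma bddAbove_Qset {f : M → ℝ} {K : ℝ} (h : ∀ p q : M, |f p - f q| ≤ K * dist p q) :
    BddAbove (Qset f) := by
  refine ⟨max K 0, fun r hr => ?_⟩
  obtain ⟨p, q, hpq, rfl⟩ := hr
  have hd : 0 < dist p q := dist_pos.mpr hpq
  rw [div_le_iff₀ hd]
  exact (h p q).trans (mul_le_mul_of_nonneg_right (le_max_left _ _) hd.le)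

lemma lipNorm_le {f : M → ℝ} {K : ℝ} (hK : 0 ≤ K)
    (h : ∀ p q : M, |f p - f q| ≤ K * dist p q) : lipNorm f ≤ K := by
  refine Real.sSup_le (fun r hr => ?_) hK
  obtain ⟨p, q, hpq, rfl⟩ := hr
  have hd : 0 < dist p q := dist_pos.mpr hpq
  rw [div_le_iff₀ hd]
  exact h p q

lemma le_lipNorm {f : M → ℝ} {K : ℝ} (h : ∀ p q : M, |f p - f q| ≤ K * dist p q)
    {p q : M} (hpq : p ≠ q) : |f p - f q| / dist p q ≤ lipNorm f :=
  le_csSup (bddAbove_Qset h) ⟨p, q, hpq, rfl⟩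

lemma abs_sub_le_lipNorm {f : M → ℝ} {K : ℝ} (h : ∀ p q : M, |f p - f q| ≤ K * dist p q)
    (p q : M) : |f p - f q| ≤ lipNorm f * dist p q := by
  by_cases hpq : p = q
  · subst hpq
    simp [mul_nonneg (lipNorm_nonneg f) dist_nonneg]
  · have hd : 0 < dist p q := dist_pos.mpr hpq
    have := le_lipNorm h hpq
    rw [div_le_iff₀ hd] at this
    exact this

/-- norm attainment in c₀ -/
lemma c0_attains (a : C₀(ℕ, ℝ)) : ∃ n : ℕ, |a n| = ‖a‖ := by
  by_cases ha : a = 0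
  · exact ⟨0, by simp [ha]⟩
  have hS : 0 < ‖a‖ := norm_pos_iff.mpr ha
  have htend : Filter.Tendsto a Filter.atTop (nhds 0) := by
    have := a.zero_at_infty'
    rwa [cocompact_eq_atTop] at this
  have hev : ∀ᶠ n in Filter.atTop, |a n| < ‖a‖ / 2 := by
    have hball := htend (Metric.ball_mem_nhds (0:ℝ) (by linarith : 0 < ‖a‖/2))
    filter_upwards [hball] with n hn
    simpa [Real.dist_eq] using hn
  obtain ⟨N, hN⟩ := Filter.eventually_atTop.mp hev
  obtain ⟨n₀, hmem, hmax⟩ := Finset.exists_max_image (Finset.range (N+1))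
    (fun n => |a n|) ⟨0, by simp⟩
  refine ⟨n₀, le_antisymm ?_ ?_⟩
  · have := BoundedContinuousFunction.norm_coe_le_norm a.toBCF n₀
    rwa [ZeroAtInftyContinuousMap.norm_toBCF_eq_norm] at this
  · have hb : ∀ n, |a n| ≤ max |a n₀| (‖a‖/2) := by
      intro n
      rcases le_or_gt n N with h | h
      · exact le_max_of_le_left (hmax n (Finset.mem_range.mpr (by omega)))
      · exact le_max_of_le_right (hN n h.le).le
    have hnorm : ‖a‖ ≤ max |a n₀| (‖a‖/2) := by
      rw [← ZeroAtInftyContinuousMap.norm_toBCF_eq_norm]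
      refine (BoundedContinuousFunction.norm_le ((abs_nonneg _).trans (le_max_left _ _))).mpr
        fun n => ?_
      simpa using hb n
    rcases le_total (‖a‖/2) |a n₀| with h | h
    · rwa [max_eq_left h] at hnorm
    · rw [max_eq_right h] at hnorm
      linarith


end SNAaux


namespace SNAaux

lemma F_add (D : ℝ) (a b : C₀(ℕ, ℝ)) (t : ℝ) : F D (a + b) t = F D a t + F D b t := by
  by_cases h : ∃ n, t ∈ Set.Ioo (lA D n) (lB D n)
  · simp only [F, dif_pos h, ZeroAtInftyContinuousMap.coe_add, Pi.add_apply, add_mul]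
  · simp only [F, dif_neg h, add_zero]

lemma F_smul (D : ℝ) (c : ℝ) (a : C₀(ℕ, ℝ)) (t : ℝ) : F D (c • a) t = c * F D a t := by
  by_cases h : ∃ n, t ∈ Set.Ioo (lA D n) (lB D n)
  · simp only [F, dif_pos h, ZeroAtInftyContinuousMap.coe_smul, Pi.smul_apply, smul_eq_mul,
      mul_assoc]
  · simp only [F, dif_neg h, mul_zero]

end SNAaux

set_option maxHeartbeats 1600000 in
/-- For a metrically convex metric space `M` (with at least two points), the set
`(Lip₀(M) \ closure(SNA(M))) ∪ {0}` contains an isometric copy of `c₀`. -/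
theorem c0_outside_closure_SNA_metrically_convex {M : Type*} [MetricSpace M]
    [Nontrivial M] (base : M) (hM : MetricallyConvex M) :
    ∃ T : C₀(ℕ, ℝ) →ₗ[ℝ] (M → ℝ),
      ∀ a : C₀(ℕ, ℝ),
        MemLip0 base (T a) ∧ lipNorm (T a) = ‖a‖ ∧
        (a ≠ 0 → ∃ c : ℝ, 0 < c ∧ ∀ g : M → ℝ, MemLip0 base g → StronglyAttains g →
          c ≤ lipNorm (fun x => T a x - g x)) := by
  classical
  obtain ⟨y, hy⟩ := exists_ne base
  set D := dist base y with hDdef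
  have hD : 0 < D := dist_pos.mpr (Ne.symm hy)
  obtain ⟨γ, hγ0, hγD, hγiso⟩ := hM base y (Ne.symm hy)
  refine ⟨{ toFun := fun a x => SNAaux.F D a (dist x base),
            map_add' := fun a b => funext fun x => SNAaux.F_add D a b _,
            map_smul' := fun c a => funext fun x => SNAaux.F_smul D c a _ }, fun a => ?_⟩
  simp only [LinearMap.coe_mk, AddHom.coe_mk, RingHom.id_apply]
  have Hquot : ∀ p q : M, |SNAaux.F D a (dist p base) - SNAaux.F D a (dist q base)|
      ≤ ‖a‖ * dist p q := by
    intro p q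
    refine (SNAaux.F_lipschitz hD a _ _).trans ?_
    exact mul_le_mul_of_nonneg_left (abs_dist_sub_le p q base) (norm_nonneg a)
  have hbase0 : SNAaux.F D a (dist base base) = 0 := by
    rw [dist_self]
    refine SNAaux.F_off fun n hn => ?_
    linarith [SNAaux.lA_pos hD n, hn.1]
  have hlip : lipNorm (fun x => SNAaux.F D a (dist x base)) = ‖a‖ := by
    refine le_antisymm (SNAaux.lipNorm_le (norm_nonneg a) Hquot) ?_
    obtain ⟨n₀, hn₀⟩ := SNAaux.c0_attains a
    have hlpos := SNAaux.len_pos hD n₀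
    have hBA : SNAaux.lB D n₀ = SNAaux.lA D n₀ + SNAaux.len D n₀ := by
      rw [SNAaux.lA, SNAaux.lB]; ring
    have key : ∀ ρ : ℝ, 0 < ρ → ρ ≤ 1/100 →
        ‖a‖ * (1 - 6912 * ρ^2) ≤ lipNorm (fun x => SNAaux.F D a (dist x base)) := by
      intro ρ hρ hρ6
      set s₁ : ℝ := 1/3 - ρ with hs₁def
      set t₁ : ℝ := 1/3 + ρ with ht₁def
      set t' : ℝ := SNAaux.lA D n₀ + SNAaux.len D n₀ * t₁ with ht'def
      set s' : ℝ := SNAaux.lA D n₀ + SNAaux.len D n₀ * s₁ with hs'def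
      have hmul : ∀ {z1 z2 : ℝ}, z1 < z2 → SNAaux.len D n₀ * z1 < SNAaux.len D n₀ * z2 :=
        fun h => mul_lt_mul_of_pos_left h hlpos
      have ht'mem : t' ∈ Set.Ioo (SNAaux.lA D n₀) (SNAaux.lB D n₀) := by
        constructor
        · have := hmul (show (0:ℝ) < t₁ by rw [ht₁def]; linarith)
          rw [mul_zero] at this; rw [ht'def]; linarith
        · have := hmul (show t₁ < 1 by rw [ht₁def]; linarith)
          rw [mul_one] at this; rw [ht'def, hBA]; linarith
      have hs'mem : s' ∈ Set.Ioo (SNAaux.lA D n₀) (SNAaux.lB D n₀) := by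
        constructor
        · have := hmul (show (0:ℝ) < s₁ by rw [hs₁def]; linarith)
          rw [mul_zero] at this; rw [hs'def]; linarith
        · have := hmul (show s₁ < 1 by rw [hs₁def]; linarith)
          rw [mul_one] at this; rw [hs'def, hBA]; linarith
      have ht'Icc : t' ∈ Set.Icc 0 D :=
        ⟨by linarith [ht'mem.1, SNAaux.lA_pos hD n₀],
         by linarith [ht'mem.2, SNAaux.lB_le_lB0 hD n₀, SNAaux.lB0_le_D hD]⟩
      have hs'Icc : s' ∈ Set.Icc 0 D :=
        ⟨by linarith [hs'mem.1, SNAaux.lA_pos hD n₀],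
         by linarith [hs'mem.2, SNAaux.lB_le_lB0 hD n₀, SNAaux.lB0_le_D hD]⟩
      have h0Icc : (0:ℝ) ∈ Set.Icc 0 D := ⟨le_rfl, hD.le⟩
      have hs't' : s' < t' := by
        have := hmul (show s₁ < t₁ by rw [hs₁def, ht₁def]; linarith)
        rw [ht'def, hs'def]; linarith
      have hPQdist : dist (γ t') (γ s') = t' - s' := by
        rw [hγiso t' ht'Icc s' hs'Icc, abs_of_pos (by linarith)]
      have hPQne : γ t' ≠ γ s' := by
        rw [← dist_pos, hPQdist]; linarith
      have hcoord : ∀ z ∈ Set.Icc (0:ℝ) D, dist (γ z) base = z := by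
        intro z hz
        rw [← hγ0, hγiso z hz 0 h0Icc, sub_zero, abs_of_nonneg hz.1]
      have eargs : ∀ z : ℝ, (SNAaux.lA D n₀ + SNAaux.len D n₀ * z - SNAaux.lA D n₀)
          / SNAaux.len D n₀ = z := by
        intro z; field_simp; ring
      have hwdiff : SNAaux.w t₁ - SNAaux.w s₁
          = (t₁ - s₁) - (MeasureTheory.volume (SNAaux.U ∩ Set.Ioc s₁ t₁)).toReal :=
        SNAaux.w_diff (by rw [hs₁def]; linarith) (by rw [hs₁def, ht₁def]; linarith)
      have h2ρ : t₁ - s₁ = 2 * ρ := by rw [ht₁def, hs₁def]; ring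
      have hvol1 : (MeasureTheory.volume (SNAaux.U ∩ Set.Ioc s₁ t₁)).toReal ≤ 13824 * ρ^3 := by
        have h := SNAaux.vol_third hρ (by linarith : ρ ≤ 1/6)
        simp only [hs₁def, ht₁def]
        exact h
      have hvol0 : 0 ≤ (MeasureTheory.volume (SNAaux.U ∩ Set.Ioc s₁ t₁)).toReal := ENNReal.toReal_nonneg
      have hwlow : 2 * ρ - 13824 * ρ^3 ≤ SNAaux.w t₁ - SNAaux.w s₁ := by
        rw [hwdiff, h2ρ]; linarith
      have hwnn : 0 ≤ SNAaux.w t₁ - SNAaux.w s₁ := by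
        refine le_trans ?_ hwlow
        have hρ2 : ρ^2 ≤ (1/100:ℝ)^2 := by nlinarith
        nlinarith [mul_le_mul_of_nonneg_left hρ2 (by positivity : (0:ℝ) ≤ 13824*ρ)]
      have hFt : SNAaux.F D a t' = a n₀ * (SNAaux.len D n₀ * SNAaux.w t₁) := by
        rw [SNAaux.F_on hD ht'mem, SNAaux.blockN, ht'def, eargs,
          SNAaux.block_eq_w (by rw [ht₁def]; linarith) (by rw [ht₁def]; linarith)]
      have hFs : SNAaux.F D a s' = a n₀ * (SNAaux.len D n₀ * SNAaux.w s₁) := by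
        rw [SNAaux.F_on hD hs'mem, SNAaux.blockN, hs'def, eargs,
          SNAaux.block_eq_w (by rw [hs₁def]; linarith) (by rw [hs₁def]; linarith)]
      have hr := SNAaux.le_lipNorm Hquot hPQne
      rw [hcoord t' ht'Icc, hcoord s' hs'Icc, hFt, hFs, hPQdist] at hr
      have hnum : |a n₀ * (SNAaux.len D n₀ * SNAaux.w t₁)
          - a n₀ * (SNAaux.len D n₀ * SNAaux.w s₁)|
          = ‖a‖ * (SNAaux.len D n₀ * (SNAaux.w t₁ - SNAaux.w s₁)) := by
        rw [← mul_sub, ← mul_sub, abs_mul, hn₀]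
        congr 1
        exact abs_of_nonneg (mul_nonneg hlpos.le hwnn)
      rw [hnum] at hr
      have hts : t' - s' = SNAaux.len D n₀ * (2 * ρ) := by
        rw [ht'def, hs'def, ← h2ρ]; ring
      rw [hts] at hr
      refine le_trans ?_ hr
      rw [le_div_iff₀ (by positivity : (0:ℝ) < SNAaux.len D n₀ * (2 * ρ))]
      have h1 : (‖a‖ * SNAaux.len D n₀) * (2*ρ - 13824*ρ^3)
          ≤ (‖a‖ * SNAaux.len D n₀) * (SNAaux.w t₁ - SNAaux.w s₁) :=
        mul_le_mul_of_nonneg_left hwlow (mul_nonneg (norm_nonneg a) hlpos.le)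
      calc ‖a‖ * (1 - 6912 * ρ^2) * (SNAaux.len D n₀ * (2 * ρ))
          = (‖a‖ * SNAaux.len D n₀) * (2*ρ - 13824*ρ^3) := by ring
        _ ≤ (‖a‖ * SNAaux.len D n₀) * (SNAaux.w t₁ - SNAaux.w s₁) := h1
        _ = ‖a‖ * (SNAaux.len D n₀ * (SNAaux.w t₁ - SNAaux.w s₁)) := by ring
    have htend : Filter.Tendsto (fun j : ℕ => ‖a‖ * (1 - 6912 * ((1/100) * (1/2:ℝ)^j)^2))
        Filter.atTop (nhds (‖a‖ * (1 - 6912 * ((1/100:ℝ) * 0)^2))) := by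
      refine Filter.Tendsto.const_mul _ (Filter.Tendsto.const_sub _ ?_)
      refine Filter.Tendsto.const_mul _ (Filter.Tendsto.pow ?_ 2)
      exact Filter.Tendsto.const_mul _
        (tendsto_pow_atTop_nhds_zero_of_lt_one (by norm_num) (by norm_num))
    have hval : ‖a‖ * (1 - 6912 * ((1/100:ℝ) * 0)^2) = ‖a‖ := by norm_num
    rw [hval] at htend
    refine le_of_tendsto htend (Filter.Eventually.of_forall fun j => ?_)
    refine key _ (by positivity) ?_
    have : (1/2:ℝ)^j ≤ 1 := pow_le_one₀ (by norm_num) (by norm_num)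
    nlinarith
  refine ⟨⟨hbase0, ⟨‖a‖₊, ?_⟩⟩, hlip, ?_⟩
  · refine LipschitzWith.of_dist_le_mul fun p q => ?_
    rw [Real.dist_eq, coe_nnnorm]
    exact Hquot p q
  intro ha
  have hapos : 0 < ‖a‖ := norm_pos_iff.mpr ha
  refine ⟨‖a‖/2, by linarith, ?_⟩
  intro g hg hatt
  obtain ⟨hg0, K, hK⟩ := hg
  have Hg : ∀ p q : M, |g p - g q| ≤ (K:ℝ) * dist p q := by
    intro p q
    have := hK.dist_le_mul p q
    rwa [Real.dist_eq] at this
  have HgL : ∀ p q : M, |g p - g q| ≤ lipNorm g * dist p q := SNAaux.abs_sub_le_lipNorm Hg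
  obtain ⟨p, q, hpq, hattval⟩ := hatt
  set d := dist p q with hddef
  have hdpos : 0 < d := dist_pos.mpr hpq
  obtain ⟨σ, hσ0, hσd, hσiso⟩ := hM p q hpq
  have key2 : ∀ s t : ℝ, 0 ≤ s → s ≤ t → t ≤ d → |g (σ t) - g (σ s)| = lipNorm g * (t - s) := by
    intro s t hs hst htd
    have hIcc : ∀ {z : ℝ}, 0 ≤ z → z ≤ d → z ∈ Set.Icc 0 d := fun h1 h2 => ⟨h1, h2⟩
    have e1 : |g (σ s) - g (σ 0)| ≤ lipNorm g * s := by
      have := HgL (σ s) (σ 0)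
      rwa [hσiso s (hIcc hs (by linarith)) 0 (hIcc le_rfl hdpos.le), sub_zero,
        abs_of_nonneg hs] at this
    have e2 : |g (σ t) - g (σ s)| ≤ lipNorm g * (t - s) := by
      have := HgL (σ t) (σ s)
      rwa [hσiso t (hIcc (by linarith) htd) s (hIcc hs (by linarith)),
        abs_of_nonneg (show (0:ℝ) ≤ t - s by linarith)] at this
    have e3 : |g (σ d) - g (σ t)| ≤ lipNorm g * (d - t) := by
      have := HgL (σ d) (σ t)
      rwa [hσiso d (hIcc hdpos.le le_rfl) t (hIcc (by linarith) htd),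
        abs_of_nonneg (show (0:ℝ) ≤ d - t by linarith)] at this
    have etot : |g (σ d) - g (σ 0)| = lipNorm g * d := by
      rw [hσ0, hσd, abs_sub_comm]
      exact hattval
    have etri : |g (σ d) - g (σ 0)|
        ≤ |g (σ s) - g (σ 0)| + |g (σ t) - g (σ s)| + |g (σ d) - g (σ t)| := by
      have e : g (σ d) - g (σ 0)
          = (g (σ s) - g (σ 0)) + (g (σ t) - g (σ s)) + (g (σ d) - g (σ t)) := by ring
      rw [e]
      exact (abs_add_le _ _).trans (add_le_add_left (abs_add_le _ _) _)
    have hge : lipNorm g * (t - s) ≤ |g (σ t) - g (σ s)| := by linarith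
    exact le_antisymm e2 hge
  have ψcont : ContinuousOn (fun s => dist (σ s) base) (Set.Icc 0 d) := by
    have hl : LipschitzOnWith 1 (fun s => dist (σ s) base) (Set.Icc 0 d) := by
      rw [lipschitzOnWith_iff_dist_le_mul]
      intro s hs t ht
      rw [Real.dist_eq, NNReal.coe_one, one_mul]
      calc |dist (σ s) base - dist (σ t) base| ≤ dist (σ s) (σ t) := abs_dist_sub_le _ _ _
        _ = |s - t| := hσiso s hs t ht
        _ = dist s t := (Real.dist_eq s t).symm
    exact hl.continuousOn
  obtain ⟨sm, hsm, hsmin⟩ :=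
    isCompact_Icc.exists_isMinOn (Set.nonempty_Icc.mpr hdpos.le) ψcont
  obtain ⟨sM, hsM, hsmax⟩ :=
    isCompact_Icc.exists_isMaxOn (Set.nonempty_Icc.mpr hdpos.le) ψcont
  have main : ∃ s' s'', 0 ≤ s' ∧ s' < s'' ∧ s'' ≤ d ∧
      SNAaux.F D a (dist (σ s') base) = SNAaux.F D a (dist (σ s'') base) := by
    have hle : dist (σ sm) base ≤ dist (σ sM) base := (isMinOn_iff.mp hsmin) sM hsM
    rcases eq_or_lt_of_le hle with heq | hlt
    · refine ⟨0, d, le_rfl, hdpos, le_rfl, ?_⟩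
      have hconst : ∀ z ∈ Set.Icc (0:ℝ) d, dist (σ z) base = dist (σ sm) base := fun z hz =>
        le_antisymm (heq ▸ (isMaxOn_iff.mp hsmax) z hz) ((isMinOn_iff.mp hsmin) z hz)
      rw [hconst 0 ⟨le_rfl, hdpos.le⟩, hconst d ⟨hdpos.le, le_rfl⟩]
    · obtain ⟨u, v, hu1, huv, hv2, hFuv⟩ := SNAaux.F_flat hD a dist_nonneg hlt
      have hsub : Set.uIcc sm sM ⊆ Set.Icc 0 d := by
        intro z hz
        rcases le_total sm sM with h | h
        · rw [Set.uIcc_of_le h] at hz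
          exact ⟨le_trans hsm.1 hz.1, le_trans hz.2 hsM.2⟩
        · rw [Set.uIcc_of_ge h] at hz
          exact ⟨le_trans hsM.1 hz.1, le_trans hz.2 hsm.2⟩
      have huIcc : u ∈ Set.uIcc (dist (σ sm) base) (dist (σ sM) base) := by
        rw [Set.uIcc_of_le hle]
        exact ⟨hu1.le, (huv.trans hv2).le⟩
      have hvIcc : v ∈ Set.uIcc (dist (σ sm) base) (dist (σ sM) base) := by
        rw [Set.uIcc_of_le hle]
        exact ⟨(hu1.trans huv).le, hv2.le⟩
      obtain ⟨s₁, hs₁mem, hs₁⟩ := intermediate_value_uIcc (ψcont.mono hsub) huIcc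
      obtain ⟨s₂, hs₂mem, hs₂⟩ := intermediate_value_uIcc (ψcont.mono hsub) hvIcc
      have hne12 : s₁ ≠ s₂ := by
        intro h
        have : u = v := by rw [← hs₁, h, hs₂]
        exact absurd this (ne_of_lt huv)
      rcases lt_or_gt_of_ne hne12 with h | h
      · exact ⟨s₁, s₂, (hsub hs₁mem).1, h, (hsub hs₂mem).2, by
          simp only at hs₁ hs₂
          rw [hs₁, hs₂, hFuv]⟩
      · exact ⟨s₂, s₁, (hsub hs₂mem).1, h, (hsub hs₁mem).2, by
          simp only at hs₁ hs₂
          rw [hs₁, hs₂, hFuv]⟩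
  obtain ⟨s', s'', hs'0, hlt12, hs''d, hFeq⟩ := main
  have hdist12 : dist (σ s') (σ s'') = s'' - s' := by
    rw [hσiso s' ⟨hs'0, by linarith⟩ s'' ⟨by linarith, hs''d⟩, abs_sub_comm,
      abs_of_pos (show (0:ℝ) < s'' - s' by linarith)]
  have hne12' : σ s' ≠ σ s'' := by rw [← dist_pos, hdist12]; linarith
  have Hh : ∀ p' q' : M, |(SNAaux.F D a (dist p' base) - g p')
      - (SNAaux.F D a (dist q' base) - g q')| ≤ (‖a‖ + (K:ℝ)) * dist p' q' := by
    intro p' q'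
    have e : (SNAaux.F D a (dist p' base) - g p') - (SNAaux.F D a (dist q' base) - g q')
        = (SNAaux.F D a (dist p' base) - SNAaux.F D a (dist q' base)) - (g p' - g q') := by
      ring
    rw [e]
    calc |(SNAaux.F D a (dist p' base) - SNAaux.F D a (dist q' base)) - (g p' - g q')|
        ≤ |SNAaux.F D a (dist p' base) - SNAaux.F D a (dist q' base)| + |g p' - g q'| :=
          abs_sub _ _
      _ ≤ ‖a‖ * dist p' q' + K * dist p' q' := add_le_add (Hquot p' q') (Hg p' q')
      _ = (‖a‖ + K) * dist p' q' := by ring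
  have hb2 : lipNorm g ≤ lipNorm (fun x => SNAaux.F D a (dist x base) - g x) := by
    have hgval : |g (σ s'') - g (σ s')| = lipNorm g * (s'' - s') :=
      key2 s' s'' hs'0 hlt12.le hs''d
    have hr := SNAaux.le_lipNorm Hh hne12'
    have hval : |(SNAaux.F D a (dist (σ s') base) - g (σ s'))
        - (SNAaux.F D a (dist (σ s'') base) - g (σ s''))| = lipNorm g * (s'' - s') := by
      rw [hFeq]
      have e : ∀ x y z : ℝ, (x - y) - (x - z) = z - y := fun x y z => by ring
      rw [e, hgval]
    rw [hval, hdist12] at hr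
    rwa [mul_div_assoc, div_self (by linarith : s'' - s' ≠ 0), mul_one] at hr
  have hb1 : ‖a‖ ≤ lipNorm (fun x => SNAaux.F D a (dist x base) - g x) + lipNorm g := by
    rw [← hlip]
    refine SNAaux.lipNorm_le
      (add_nonneg (SNAaux.lipNorm_nonneg _) (SNAaux.lipNorm_nonneg _)) ?_
    intro p' q'
    have h1 := SNAaux.abs_sub_le_lipNorm Hh p' q'
    have h2 := HgL p' q'
    have e : SNAaux.F D a (dist p' base) - SNAaux.F D a (dist q' base)
        = ((SNAaux.F D a (dist p' base) - g p') - (SNAaux.F D a (dist q' base) - g q'))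
          + (g p' - g q') := by ring
    rw [e]
    calc |((SNAaux.F D a (dist p' base) - g p') - (SNAaux.F D a (dist q' base) - g q'))
          + (g p' - g q')|
        ≤ |(SNAaux.F D a (dist p' base) - g p') - (SNAaux.F D a (dist q' base) - g q')|
          + |g p' - g q'| := abs_add_le _ _
      _ ≤ lipNorm (fun x => SNAaux.F D a (dist x base) - g x) * dist p' q'
          + lipNorm g * dist p' q' := add_le_add h1 h2
      _ = (lipNorm (fun x => SNAaux.F D a (dist x base) - g x) + lipNorm g) * dist p' q' := by
          ring
  linarith
end

section
/- Let M be a length metric space, let p₀, q₀ ∈ M be distinct points, set r := d(p₀, q₀) > 0, and define u : M → ℝ by u(x) = max{0, r − d(p₀, x)}. Then for every Lipschitz function f : [0, r] → ℝ, the optimal Lipschitz constant of f ∘ u : M → ℝ equals the optimal Lipschitz constant of f, i.e., sup{|f(u(p)) − f(u(q))|/d(p,q) : p ≠ q in M} = sup{|f(x) − f(y)|/|x − y| : x ≠ y in [0,r]}. -/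
open Filter Set
open scoped ZeroAtInfty ENNReal NNReal

/-- `M` is a length space: any two points can be joined by a continuous rectifiable curve
of length at most `dist x y + ε`, for every `ε > 0`. -/
def IsLengthSpace (M : Type*) [MetricSpace M] : Prop :=
  ∀ x y : M, ∀ ε : ℝ, 0 < ε → ∃ γ : ℝ → M,
    ContinuousOn γ (Set.Icc 0 1) ∧ γ 0 = x ∧ γ 1 = y ∧
    eVariationOn γ (Set.Icc 0 1) ≤ ENNReal.ofReal (dist x y + ε)

/-- In a length space, composing with the "cone" function `u(x) = max{0, r − d(p₀,x)}`
preserves the optimal Lipschitz constant of any Lipschitz `f : [0,r] → ℝ`. -/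
theorem lipNorm_comp_cone_eq {M : Type*} [MetricSpace M] (hM : IsLengthSpace M)
    (p₀ q₀ : M) (hne : p₀ ≠ q₀) (f : ℝ → ℝ) (K : ℝ≥0)
    (hf : LipschitzOnWith K f (Set.Icc 0 (dist p₀ q₀))) :
    sSup {s : ℝ | ∃ p q : M, p ≠ q ∧
        s = |f (max 0 (dist p₀ q₀ - dist p₀ p)) - f (max 0 (dist p₀ q₀ - dist p₀ q))| /
          dist p q} =
    sSup {s : ℝ | ∃ x ∈ Set.Icc 0 (dist p₀ q₀), ∃ y ∈ Set.Icc 0 (dist p₀ q₀),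
        x ≠ y ∧ s = |f x - f y| / |x - y|} := by
  have hr : 0 < dist p₀ q₀ := dist_pos.mpr hne
  set r : ℝ := dist p₀ q₀ with hrdef
  set u : M → ℝ := fun p => max 0 (r - dist p₀ p) with hu
  have humem : ∀ p, u p ∈ Set.Icc 0 r := by
    intro p
    refine ⟨le_max_left _ _, max_le hr.le ?_⟩
    have := dist_nonneg (x := p₀) (y := p); linarith
  have hulip : ∀ p q : M, |u p - u q| ≤ dist p q := by
    intro p q
    have h0 : |u p - u q| ≤ |(r - dist p₀ p) - (r - dist p₀ q)| := by
      have e1 : u p = max (r - dist p₀ p) 0 := max_comm _ _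
      have e2 : u q = max (r - dist p₀ q) 0 := max_comm _ _
      rw [e1, e2]
      exact abs_max_sub_max_le_abs _ _ _
    have h1 : (r - dist p₀ p) - (r - dist p₀ q) = dist q p₀ - dist p p₀ := by
      rw [dist_comm p₀ p, dist_comm p₀ q]; ring
    rw [h1] at h0
    exact h0.trans ((abs_dist_sub_le q p p₀).trans_eq (dist_comm q p))
  have hflip : ∀ a ∈ Set.Icc (0:ℝ) r, ∀ b ∈ Set.Icc (0:ℝ) r, |f a - f b| ≤ K * |a - b| := by
    intro a ha b hb
    have := hf.dist_le_mul a ha b hb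
    simpa [Real.dist_eq] using this
  have hup₀ : u p₀ = r := by simp [hu, max_eq_right hr.le]
  have huq₀ : u q₀ = 0 := by simp [hu]; exact hrdef.le
  set A := {s : ℝ | ∃ p q : M, p ≠ q ∧ s = |f (u p) - f (u q)| / dist p q} with hA
  set B := {s : ℝ | ∃ x ∈ Set.Icc 0 r, ∃ y ∈ Set.Icc 0 r,
        x ≠ y ∧ s = |f x - f y| / |x - y|} with hB
  have hAne : A.Nonempty := ⟨_, p₀, q₀, hne, rfl⟩
  have hBne : B.Nonempty := ⟨_, 0, ⟨le_refl _, hr.le⟩, r, ⟨hr.le, le_refl _⟩, hr.ne, rfl⟩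
  have hAbdd : ∀ s ∈ A, s ≤ K := by
    rintro s ⟨p, q, hpq, rfl⟩
    have hd : 0 < dist p q := dist_pos.mpr hpq
    rw [div_le_iff₀ hd]
    calc |f (u p) - f (u q)| ≤ K * |u p - u q| := hflip _ (humem p) _ (humem q)
      _ ≤ K * dist p q := mul_le_mul_of_nonneg_left (hulip p q) K.coe_nonneg
  have hBbdd : ∀ s ∈ B, s ≤ K := by
    rintro s ⟨x, hx, y, hy, hxy, rfl⟩
    have hd : 0 < |x - y| := abs_pos.mpr (sub_ne_zero.mpr hxy)
    rw [div_le_iff₀ hd]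
    exact hflip _ hx _ hy
  have hAbdd' : BddAbove A := ⟨K, fun s hs => hAbdd s hs⟩
  have hBbdd' : BddAbove B := ⟨K, fun s hs => hBbdd s hs⟩
  have hAnonneg : ∀ s ∈ A, 0 ≤ s := by
    rintro s ⟨p, q, hpq, rfl⟩
    positivity
  have hBnonneg : ∀ s ∈ B, 0 ≤ s := by
    rintro s ⟨x, hx, y, hy, hxy, rfl⟩
    positivity
  have hSupA : 0 ≤ sSup A := le_csSup_of_le hAbdd' hAne.choose_spec (hAnonneg _ hAne.choose_spec)
  have hSupB : 0 ≤ sSup B := le_csSup_of_le hBbdd' hBne.choose_spec (hBnonneg _ hBne.choose_spec)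
  have key : ∀ x ∈ Set.Icc (0:ℝ) r, ∀ y ∈ Set.Icc (0:ℝ) r, y < x →
      |f x - f y| / (x - y) ≤ sSup A := by
    intro x hx y hy hyx
    have hxy0 : 0 < x - y := sub_pos.mpr hyx
    rw [div_le_iff₀ hxy0]
    have hstep : ∀ ε : ℝ, 0 < ε → |f x - f y| ≤ sSup A * (x - y) + sSup A * ε := by
      intro ε hε
      obtain ⟨γ, hγc, hγ0, hγ1, hγv⟩ := hM p₀ q₀ ε hε
      have hgc : ContinuousOn (fun t => u (γ t)) (Set.Icc 0 1) := by
        have hucont : Continuous u :=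
          continuous_const.max (continuous_const.sub (continuous_const.dist continuous_id))
        exact hucont.comp_continuousOn hγc
      have hx' : x ∈ Set.Icc (u (γ 1)) (u (γ 0)) := by
        rw [hγ0, hγ1, hup₀, huq₀]; exact ⟨hx.1, hx.2⟩
      obtain ⟨t, ht01, hgt⟩ := intermediate_value_Icc' (by norm_num : (0:ℝ) ≤ 1) hgc hx'
      have hgt : u (γ t) = x := hgt
      have hgc' : ContinuousOn (fun t => u (γ t)) (Set.Icc t 1) :=
        hgc.mono (Set.Icc_subset_Icc ht01.1 le_rfl)
      have hy' : y ∈ Set.Icc (u (γ 1)) (u (γ t)) := by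
        rw [hγ1, huq₀, hgt]; exact ⟨hy.1, hyx.le⟩
      obtain ⟨t', htt', hgt'⟩ := intermediate_value_Icc' ht01.2 hgc' hy'
      have ht'01 : t' ∈ Set.Icc (0:ℝ) 1 := ⟨le_trans ht01.1 htt'.1, htt'.2⟩
      have hgt' : u (γ t') = y := hgt'
      have hpq : γ t ≠ γ t' := by
        intro h
        exact hyx.ne (by rw [← hgt', ← hgt, h])
      have e1 : edist p₀ (γ t) ≤ eVariationOn γ (Set.Icc 0 1 ∩ Set.Icc 0 t) := by
        rw [← hγ0]
        exact eVariationOn.edist_le γ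
          ⟨Set.left_mem_Icc.mpr (by norm_num), Set.left_mem_Icc.mpr ht01.1⟩
          ⟨ht01, ht01.1, le_rfl⟩
      have e2 : edist (γ t) (γ t') ≤ eVariationOn γ (Set.Icc 0 1 ∩ Set.Icc t t') :=
        eVariationOn.edist_le γ ⟨ht01, le_rfl, htt'.1⟩ ⟨ht'01, htt'.1, le_rfl⟩
      have e3 : edist (γ t') q₀ ≤ eVariationOn γ (Set.Icc 0 1 ∩ Set.Icc t' 1) := by
        rw [← hγ1]
        exact eVariationOn.edist_le γ ⟨ht'01, le_rfl, htt'.2⟩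
          ⟨Set.right_mem_Icc.mpr (by norm_num), htt'.2, le_rfl⟩
      have eadd : eVariationOn γ (Set.Icc 0 1 ∩ Set.Icc 0 t) +
          eVariationOn γ (Set.Icc 0 1 ∩ Set.Icc t t') +
          eVariationOn γ (Set.Icc 0 1 ∩ Set.Icc t' 1) = eVariationOn γ (Set.Icc 0 1) := by
        rw [eVariationOn.Icc_add_Icc γ ht01.1 htt'.1 ht01,
          eVariationOn.Icc_add_Icc γ (le_trans ht01.1 htt'.1) htt'.2 ht'01,
          Set.inter_self]
      have esum : edist p₀ (γ t) + edist (γ t) (γ t') + edist (γ t') q₀ ≤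
          ENNReal.ofReal (r + ε) := by
        calc edist p₀ (γ t) + edist (γ t) (γ t') + edist (γ t') q₀
            ≤ eVariationOn γ (Set.Icc 0 1 ∩ Set.Icc 0 t) +
              eVariationOn γ (Set.Icc 0 1 ∩ Set.Icc t t') +
              eVariationOn γ (Set.Icc 0 1 ∩ Set.Icc t' 1) :=
              add_le_add (add_le_add e1 e2) e3
          _ = eVariationOn γ (Set.Icc 0 1) := eadd
          _ ≤ ENNReal.ofReal (r + ε) := hγv
      have dsum : dist p₀ (γ t) + dist (γ t) (γ t') + dist (γ t') q₀ ≤ r + ε := by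
        rw [edist_dist, edist_dist, edist_dist, ← ENNReal.ofReal_add dist_nonneg dist_nonneg,
          ← ENNReal.ofReal_add (by positivity) dist_nonneg] at esum
        rwa [ENNReal.ofReal_le_ofReal_iff (by positivity)] at esum
      have hb1 : r - x ≤ dist p₀ (γ t) := by
        have : r - dist p₀ (γ t) ≤ x := by rw [← hgt]; exact le_max_right _ _
        linarith
      have hb2 : y ≤ dist (γ t') q₀ := by
        rw [← hgt']
        apply max_le dist_nonneg
        have := dist_triangle p₀ (γ t') q₀
        linarith
      have hdpq : dist (γ t) (γ t') ≤ x - y + ε := by linarith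
      have hmem : |f x - f y| / dist (γ t) (γ t') ∈ A := by
        refine ⟨γ t, γ t', hpq, ?_⟩
        rw [hgt, hgt']
      have hdlt : 0 < dist (γ t) (γ t') := dist_pos.mpr hpq
      have hle : |f x - f y| / dist (γ t) (γ t') ≤ sSup A := le_csSup hAbdd' hmem
      calc |f x - f y| = (|f x - f y| / dist (γ t) (γ t')) * dist (γ t) (γ t') := by
            field_simp
        _ ≤ sSup A * (x - y + ε) := mul_le_mul hle hdpq hdlt.le hSupA
        _ = sSup A * (x - y) + sSup A * ε := by ring
    apply le_of_forall_pos_le_add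
    intro ε' hε'
    have hS1 : 0 < sSup A + 1 := by linarith
    have h := hstep (ε' / (sSup A + 1)) (by positivity)
    have hb : sSup A * (ε' / (sSup A + 1)) ≤ (sSup A + 1) * (ε' / (sSup A + 1)) :=
      mul_le_mul_of_nonneg_right (by linarith) (by positivity)
    have heq : (sSup A + 1) * (ε' / (sSup A + 1)) = ε' := by field_simp
    linarith
  show sSup A = sSup B
  apply le_antisymm
  · apply Real.sSup_le _ hSupB
    rintro s ⟨p, q, hpq, rfl⟩
    by_cases huu : u p = u q
    · have h0 : |f (u p) - f (u q)| = 0 := by rw [huu]; simp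
      rw [h0]
      simpa using hSupB
    · have hd : 0 < dist p q := dist_pos.mpr hpq
      have habs : 0 < |u p - u q| := abs_pos.mpr (sub_ne_zero.mpr huu)
      have hle : |f (u p) - f (u q)| / dist p q ≤ |f (u p) - f (u q)| / |u p - u q| :=
        div_le_div_of_nonneg_left (abs_nonneg _) habs (hulip p q)
      exact hle.trans (le_csSup hBbdd' ⟨u p, humem p, u q, humem q, huu, rfl⟩)
  · apply Real.sSup_le _ hSupA
    rintro s ⟨x, hx, y, hy, hxy, rfl⟩
    rcases lt_or_gt_of_ne hxy with h | h
    · rw [abs_sub_comm x y, abs_of_pos (sub_pos.mpr h), abs_sub_comm (f x) (f y)]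
      exact key y hy x hx h
    · rw [abs_of_pos (sub_pos.mpr h)]
      exact key x hx y hy h
end

section
/- Let M be an infinite metric space with a distinguished base point 0, and suppose the set M′ of accumulation points of M has infinite density character: there is an infinite index set Γ such that every dense subset of M′ has cardinality at least the cardinality of Γ (and some dense subset of M′ has exactly this cardinality). Then (PNA(M) \ SNA(M)) ∪ {0} contains an isometric copy of c₀(Γ): there exists a linear map T : c₀(Γ) → Lip₀(M) such that ‖T a‖ = ‖a‖_∞ for every a ∈ c₀(Γ), and for every nonzero a, the function T a attains its pointwise norm but does not strongly attain its norm. -/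
open Filter Set
open scoped ZeroAtInfty ENNReal NNReal

universe u

open Metric Cardinal

variable {M : Type u} [MetricSpace M]

/-- `D` is a dense subset of the set `Z` (as a subspace). -/
def DenseFor (Z D : Set M) : Prop := D ⊆ Z ∧ Z ⊆ closure D

/-- density cardinal of a set. -/
noncomputable def densC (Z : Set M) : Cardinal.{u} :=
  sInf {c | ∃ D : Set M, DenseFor Z D ∧ #D = c}

theorem denseFor_self (Z : Set M) : DenseFor Z Z := ⟨subset_rfl, subset_closure⟩

theorem densC_le {Z D : Set M} (h : DenseFor Z D) : densC Z ≤ #D :=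
  csInf_le' ⟨D, h, rfl⟩

theorem exists_denseFor (Z : Set M) : ∃ D : Set M, DenseFor Z D ∧ #D = densC Z := by
  have : (densC Z) ∈ {c | ∃ D : Set M, DenseFor Z D ∧ #D = c} :=
    csInf_mem ⟨#Z, Z, denseFor_self Z, rfl⟩
  obtain ⟨D, hD, hc⟩ := this
  exact ⟨D, hD, hc⟩

theorem le_densC {Z : Set M} {κ : Cardinal} (h : ∀ D : Set M, DenseFor Z D → κ ≤ #D) :
    κ ≤ densC Z :=
  le_csInf ⟨#Z, Z, denseFor_self Z, rfl⟩ (by rintro c ⟨D, hD, rfl⟩; exact h D hD)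

theorem le_of_le_densC {Z D : Set M} {κ : Cardinal} (h : κ ≤ densC Z) (hD : DenseFor Z D) :
    κ ≤ #D := h.trans (densC_le hD)

theorem denseFor_iUnion {ι : Sort*} {Z D : ι → Set M} (h : ∀ i, DenseFor (Z i) (D i)) :
    DenseFor (⋃ i, Z i) (⋃ i, D i) := by
  constructor
  · exact iUnion_mono fun i => (h i).1
  · intro z hz
    obtain ⟨i, hi⟩ := mem_iUnion.1 hz
    exact closure_mono (subset_iUnion D i) ((h i).2 hi)

theorem denseFor_mono_closure {Z D W : Set M} (h : DenseFor Z D) (hDW : D ⊆ W)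
    (hWZ : W ⊆ Z) : DenseFor Z W := ⟨hWZ, h.2.trans (closure_mono hDW)⟩


/-- Monotonicity of density (up to `ℵ₀`). -/
theorem densC_mono [Nonempty M] {Z' Z : Set M} (hsub : Z' ⊆ Z) :
    densC Z' ≤ ℵ₀ ⊔ densC Z := by
  obtain ⟨D, hD, hDc⟩ := exists_denseFor Z
  -- choose approximating points in Z'
  have hch : ∀ (d : M) (n : ℕ), ∃ y : M,
      (Z' ∩ ball d (1/(n+1))).Nonempty → y ∈ Z' ∩ ball d (1/(n+1)) := by
    intro d n
    by_cases h : (Z' ∩ ball d (1/(n+1))).Nonempty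
    · exact ⟨h.some, fun _ => h.some_mem⟩
    · exact ⟨Classical.arbitrary M, fun h' => absurd h' h⟩
  choose g hg using hch
  set D' : Set M := (⋃ n : ULift.{u} ℕ, (fun d : M => g d n.down) '' D) ∩ Z' with hD'
  have hdf : DenseFor Z' D' := by
    constructor
    · exact inter_subset_right
    · intro z hz
      rw [Metric.mem_closure_iff]
      intro ε hε
      obtain ⟨n, hn⟩ := exists_nat_one_div_lt (show 0 < ε/2 by linarith)
      have hzD : z ∈ closure D := hD.2 (hsub hz)
      rw [Metric.mem_closure_iff] at hzD
      obtain ⟨d, hd, hdz⟩ := hzD (1/(n+1)) (by positivity)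
      have hne : (Z' ∩ ball d (1/(n+1))).Nonempty := by
        refine ⟨z, hz, ?_⟩
        rw [mem_ball, dist_comm]
        rw [dist_comm] at hdz
        exact_mod_cast hdz
      have hgm := hg d n hne
      refine ⟨g d n, ⟨mem_iUnion.2 ⟨⟨n⟩, mem_image_of_mem _ hd⟩, hgm.1⟩, ?_⟩
      have h1 : dist z d < 1/(n+1) := by exact_mod_cast hdz
      have h2 : dist d (g d n) < 1/(n+1) := by
        have := hgm.2; rw [mem_ball, dist_comm] at this; exact this
      have h3 : (1:ℝ)/(n+1) < ε/2 := by exact_mod_cast hn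
      calc dist z (g d n) ≤ dist z d + dist d (g d n) := dist_triangle _ _ _
        _ < ε/2 + ε/2 := by linarith
        _ = ε := by ring
  have hcard : #D' ≤ ℵ₀ ⊔ densC Z := by
    have h1 : #D' ≤ #(⋃ n : ULift.{u} ℕ, (fun d : M => g d n.down) '' D) :=
      mk_le_mk_of_subset inter_subset_left
    have h2 : #(⋃ n : ULift.{u} ℕ, (fun d : M => g d n.down) '' D)
        ≤ #(ULift.{u} ℕ) * ⨆ n : ULift.{u} ℕ, #((fun d : M => g d n.down) '' D) :=
      mk_iUnion_le _
    have h3 : ∀ n : ULift.{u} ℕ, #((fun d : M => g d n.down) '' D) ≤ densC Z := by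
      intro n
      calc #((fun d : M => g d n.down) '' D) ≤ #D := mk_image_le
        _ = densC Z := hDc
    have h4 : (⨆ n : ULift.{u} ℕ, #((fun d : M => g d n.down) '' D)) ≤ densC Z :=
      ciSup_le' h3
    have h5 : #(ULift.{u} ℕ) = ℵ₀ := by simp
    calc #D' ≤ #(ULift.{u} ℕ) * ⨆ n : ULift.{u} ℕ, #((fun d : M => g d n.down) '' D) :=
          h1.trans h2
      _ ≤ ℵ₀ * (ℵ₀ ⊔ densC Z) := by
          rw [h5]; exact mul_le_mul' le_rfl (h4.trans le_sup_right)
      _ ≤ (ℵ₀ ⊔ densC Z) * (ℵ₀ ⊔ densC Z) := mul_le_mul' le_sup_left le_rfl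
      _ = ℵ₀ ⊔ densC Z := mul_eq_self (le_sup_left)
  exact (densC_le hdf).trans hcard

/-- Existence of maximal `ε`-separated subsets. -/
theorem exists_maximal_net (Z : Set M) {ε : ℝ} (hε : 0 < ε) :
    ∃ A : Set M, A ⊆ Z ∧ (∀ a ∈ A, ∀ b ∈ A, a ≠ b → ε ≤ dist a b) ∧
      ∀ z ∈ Z, ∃ a ∈ A, dist z a < ε := by
  have hch : ∀ c ⊆ {A : Set M | A ⊆ Z ∧ ∀ a ∈ A, ∀ b ∈ A, a ≠ b → ε ≤ dist a b},
      IsChain (· ⊆ ·) c → ∃ ub ∈ {A : Set M | A ⊆ Z ∧ ∀ a ∈ A, ∀ b ∈ A, a ≠ b → ε ≤ dist a b},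
        ∀ s ∈ c, s ⊆ ub := by
    intro c hc hchain
    refine ⟨⋃₀ c, ⟨?_, ?_⟩, fun s hs => subset_sUnion_of_mem hs⟩
    · exact sUnion_subset fun s hs => (hc hs).1
    · intro a ha b hb hab
      obtain ⟨s, hs, has⟩ := ha
      obtain ⟨t, ht, hbt⟩ := hb
      rcases hchain.total hs ht with h | h
      · exact (hc ht).2 a (h has) b hbt hab
      · exact (hc hs).2 a has b (h hbt) hab
  obtain ⟨A, hA, hAmax⟩ := zorn_subset _ hch
  refine ⟨A, hA.1, hA.2, ?_⟩
  intro z hz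
  by_contra hcon
  push_neg at hcon
  have hmem : insert z A ∈ {A : Set M | A ⊆ Z ∧ ∀ a ∈ A, ∀ b ∈ A, a ≠ b → ε ≤ dist a b} := by
    constructor
    · exact insert_subset hz hA.1
    · intro a ha b hb hab
      rcases ha with rfl | ha
      · rcases hb with rfl | hb
        · exact absurd rfl hab
        · exact hcon b hb
      · rcases hb with rfl | hb
        · rw [dist_comm]; exact hcon a ha
        · exact hA.2 a ha b hb hab
  have heq : insert z A ≤ A := hAmax hmem (subset_insert z A)
  have hzA : z ∈ A := heq (mem_insert z A)
  have := hcon z hzA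
  simp only [dist_self] at this
  exact absurd this (not_le.2 hε)

/-- Solution predicate: a `κ`-sized subset of `Z` with assigned positive radii,
any point's radius being at most the distance to any other point of the set. -/
def Sol (Z : Set M) (κ : Cardinal.{u}) : Prop :=
  ∃ (S : Set M) (b : M → ℝ), S ⊆ Z ∧ (∀ s ∈ S, 0 < b s) ∧
    (∀ s ∈ S, ∀ t ∈ S, s ≠ t → b s ≤ dist s t) ∧ κ ≤ #S

theorem sol_mono {Z : Set M} {κ κ' : Cardinal.{u}} (h : Sol Z κ) (hle : κ' ≤ κ) : Sol Z κ' := by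
  obtain ⟨S, b, h1, h2, h3, h4⟩ := h
  exact ⟨S, b, h1, h2, h3, hle.trans h4⟩

theorem sol_of_subset {Z Z' : Set M} {κ : Cardinal.{u}} (h : Sol Z' κ) (hsub : Z' ⊆ Z) :
    Sol Z κ := by
  obtain ⟨S, b, h1, h2, h3, h4⟩ := h
  exact ⟨S, b, h1.trans hsub, h2, h3, h4⟩

theorem infinite_split {V : Set M} (hV : V.Infinite) :
    ∃ x ∈ V, ∃ ρ : ℝ, 0 < ρ ∧ (V \ closedBall x ρ).Infinite := by
  obtain ⟨a, ha, c, hc, hac⟩ := hV.nontrivial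
  set ρ := dist a c / 3 with hρ
  have hρpos : 0 < ρ := by
    have := dist_pos.2 hac
    positivity
  have hdisj : ∀ z, z ∈ closedBall a ρ → z ∉ closedBall c ρ := by
    intro z hz hz'
    rw [mem_closedBall] at hz hz'
    have : dist a c ≤ dist z a + dist z c := by
      rw [dist_comm z a]; exact dist_triangle a z c
    rw [hρ] at hz hz'
    linarith
  have hcover : V ⊆ (V \ closedBall a ρ) ∪ (V \ closedBall c ρ) := by
    intro z hz
    by_cases h : z ∈ closedBall a ρ
    · exact Or.inr ⟨hz, hdisj z h⟩
    · exact Or.inl ⟨hz, h⟩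
  have : ((V \ closedBall a ρ) ∪ (V \ closedBall c ρ)).Infinite := hV.mono hcover
  rcases Set.infinite_union.1 this with h | h
  · exact ⟨a, ha, ρ, hρpos, h⟩
  · exact ⟨c, hc, ρ, hρpos, h⟩

theorem sol_aleph0 {Z : Set M} (hZ : Z.Infinite) : Sol Z ℵ₀ := by
  classical
  have hstep : ∀ V : Set M, ∃ x : M, ∃ ρ : ℝ, V.Infinite →
      (x ∈ V ∧ 0 < ρ ∧ (V \ closedBall x ρ).Infinite) := by
    intro V
    by_cases h : V.Infinite
    · obtain ⟨x, hx, ρ, h1, h2⟩ := infinite_split h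
      exact ⟨x, ρ, fun _ => ⟨hx, h1, h2⟩⟩
    · obtain ⟨a, _, _, _, _⟩ := hZ.nontrivial
      exact ⟨a, 1, fun h' => absurd h' h⟩
  choose fx fρ hf using hstep
  -- state: (remaining set, current radius bound)
  let st : ℕ → Set M × ℝ := fun n => Nat.rec (Z, 1)
    (fun _ p => (p.1 \ closedBall (fx p.1) (min (fρ p.1) p.2), min (fρ p.1) p.2)) n
  have hst0 : st 0 = (Z, 1) := rfl
  have hstS : ∀ n, st (n+1) =
      ((st n).1 \ closedBall (fx (st n).1) (min (fρ (st n).1) (st n).2),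
        min (fρ (st n).1) (st n).2) := fun n => rfl
  set x : ℕ → M := fun n => fx (st n).1 with hxdef
  set r : ℕ → ℝ := fun n => min (fρ (st n).1) (st n).2 with hrdef
  have hinv : ∀ n, (st n).1.Infinite ∧ (st n).1 ⊆ Z ∧ 0 < (st n).2 := by
    intro n
    induction n with
    | zero => exact ⟨hZ, subset_rfl, one_pos⟩
    | succ n ih =>
      obtain ⟨hinf, hsub, hpos⟩ := ih
      obtain ⟨hx, hρ, hrem⟩ := hf (st n).1 hinf
      rw [hstS n]
      refine ⟨?_, fun z hz => hsub hz.1, lt_min hρ hpos⟩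
      refine hrem.mono ?_
      intro z hz
      exact ⟨hz.1, fun hc => hz.2 (closedBall_subset_closedBall (min_le_left _ _) hc)⟩
  have hxmem : ∀ n, x n ∈ (st n).1 := fun n => (hf (st n).1 (hinv n).1).1
  have hrpos : ∀ n, 0 < r n := fun n =>
    lt_min (hf (st n).1 (hinv n).1).2.1 (hinv n).2.2
  have hmono : ∀ n m, n ≤ m → (st m).1 ⊆ (st n).1 ∧ (st m).2 ≤ (st n).2 := by
    intro n m hnm
    induction m with
    | zero => simp_all
    | succ m ih =>
      rcases Nat.lt_or_ge n (m+1) with h | h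
      · have hnm' := Nat.lt_succ_iff.1 h
        obtain ⟨h1, h2⟩ := ih hnm'
        rw [hstS m]
        exact ⟨(diff_subset).trans h1, le_trans (min_le_right _ _) h2⟩
      · have : n = m + 1 := le_antisymm hnm h
        subst this
        exact ⟨subset_rfl, le_rfl⟩
  have hcross : ∀ n m, n < m → r n < dist (x m) (x n) ∧ r m ≤ r n := by
    intro n m hnm
    have h1 : x m ∈ (st (n+1)).1 := (hmono (n+1) m hnm).1 (hxmem m)
    rw [hstS n] at h1
    have h2 : ¬ (x m ∈ closedBall (x n) (r n)) := h1.2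
    rw [mem_closedBall, not_le] at h2
    have h3 : r m ≤ (st m).2 := min_le_right _ _
    have h4 : (st m).2 ≤ (st (n+1)).2 := (hmono (n+1) m hnm).2
    have h5 : (st (n+1)).2 = r n := by rw [hstS n]
    exact ⟨h2, h3.trans (h4.trans_eq h5)⟩
  have hxinj : Function.Injective x := by
    intro n m hnm
    by_contra hne
    rcases Nat.lt_or_ge n m with h | h
    · have := (hcross n m h).1
      rw [hnm, dist_self] at this
      exact absurd this (not_lt.2 (le_of_lt (hrpos n)))
    · have hlt : m < n := lt_of_le_of_ne h (Ne.symm hne)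
      have := (hcross m n hlt).1
      rw [hnm, dist_self] at this
      exact absurd this (not_lt.2 (le_of_lt (hrpos m)))
  set S : Set M := Set.range x with hSdef
  set b : M → ℝ := fun y => if h : ∃ n, x n = y then r (Classical.choose h) else 1 with hbdef
  have hbx : ∀ n, b (x n) = r n := by
    intro n
    have hex : ∃ k, x k = x n := ⟨n, rfl⟩
    have := Classical.choose_spec hex
    simp only [hbdef, dif_pos hex]
    rw [hxinj this]
  refine ⟨S, b, ?_, ?_, ?_, ?_⟩
  · rintro s ⟨n, rfl⟩
    exact (hinv n).2.1 (hxmem n)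
  · rintro s ⟨n, rfl⟩
    rw [hbx n]; exact hrpos n
  · rintro s ⟨n, rfl⟩ t ⟨m, rfl⟩ hne
    have hnm : n ≠ m := fun h => hne (by rw [h])
    rcases Nat.lt_or_ge n m with h | h
    · obtain ⟨h1, h2⟩ := hcross n m h
      rw [hbx n]
      rw [dist_comm] at h1
      exact le_of_lt (lt_of_le_of_lt (le_refl _) h1)
    · have hlt : m < n := lt_of_le_of_ne h (Ne.symm hnm)
      obtain ⟨h1, h2⟩ := hcross m n hlt
      rw [hbx n]
      exact le_of_lt (lt_of_le_of_lt h2 h1)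
  · rw [Cardinal.aleph0_le_mk_iff, Set.infinite_coe_iff]
    exact Set.infinite_range_of_injective hxinj

theorem dyadic_find {d ρ : ℝ} (hd : 0 < d) (hdρ : d < ρ) :
    ∃ j : ℕ, ρ/2^(j+1) < d ∧ d ≤ ρ/2^j := by
  have hρ : 0 < ρ := hd.trans hdρ
  have hex : ∃ j : ℕ, ρ/2^(j+1) < d := by
    obtain ⟨n, hn⟩ := exists_pow_lt_of_lt_one (by positivity : (0:ℝ) < d/ρ)
      (by norm_num : (1:ℝ)/2 < 1)
    refine ⟨n, ?_⟩
    have h1 : ((1:ℝ)/2)^n = 1/2^n := by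
      rw [div_pow, one_pow]
    rw [h1] at hn
    have h2 : ρ/2^n < d := by
      rw [div_lt_iff₀ (by positivity : (0:ℝ) < 2^n)]
      rw [div_lt_div_iff₀ (by positivity) hρ] at hn
      linarith [hn]
    calc ρ/2^(n+1) ≤ ρ/2^n := by
          apply div_le_div_of_nonneg_left hρ.le (by positivity)
          exact pow_le_pow_right₀ (by norm_num) (Nat.le_succ n)
      _ < d := h2
  classical
  let j₀ := Nat.find hex
  have hj₀ := Nat.find_spec hex
  refine ⟨j₀, hj₀, ?_⟩
  rcases Nat.eq_zero_or_pos j₀ with h | h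
  · rw [h]; simpa using hdρ.le
  · have hmin := Nat.find_min hex (Nat.sub_lt h one_pos)
    push_neg at hmin
    have : j₀ - 1 + 1 = j₀ := Nat.succ_pred_eq_of_pos h
    rw [this] at hmin
    exact hmin

section Heavy

variable {Z : Set M} {κ : Cardinal.{u}} {κseq : ℕ → Cardinal.{u}}

/-- The heavy-point case: around a point all of whose balls have density `≥ κ`,
we find a solution via nested annuli. -/
theorem sol_of_heavy [Nonempty M] (x : M) (hx : x ∈ Z)
    (hheavy : ∀ ρ : ℝ, 0 < ρ → κ ≤ densC (Z ∩ ball x ρ))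
    (hκ : ℵ₀ < κ)
    (IH : ∀ ν, ν < κ → ℵ₀ ≤ ν → ∀ V : Set M, ν ≤ densC V → Sol V ν)
    (hlt : ∀ k, κseq k < κ) (hge : ∀ k, ℵ₀ ≤ κseq k)
    (hcof : ∀ c : Cardinal.{u}, (∀ k, κseq k ≤ c) → κ ≤ c) :
    Sol Z κ := by
  classical
  set Sh : ℝ → ℕ → Set M :=
    fun ρ j => Z ∩ ball x ρ ∩ {y | ρ/2^(j+1) < dist y x ∧ dist y x ≤ ρ/2^j} with hSh
  -- each ball has a shell of density ≥ any ν < κ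
  have hshell : ∀ ρ : ℝ, 0 < ρ → ∀ ν : Cardinal.{u}, ℵ₀ ≤ ν → ν < κ →
      ∃ j : ℕ, ν ≤ densC (Sh ρ j) := by
    intro ρ hρ ν hν hνκ
    by_contra hcon
    push_neg at hcon
    -- all shells have density < ν; build a small dense set for the ball
    have hD : ∀ j : ℕ, ∃ D : Set M, DenseFor (Sh ρ j) D ∧ #D ≤ ν := by
      intro j
      obtain ⟨D, hD, hDc⟩ := exists_denseFor (Sh ρ j)
      exact ⟨D, hD, by rw [hDc]; exact (hcon j).le⟩
    choose Dj hDj hDjc using hD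
    set D : Set M := insert x (⋃ j : ULift.{u} ℕ, Dj j.down) with hDdef
    have hdf : DenseFor (Z ∩ ball x ρ) D := by
      constructor
      · intro y hy
        rcases hy with rfl | hy
        · exact ⟨hx, mem_ball_self hρ⟩
        · obtain ⟨j, hj⟩ := mem_iUnion.1 hy
          exact (((hDj j.down).1.trans inter_subset_left) hj : _)
      · intro y hy
        by_cases hyx : y = x
        · subst hyx
          exact subset_closure (mem_insert y _)
        · have hd : 0 < dist y x := dist_pos.2 hyx
          have hd2 : dist y x < ρ := mem_ball.1 hy.2
          obtain ⟨j, hj1, hj2⟩ := dyadic_find hd hd2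
          have hySh : y ∈ Sh ρ j := ⟨hy, hj1, hj2⟩
          have := (hDj j).2 hySh
          refine closure_mono ?_ this
          exact (subset_iUnion (fun j : ULift.{u} ℕ => Dj j.down) ⟨j⟩).trans
            (subset_insert _ _)
    have hk1 : κ ≤ #D := le_of_le_densC (hheavy ρ hρ) hdf
    have hk2 : #D ≤ ν := by
      calc #D ≤ #(⋃ j : ULift.{u} ℕ, Dj j.down) + 1 := mk_insert_le
        _ ≤ #(ULift.{u} ℕ) * (⨆ j : ULift.{u} ℕ, #(Dj j.down)) + 1 :=
            add_le_add_left (mk_iUnion_le _) 1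
        _ ≤ ℵ₀ * ν + 1 := by
            refine add_le_add_left (mul_le_mul' (by simp) ?_) 1
            exact ciSup_le' fun j => hDjc j.down
        _ = ν := by
            rw [Cardinal.mul_eq_max le_rfl hν, max_eq_right hν]
            exact Cardinal.add_one_of_aleph0_le hν
    exact absurd (hk1.trans hk2) (not_le.2 hνκ)
  -- total choice function for shells
  have hJ : ∀ (k : ℕ) (r : ℝ), ∃ j : ℕ, 0 < r → κseq k ≤ densC (Sh r j) := by
    intro k r
    by_cases hr : 0 < r
    · obtain ⟨j, hj⟩ := hshell r hr (κseq k) (hge k) (hlt k)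
      exact ⟨j, fun _ => hj⟩
    · exact ⟨0, fun h => absurd h hr⟩
  choose J hJspec using hJ
  -- radius sequence
  let cs : ℕ → {r : ℝ // 0 < r} := fun n => Nat.rec ⟨1, one_pos⟩
    (fun k r => ⟨r.1/2^(J k r.1 + 1)/2, by have := r.2; positivity⟩) n
  set al : ℕ → ℝ := fun k => (cs k).1/2^(J k (cs k).1 + 1) with hal
  set be : ℕ → ℝ := fun k => (cs k).1/2^(J k (cs k).1) with hbe
  have hcs_succ : ∀ k, (cs (k+1)).1 = al k / 2 := fun k => rfl
  have hal_pos : ∀ k, 0 < al k := fun k => by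
    have := (cs k).2; positivity
  have hal_le_be : ∀ k, al k ≤ be k := by
    intro k
    simp only [hal, hbe]
    rw [pow_succ]
    have h1 : (0:ℝ) < 2 ^ J k (cs k).1 := by positivity
    have h2 := (cs k).2
    rw [div_le_div_iff₀ (by positivity) (by positivity)]
    nlinarith [h2.le, h1.le]
  have hbe_le : ∀ k, be k ≤ (cs k).1 := by
    intro k
    simp only [hbe]
    have h2 := (cs k).2
    calc (cs k).1/2^(J k (cs k).1) ≤ (cs k).1/2^0 := by
          apply div_le_div_of_nonneg_left h2.le (by positivity)
          exact one_le_pow₀ (by norm_num : (1:ℝ) ≤ 2)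
      _ = (cs k).1 := by norm_num
  -- solutions in each shell
  have hsolk : ∀ k : ℕ, Sol (Sh (cs k).1 (J k (cs k).1)) (κseq k) := by
    intro k
    exact IH (κseq k) (hlt k) (hge k) _ (hJspec k (cs k).1 (cs k).2)
  choose Sk bk hSk1 hSk2 hSk3 hSk4 using hsolk
  -- membership facts
  have hmem : ∀ k, ∀ y ∈ Sk k, y ∈ Z ∧ al k < dist y x ∧ dist y x ≤ be k := by
    intro k y hy
    have := hSk1 k hy
    exact ⟨this.1.1, this.2.1, this.2.2⟩
  -- decreasing radii
  have hcs_mono : ∀ k m, k ≤ m → (cs m).1 ≤ (cs k).1 := by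
    intro k m hkm
    induction m with
    | zero => simp_all
    | succ m ih =>
      rcases Nat.lt_or_ge k (m+1) with h | h
      · have h1 := ih (Nat.lt_succ_iff.1 h)
        have h2 : (cs (m+1)).1 ≤ (cs m).1 := by
          rw [hcs_succ m]
          have := (hal_le_be m).trans (hbe_le m)
          have := hal_pos m
          linarith
        linarith
      · have : k = m+1 := le_antisymm hkm h
        subst this; rfl
  have hbe_lt_al : ∀ k m, k < m → be m ≤ al k / 2 := by
    intro k m hkm
    calc be m ≤ (cs m).1 := hbe_le m
      _ ≤ (cs (k+1)).1 := hcs_mono (k+1) m hkm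
      _ = al k / 2 := hcs_succ k
  -- the union solution
  set S : Set M := ⋃ k : ℕ, Sk k with hSdef
  have hdisj : ∀ k m, k < m → ∀ y, y ∈ Sk k → y ∈ Sk m → False := by
    intro k m hkm y hyk hym
    have h1 := (hmem k y hyk).2.1
    have h2 := (hmem m y hym).2.2
    have h3 := hbe_lt_al k m hkm
    have := hal_pos k
    linarith
  have hcross : ∀ k m, k < m → ∀ s ∈ Sk k, ∀ t ∈ Sk m, al k / 2 < dist s t := by
    intro k m hkm s hs t ht
    have h1 := (hmem k s hs).2.1
    have h2 := (hmem m t ht).2.2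
    have h3 := hbe_lt_al k m hkm
    have h4 : dist s x ≤ dist s t + dist t x := dist_triangle s t x
    linarith
  set b : M → ℝ := fun y => if h : ∃ k, y ∈ Sk k then
      min (bk (Nat.find h) y) (al (Nat.find h) / 2) else 1 with hbdef
  have hbval : ∀ k, ∀ y ∈ Sk k, b y = min (bk k y) (al k / 2) := by
    intro k y hy
    have hex : ∃ k', y ∈ Sk k' := ⟨k, hy⟩
    have hfind : Nat.find hex = k := by
      have h1 := Nat.find_spec hex
      rcases lt_trichotomy (Nat.find hex) k with h | h | h
      · exact absurd (hdisj _ _ h y h1 hy) not_false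
      · exact h
      · exact absurd (hdisj _ _ h y hy h1) not_false
    simp only [hbdef, dif_pos hex, hfind]
  refine ⟨S, b, ?_, ?_, ?_, ?_⟩
  · rintro s hs
    obtain ⟨k, hk⟩ := mem_iUnion.1 hs
    exact (hmem k s hk).1
  · rintro s hs
    obtain ⟨k, hk⟩ := mem_iUnion.1 hs
    rw [hbval k s hk]
    exact lt_min (hSk2 k s hk) (by have := hal_pos k; linarith)
  · rintro s hs t ht hst
    obtain ⟨k, hk⟩ := mem_iUnion.1 hs
    obtain ⟨m, hm⟩ := mem_iUnion.1 ht
    rcases lt_trichotomy k m with h | h | h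
    · rw [hbval k s hk]
      refine (min_le_right _ _).trans (le_of_lt ?_)
      exact hcross k m h s hk t hm
    · subst h
      rw [hbval k s hk]
      exact (min_le_left _ _).trans (hSk3 k s hk t hm hst)
    · rw [hbval k s hk]
      refine (min_le_right _ _).trans (le_of_lt ?_)
      have := hcross m k h t hm s hk
      rw [dist_comm] at this
      calc al k / 2 ≤ al m / 2 := by
            have h1 : (cs k).1 ≤ (cs m).1 := hcs_mono m k h.le
            have := hbe_lt_al m k h
            have := hal_le_be k
            have := hal_pos k
            linarith
        _ < dist s t := this
  · refine hcof _ fun k => ?_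
    calc κseq k ≤ #(Sk k) := hSk4 k
      _ ≤ #S := mk_le_mk_of_subset (subset_iUnion (fun k : ℕ => Sk k) k)

end Heavy

section Light

variable [Nonempty M] {Z : Set M} {κ : Cardinal.{u}} {κseq : ℕ → Cardinal.{u}}

theorem one_div_succ_pos (n : ℕ) : 0 < (1:ℝ)/(n+1) := by positivity

/-- One stage of the light-case construction. -/
theorem step_lemma
    (hκ : ℵ₀ < κ) (hFS : ¬ Sol Z κ)
    (IH : ∀ ν, ν < κ → ℵ₀ ≤ ν → ∀ V : Set M, ν ≤ densC V → Sol V ν)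
    (hL : ∀ x ∈ Z, ∃ n : ℕ, densC (Z ∩ ball x (1/(n+1))) < κ)
    (hsupseq : ∀ c : Cardinal.{u}, c < κ → ∃ k : ℕ, c ≤ κseq k)
    (hseqlt : ∀ k, κseq k < κ)
    (Z' : Set M) (hZ' : Z' ⊆ Z) (hdens : κ ≤ densC Z')
    (ν : Cardinal.{u}) (hν1 : ℵ₀ < ν) (hν2 : ν < κ) (hνreg : ν.IsRegular) :
    ∃ (R W : Set M) (brad : M → ℝ),
      R ⊆ Z' ∧ (∀ s ∈ R, 0 < brad s) ∧
      (∀ s ∈ R, ∀ t ∈ R, s ≠ t → brad s ≤ dist s t) ∧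
      ν ≤ #R ∧ W ⊆ Z ∧ #W < κ ∧ R ⊆ W ∧
      (∀ y ∈ Z, ∀ s ∈ R, dist y s ≤ brad s → y ∈ closure W) := by
  classical
  set Y : ℕ → Set M := fun n => {x | x ∈ Z' ∧ densC (Z ∩ ball x (1/(n+1))) < κ} with hY
  have hYcov : ∀ x ∈ Z', ∃ n : ℕ, x ∈ Y n := by
    intro x hx
    obtain ⟨n, hn⟩ := hL x (hZ' hx)
    exact ⟨n, hx, hn⟩
  have hTex : ∀ n : ℕ, ∃ T : Set M, T ⊆ Y n ∧
      (∀ a ∈ T, ∀ b ∈ T, a ≠ b → 1/(2*(n+1)) ≤ dist a b) ∧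
      ∀ z ∈ Y n, ∃ a ∈ T, dist z a < 1/(2*(n+1)) :=
    fun n => exists_maximal_net (Y n) (by positivity)
  choose T hT1 hT2 hT3 using hTex
  have hTZ' : ∀ n, T n ⊆ Z' := fun n => (hT1 n).trans (fun x hx => hx.1)
  have hpiece : ∀ n, ∀ t ∈ T n, densC (Z ∩ ball t (1/(n+1))) < κ :=
    fun n t ht => (hT1 n ht).2
  by_cases hbig : ∃ n : ℕ, ν ≤ #(T n)
  · -- case (a): a large uniformly separated net
    obtain ⟨n, hn⟩ := hbig
    have hsep := hT2 n
    have hTκ : #(T n) < κ := by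
      by_contra h
      push_neg at h
      exact hFS ⟨T n, fun _ => 1/(2*(n+1)), (hTZ' n).trans hZ',
        fun s _ => by positivity, fun s hs t ht hst => hsep s hs t ht hst, h⟩
    set P : ℕ → Set M := fun k => {t | t ∈ T n ∧ densC (Z ∩ ball t (1/(n+1))) ≤ κseq k}
      with hP
    have hPcov : T n = ⋃ k : ULift.{u} ℕ, P k.down := by
      apply Set.eq_of_subset_of_subset
      · intro t ht
        obtain ⟨k, hk⟩ := hsupseq _ (hpiece n t ht)
        exact mem_iUnion.2 ⟨⟨k⟩, ht, hk⟩
      · intro t ht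
        obtain ⟨k, hk⟩ := mem_iUnion.1 ht
        exact hk.1
    have hPk : ∃ k : ℕ, ν ≤ #(P k) := by
      by_contra h
      push_neg at h
      have h1 : #(T n) ≤ #(ULift.{u} ℕ) * ⨆ k : ULift.{u} ℕ, #(P k.down) := by
        rw [hPcov]; exact mk_iUnion_le _
      have h2 : (⨆ k : ULift.{u} ℕ, #(P k.down)) < ν :=
        Cardinal.iSup_lt_of_isRegular hνreg (by simp; exact hν1) fun k => h k.down
      have h3 : #(ULift.{u} ℕ) * (⨆ k : ULift.{u} ℕ, #(P k.down)) < ν :=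
        Cardinal.mul_lt_of_lt hνreg.1 (by simp; exact hν1) h2
      exact absurd (hn.trans h1) (not_le.2 h3)
    obtain ⟨k, hk⟩ := hPk
    set R : Set M := P k with hR
    have hRT : R ⊆ T n := fun t ht => ht.1
    have hDex : ∀ t : M, ∃ D : Set M, t ∈ R →
        DenseFor (Z ∩ ball t (1/(n+1))) D ∧ #D = densC (Z ∩ ball t (1/(n+1))) := by
      intro t
      by_cases h : t ∈ R
      · obtain ⟨D, h1, h2⟩ := exists_denseFor (Z ∩ ball t (1/(n+1)))
        exact ⟨D, fun _ => ⟨h1, h2⟩⟩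
      · exact ⟨∅, fun h' => absurd h' h⟩
    choose Dt hDt using hDex
    set W : Set M := R ∪ ⋃ t : ↥R, Dt t with hW
    refine ⟨R, W, fun _ => 1/(4*(n+1)), hRT.trans (hTZ' n), fun s _ => by positivity,
      ?_, hk, ?_, ?_, subset_union_left, ?_⟩
    · intro s hs t ht hst
      calc (1:ℝ)/(4*(n+1)) ≤ 1/(2*(n+1)) := by
            apply div_le_div_of_nonneg_left one_pos.le (by positivity)
            nlinarith [Nat.cast_nonneg (α := ℝ) n]
        _ ≤ dist s t := hsep s (hRT hs) t (hRT ht) hst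
    · -- W ⊆ Z
      intro y hy
      rcases hy with hy | hy
      · exact hZ' (hTZ' n (hRT hy))
      · obtain ⟨t, ht⟩ := mem_iUnion.1 hy
        exact ((hDt t t.2).1.1 ht).1
    · -- #W < κ
      have h1 : #(⋃ t : ↥R, Dt t) ≤ #(↥R) * ⨆ t : ↥R, #(Dt t) := mk_iUnion_le _
      have h2 : (⨆ t : ↥R, #(Dt t)) ≤ κseq k := by
        apply ciSup_le'
        intro t
        rw [(hDt t t.2).2]
        exact t.2.2
      have h3 : #(↥R) * (⨆ t : ↥R, #(Dt t)) < κ := by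
        apply Cardinal.mul_lt_of_lt hκ.le (lt_of_le_of_lt (mk_le_mk_of_subset hRT) hTκ)
        exact lt_of_le_of_lt h2 (hseqlt k)
      calc #W ≤ #R + #(⋃ t : ↥R, Dt t) := mk_union_le _ _
        _ < κ := Cardinal.add_lt_of_lt hκ.le
            (lt_of_le_of_lt (mk_le_mk_of_subset hRT) hTκ) (lt_of_le_of_lt h1 h3)
    · -- region
      intro y hy s hs hd
      have hyb : y ∈ Z ∩ ball s (1/(n+1)) := by
        refine ⟨hy, ?_⟩
        rw [mem_ball, dist_comm]
        calc dist s y = dist y s := dist_comm s y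
          _ ≤ 1/(4*(n+1)) := hd
          _ < 1/(n+1) := by
            apply div_lt_div_of_pos_left one_pos (by positivity)
            nlinarith [Nat.cast_nonneg (α := ℝ) n]
      have := (hDt s hs).1.2 hyb
      refine closure_mono ?_ this
      exact (subset_iUnion (fun t : ↥R => Dt t) ⟨s, hs⟩).trans subset_union_right
  · -- case (b): all nets small; find a single dense ball
    push_neg at hbig
    have hVd : ∀ n, ∀ t ∈ T n, densC (Z' ∩ ball t (1/(n+1))) < κ := by
      intro n t ht
      have h1 : Z' ∩ ball t (1/(n+1)) ⊆ Z ∩ ball t (1/(n+1)) :=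
        inter_subset_inter_left _ hZ'
      calc densC (Z' ∩ ball t (1/(n+1))) ≤ ℵ₀ ⊔ densC (Z ∩ ball t (1/(n+1))) :=
            densC_mono h1
        _ < κ := sup_lt_iff.2 ⟨hκ, hpiece n t ht⟩
    have hDex : ∀ (n : ℕ) (t : M), ∃ D : Set M, t ∈ T n →
        DenseFor (Z' ∩ ball t (1/(n+1))) D ∧ #D = densC (Z' ∩ ball t (1/(n+1))) := by
      intro n t
      by_cases h : t ∈ T n
      · obtain ⟨D, h1, h2⟩ := exists_denseFor (Z' ∩ ball t (1/(n+1)))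
        exact ⟨D, fun _ => ⟨h1, h2⟩⟩
      · exact ⟨∅, fun h' => absurd h' h⟩
    choose Dnt hDnt using hDex
    set D : Set M := ⋃ n : ULift.{u} ℕ, ⋃ t : ↥(T n.down), Dnt n.down t with hD
    have hdf : DenseFor Z' D := by
      constructor
      · intro y hy
        obtain ⟨n, hn⟩ := mem_iUnion.1 hy
        obtain ⟨t, ht⟩ := mem_iUnion.1 hn
        exact ((hDnt n.down t t.2).1.1 ht).1
      · intro y hy
        obtain ⟨n, hYn⟩ := hYcov y hy
        obtain ⟨t, ht, hdt⟩ := hT3 n y hYn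
        have hyV : y ∈ Z' ∩ ball t (1/(n+1)) := by
          refine ⟨hy, ?_⟩
          rw [mem_ball]
          calc dist y t < 1/(2*(n+1)) := hdt
            _ < 1/(n+1) := by
              apply div_lt_div_of_pos_left one_pos (by positivity)
              nlinarith [Nat.cast_nonneg (α := ℝ) n]
        have := (hDnt n t ht).1.2 hyV
        refine closure_mono ?_ this
        intro z hz
        exact mem_iUnion.2 ⟨⟨n⟩, mem_iUnion.2 ⟨⟨t, ht⟩, hz⟩⟩
    have hDbig : κ ≤ #D := le_of_le_densC hdens hdf
    by_cases hex2 : ∃ n : ℕ, ∃ t ∈ T n, ν ≤ densC (Z' ∩ ball t (1/(n+1)))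
    · obtain ⟨n, t, ht, hνd⟩ := hex2
      -- a single ball with density in [ν, κ): apply the inductive hypothesis
      obtain ⟨R₀, b₀, hR1, hR2, hR3, hR4⟩ :=
        IH ν hν2 hν1.le (Z' ∩ ball t (1/(n+1))) hνd
      obtain ⟨R, hRsub, hRcard⟩ := Cardinal.le_mk_iff_exists_subset.1 hR4
      obtain ⟨DV, hDV1, hDV2⟩ := exists_denseFor (Z ∩ ball t (1/(n+1)))
      set W : Set M := R ∪ DV with hW
      set brad : M → ℝ := fun s => min (b₀ s) ((1/(n+1) - dist s t)/2) with hbrad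
      have hRV : R ⊆ Z' ∩ ball t (1/(n+1)) := hRsub.trans hR1
      refine ⟨R, W, brad, fun s hs => (hRV hs).1, ?_, ?_, hRcard.ge, ?_, ?_,
        subset_union_left, ?_⟩
      · intro s hs
        have h1 := hR2 s (hRsub hs)
        have h2 : dist s t < 1/(n+1) := mem_ball.1 (hRV hs).2
        exact lt_min h1 (by linarith)
      · intro s hs u hu hsu
        exact (min_le_left _ _).trans (hR3 s (hRsub hs) u (hRsub hu) hsu)
      · -- W ⊆ Z
        intro y hy
        rcases hy with hy | hy
        · exact hZ' (hRV hy).1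
        · exact (hDV1.1 hy).1
      · -- #W < κ
        have h1 : #DV < κ := by rw [hDV2]; exact hpiece n t ht
        have h2 : #R < κ := by rw [hRcard]; exact hν2
        calc #W ≤ #R + #DV := mk_union_le _ _
          _ < κ := Cardinal.add_lt_of_lt hκ.le h2 h1
      · -- region
        intro y hy s hs hd
        have h2 : dist s t < 1/(n+1) := mem_ball.1 (hRV hs).2
        have hyV : y ∈ Z ∩ ball t (1/(n+1)) := by
          refine ⟨hy, ?_⟩
          rw [mem_ball]
          have h3 : dist y s ≤ (1/(n+1) - dist s t)/2 := hd.trans (min_le_right _ _)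
          calc dist y t ≤ dist y s + dist s t := dist_triangle _ _ _
            _ < 1/(n+1) := by linarith
        exact closure_mono subset_union_right (hDV1.2 hyV)
    · -- impossible: the dense set D would be too small
      exfalso
      push_neg at hex2
      have hcount : ∀ n : ULift.{u} ℕ, #(⋃ t : ↥(T n.down), Dnt n.down t) < ν := by
        intro n
        have h1 : #(⋃ t : ↥(T n.down), Dnt n.down t)
            ≤ #(↥(T n.down)) * ⨆ t : ↥(T n.down), #(Dnt n.down t) := mk_iUnion_le _
        have h2 : (⨆ t : ↥(T n.down), #(Dnt n.down t)) < ν := by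
          apply Cardinal.iSup_lt_of_isRegular hνreg (hbig n.down)
          intro t
          rw [(hDnt n.down t t.2).2]
          exact hex2 n.down t t.2
        exact lt_of_le_of_lt h1 (Cardinal.mul_lt_of_lt hνreg.1 (hbig n.down) h2)
      have h3 : #D ≤ #(ULift.{u} ℕ) * ⨆ n : ULift.{u} ℕ, #(⋃ t : ↥(T n.down), Dnt n.down t) :=
        mk_iUnion_le _
      have h4 : #D ≤ ℵ₀ * ν := by
        refine h3.trans (mul_le_mul' (by simp) ?_)
        exact ciSup_le' fun n => (hcount n).le
      rw [Cardinal.mul_eq_max le_rfl hν1.le, max_eq_right hν1.le] at h4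
      exact absurd (hDbig.trans h4) (not_le.2 hν2)

end Light
-- continuation: light case main recursion
section LightMain

variable [Nonempty M] {Z : Set M} {κ : Cardinal.{u}} {κseq : ℕ → Cardinal.{u}}

/-- invariant for the stage construction -/
def GoodSt (Z : Set M) (κ : Cardinal.{u}) (κseq : ℕ → Cardinal.{u}) (k : ℕ)
    (st : (ℕ → Set M) × (ℕ → M → ℝ) × Set M) : Prop :=
  (∀ j, k ≤ j → st.1 j = ∅) ∧
  (∀ j, j < k → st.1 j ⊆ Z) ∧
  (∀ j, j < k → ∀ s ∈ st.1 j, 0 < st.2.1 j s) ∧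
  (∀ j, j < k → ∀ s ∈ st.1 j, ∀ t ∈ st.1 j, s ≠ t → st.2.1 j s ≤ dist s t) ∧
  (∀ i j, i < j → j < k → ∀ s ∈ st.1 i, ∀ t ∈ st.1 j,
      st.2.1 i s < dist s t ∧ st.2.1 j t ≤ dist s t) ∧
  (∀ j, j < k → κseq j ≤ #(st.1 j)) ∧
  (st.2.2 ⊆ Z ∧ #(st.2.2) < κ) ∧
  (∀ j, j < k → st.1 j ⊆ st.2.2) ∧
  (∀ y ∈ Z, ∀ j, j < k → ∀ s ∈ st.1 j, dist y s ≤ st.2.1 j s → y ∈ closure st.2.2)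

theorem sol_of_light
    (hκ : ℵ₀ < κ) (hFS : ¬ Sol Z κ)
    (IH : ∀ ν, ν < κ → ℵ₀ ≤ ν → ∀ V : Set M, ν ≤ densC V → Sol V ν)
    (hL : ∀ x ∈ Z, ∃ n : ℕ, densC (Z ∩ ball x (1/(n+1))) < κ)
    (hsupseq : ∀ c : Cardinal.{u}, c < κ → ∃ k : ℕ, c ≤ κseq k)
    (hseqlt : ∀ k, κseq k < κ) (hseqgt : ∀ k, ℵ₀ < κseq k)
    (hseqreg : ∀ k, (κseq k).IsRegular)
    (hcof : ∀ c : Cardinal.{u}, (∀ k, κseq k ≤ c) → κ ≤ c)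
    (hdensZ : κ ≤ densC Z) :
    Sol Z κ := by
  classical
  -- one construction step
  have hstep : ∀ (st : (ℕ → Set M) × (ℕ → M → ℝ) × Set M) (k : ℕ),
      GoodSt Z κ κseq k st → ∃ st', GoodSt Z κ κseq (k+1) st' ∧
        ∀ j, j ≠ k → st'.1 j = st.1 j ∧ st'.2.1 j = st.2.1 j := by
    intro st k hG
    obtain ⟨g1, g2, g3, g4, g5, g6, ⟨g7a, g7b⟩, g8, g9⟩ := hG
    set W := st.2.2 with hWdef
    set Z' : Set M := Z \ closure W with hZ'def
    have hZ'sub : Z' ⊆ Z := diff_subset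
    have hdens' : κ ≤ densC Z' := by
      apply le_densC
      intro D' hD'
      by_contra hcon
      push_neg at hcon
      have hdf : DenseFor Z (D' ∪ W) := by
        constructor
        · exact union_subset (hD'.1.trans hZ'sub) g7a
        · intro y hy
          by_cases h : y ∈ closure W
          · exact closure_mono subset_union_right h
          · exact closure_mono subset_union_left (hD'.2 ⟨hy, h⟩)
      have h1 : κ ≤ #(D' ∪ W : Set M) := le_of_le_densC hdensZ hdf
      have h2 : #(D' ∪ W : Set M) ≤ #D' + #W := mk_union_le _ _
      have h3 : #D' + #W < κ := Cardinal.add_lt_of_lt hκ.le hcon g7b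
      exact absurd (h1.trans h2) (not_le.2 h3)
    obtain ⟨Rn, Wn, bn, hs1, hs2, hs3, hs4, hs5, hs6, hs7, hs8⟩ :=
      step_lemma hκ hFS IH hL hsupseq hseqlt Z' hZ'sub hdens' (κseq k)
        (hseqgt k) (hseqlt k) (hseqreg k)
    -- distance floor to the old region
    have hδ : ∀ s : M, ∃ δ : ℝ, s ∈ Rn → (0 < δ ∧ ∀ w ∈ W, δ ≤ dist s w) := by
      intro s
      by_cases h : s ∈ Rn
      · have hsc : s ∉ closure W := (hs1 h).2
        rw [Metric.mem_closure_iff] at hsc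
        push_neg at hsc
        obtain ⟨δ, hδ1, hδ2⟩ := hsc
        exact ⟨δ, fun _ => ⟨hδ1, hδ2⟩⟩
      · exact ⟨1, fun h' => absurd h' h⟩
    choose δf hδf using hδ
    refine ⟨⟨fun j => if j = k then Rn else st.1 j,
        fun j => if j = k then (fun s => min (bn s) (δf s)) else st.2.1 j,
        W ∪ Wn⟩, ?_, ?_⟩
    · constructor
      · intro j hj
        have hjk : j ≠ k := by omega
        simp only [if_neg hjk]
        exact g1 j (by omega)
      constructor
      · intro j hj
        by_cases hjk : j = k
        · subst hjk; simp only [if_pos rfl]; exact hs1.trans hZ'sub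
        · simp only [if_neg hjk]; exact g2 j (by omega)
      constructor
      · intro j hj s hs
        by_cases hjk : j = k
        · subst hjk
          simp only [if_pos rfl] at hs ⊢
          exact lt_min (hs2 s hs) (hδf s hs).1
        · simp only [if_neg hjk] at hs ⊢
          exact g3 j (by omega) s hs
      constructor
      · intro j hj s hs t ht hst
        by_cases hjk : j = k
        · subst hjk
          simp only [if_pos rfl] at hs ht ⊢
          exact (min_le_left _ _).trans (hs3 s hs t ht hst)
        · simp only [if_neg hjk] at hs ht ⊢
          exact g4 j (by omega) s hs t ht hst
      constructor
      · intro i j hij hjk1 s hs t ht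
        by_cases hjk : j = k
        · have hik : i ≠ k := by omega
          simp only [if_pos hjk, if_neg hik] at hs ht ⊢
          have htZ' : t ∈ Z' := hs1 ht
          have hik' : i < k := by omega
          constructor
          · by_contra hcon
            push_neg at hcon
            have : t ∈ closure W := by
              refine g9 t (hZ'sub htZ') i hik' s hs ?_
              rw [dist_comm]; exact hcon
            exact htZ'.2 this
          · refine (min_le_right _ _).trans ?_
            have h5 := (hδf t ht).2 s (g8 i hik' hs)
            rw [dist_comm] at h5
            exact h5
        · have hik : i ≠ k := by omega
          simp only [if_neg hjk, if_neg hik] at hs ht ⊢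
          exact g5 i j hij (by omega) s hs t ht
      constructor
      · intro j hj
        by_cases hjk : j = k
        · subst hjk; simp only [if_pos rfl]; exact hs4
        · simp only [if_neg hjk]; exact g6 j (by omega)
      constructor
      · constructor
        · exact union_subset g7a hs5
        · calc #(W ∪ Wn : Set M) ≤ #W + #Wn := mk_union_le _ _
            _ < κ := Cardinal.add_lt_of_lt hκ.le g7b hs6
      constructor
      · intro j hj
        by_cases hjk : j = k
        · subst hjk
          simp only [if_pos rfl]
          exact hs7.trans subset_union_right
        · simp only [if_neg hjk]
          exact (g8 j (by omega)).trans subset_union_left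
      · intro y hy j hj s hs hd
        by_cases hjk : j = k
        · subst hjk
          simp only [if_pos rfl] at hs hd
          have : y ∈ closure Wn := hs8 y hy s hs (hd.trans (min_le_left _ _))
          exact closure_mono subset_union_right this
        · simp only [if_neg hjk] at hs hd
          have : y ∈ closure W := g9 y hy j (by omega) s hs hd
          exact closure_mono subset_union_left this
    · intro j hjk
      refine ⟨?_, ?_⟩ <;> simp [hjk]
  -- initial state
  have hG0 : GoodSt Z κ κseq 0 ⟨fun _ => (∅ : Set M), fun _ _ => 1, (∅ : Set M)⟩ := by
    refine ⟨fun j _ => rfl, fun j hj => by omega, fun j hj => by omega, fun j hj => by omega,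
      fun i j hij hjk => by omega, fun j hj => by omega, ⟨empty_subset Z, ?_⟩,
      fun j hj => by omega, fun y hy j hj => by omega⟩
    simp only [Cardinal.mk_emptyCollection]
    exact aleph0_pos.trans hκ
  -- build the chain of states
  let τ : ∀ k : ℕ, {st : (ℕ → Set M) × (ℕ → M → ℝ) × Set M // GoodSt Z κ κseq k st} :=
    fun k => Nat.rec ⟨⟨fun _ => (∅ : Set M), fun _ _ => 1, (∅ : Set M)⟩, hG0⟩
      (fun k p => ⟨Classical.choose (hstep p.1 k p.2),
        (Classical.choose_spec (hstep p.1 k p.2)).1⟩) k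
  have hτsucc : ∀ k, ∀ j, j ≠ k → ((τ (k+1)).1.1 j = (τ k).1.1 j ∧
      (τ (k+1)).1.2.1 j = (τ k).1.2.1 j) := by
    intro k j hjk
    exact (Classical.choose_spec (hstep (τ k).1 k (τ k).2)).2 j hjk
  -- stability of stage data
  have hstab : ∀ j m, j + 1 ≤ m → ((τ m).1.1 j = (τ (j+1)).1.1 j ∧
      (τ m).1.2.1 j = (τ (j+1)).1.2.1 j) := by
    intro j m hm
    induction m with
    | zero => omega
    | succ m ih =>
      rcases Nat.lt_or_ge (j+1) (m+1) with h | h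
      · have hjm : j ≠ m := by omega
        obtain ⟨e1, e2⟩ := hτsucc m j hjm
        obtain ⟨e3, e4⟩ := ih (by omega)
        exact ⟨e1.trans e3, e2.trans e4⟩
      · have : j + 1 = m + 1 := by omega
        rw [this]
        exact ⟨rfl, rfl⟩
  set Rf : ℕ → Set M := fun j => (τ (j+1)).1.1 j with hRf
  set bf : ℕ → M → ℝ := fun j => (τ (j+1)).1.2.1 j with hbf
  -- facts about each stage, stated at any sufficiently late time
  have hRfsub : ∀ j, Rf j ⊆ Z := by
    intro j
    exact (τ (j+1)).2.2.1 j (by omega)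
  have hbfpos : ∀ j, ∀ s ∈ Rf j, 0 < bf j s := by
    intro j
    exact (τ (j+1)).2.2.2.1 j (by omega)
  have hcard : ∀ j, κseq j ≤ #(Rf j) := by
    intro j
    exact (τ (j+1)).2.2.2.2.2.2.1 j (by omega)
  have hsame : ∀ j, ∀ s ∈ Rf j, ∀ t ∈ Rf j, s ≠ t → bf j s ≤ dist s t := by
    intro j
    exact (τ (j+1)).2.2.2.2.1 j (by omega)
  have hcross : ∀ i j, i < j → ∀ s ∈ Rf i, ∀ t ∈ Rf j,
      bf i s < dist s t ∧ bf j t ≤ dist s t := by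
    intro i j hij s hs t ht
    have h1 := hstab i (j+1) (by omega)
    have h2 : (τ (j+1)).1.1 i = Rf i := h1.1
    have h3 : (τ (j+1)).1.2.1 i = bf i := h1.2
    have := (τ (j+1)).2.2.2.2.2.1 i j hij (by omega) s (by rw [h2]; exact hs) t ht
    rw [h3] at this
    exact this
  have hdisj : ∀ i j, i < j → ∀ y, y ∈ Rf i → y ∈ Rf j → False := by
    intro i j hij y hyi hyj
    have := (hcross i j hij y hyi y hyj).1
    rw [dist_self] at this
    exact absurd this (not_lt.2 (hbfpos i y hyi).le)
  set S : Set M := ⋃ j : ℕ, Rf j with hS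
  set b : M → ℝ := fun y => if h : ∃ j, y ∈ Rf j then bf (Nat.find h) y else 1 with hb
  have hbval : ∀ j, ∀ y ∈ Rf j, b y = bf j y := by
    intro j y hy
    have hex : ∃ j', y ∈ Rf j' := ⟨j, hy⟩
    have hfind : Nat.find hex = j := by
      have h1 := Nat.find_spec hex
      rcases lt_trichotomy (Nat.find hex) j with h | h | h
      · exact absurd (hdisj _ _ h y h1 hy) not_false
      · exact h
      · exact absurd (hdisj _ _ h y hy h1) not_false
    simp only [hb, dif_pos hex, hfind]
  refine hFS ⟨S, b, ?_, ?_, ?_, ?_⟩ |>.elim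
  · rintro s hs
    obtain ⟨j, hj⟩ := mem_iUnion.1 hs
    exact hRfsub j hj
  · rintro s hs
    obtain ⟨j, hj⟩ := mem_iUnion.1 hs
    rw [hbval j s hj]
    exact hbfpos j s hj
  · rintro s hs t ht hst
    obtain ⟨i, hi⟩ := mem_iUnion.1 hs
    obtain ⟨j, hj⟩ := mem_iUnion.1 ht
    rw [hbval i s hi]
    rcases lt_trichotomy i j with h | h | h
    · exact (hcross i j h s hi t hj).1.le
    · subst h
      exact hsame i s hi t hj hst
    · have := (hcross j i h t hj s hi).2
      rw [dist_comm] at this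
      exact this
  · refine hcof _ fun k => ?_
    calc κseq k ≤ #(Rf k) := hcard k
      _ ≤ #S := mk_le_mk_of_subset (subset_iUnion (fun j : ℕ => Rf j) k)

end LightMain

/-- Main combinatorial lemma: a set whose dense subsets all have size `≥ κ`
contains a `κ`-sized "strongly discrete" family. -/
theorem lemC : ∀ (κ : Cardinal.{u}) {M : Type u} [MetricSpace M] [Nonempty M] (Z : Set M),
    ℵ₀ ≤ κ → κ ≤ densC Z → Sol Z κ := by
  intro κ
  refine Cardinal.lt_wf.induction (C := fun κ => ∀ {M : Type u} [MetricSpace M] [Nonempty M]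
    (Z : Set M), ℵ₀ ≤ κ → κ ≤ densC Z → Sol Z κ) κ ?_
  clear κ
  intro κ IHwf M _ _ Z hκ hdens
  have IH : ∀ ν, ν < κ → ℵ₀ ≤ ν → ∀ V : Set M, ν ≤ densC V → Sol V ν :=
    fun ν h1 h2 V h3 => IHwf ν h1 V h2 h3
  rcases eq_or_lt_of_le hκ with heq | hκlt
  · -- base case κ = ℵ₀
    subst heq
    have hZinf : Z.Infinite := by
      rw [← Set.infinite_coe_iff, ← Cardinal.aleph0_le_mk_iff]
      exact hdens.trans (densC_le (denseFor_self Z))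
    exact sol_aleph0 hZinf
  · by_contra hFS
    -- maximal nets of Z
    have hAex : ∀ n : ℕ, ∃ A : Set M, A ⊆ Z ∧
        (∀ a ∈ A, ∀ b ∈ A, a ≠ b → 1/(n+1) ≤ dist a b) ∧
        ∀ z ∈ Z, ∃ a ∈ A, dist z a < 1/(n+1) :=
      fun n => exists_maximal_net Z (by positivity)
    choose A hA1 hA2 hA3 using hAex
    have hAne : ∀ n, #(A n) < κ := by
      intro n
      by_contra h
      push_neg at h
      exact hFS ⟨A n, fun _ => 1/(n+1), hA1 n, fun s _ => by positivity, hA2 n, h⟩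
    have hDcov : DenseFor Z (⋃ n : ULift.{u} ℕ, A n.down) := by
      constructor
      · exact iUnion_subset fun n => hA1 n.down
      · intro z hz
        rw [Metric.mem_closure_iff]
        intro ε hε
        obtain ⟨n, hn⟩ := exists_nat_one_div_lt hε
        obtain ⟨a, ha, hda⟩ := hA3 n z hz
        exact ⟨a, mem_iUnion.2 ⟨⟨n⟩, ha⟩, hda.trans hn⟩
    have hDbig : κ ≤ #(⋃ n : ULift.{u} ℕ, A n.down) := le_of_le_densC hdens hDcov
    have hsupA : κ ≤ ⨆ n : ULift.{u} ℕ, #(A n.down) := by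
      by_contra hns
      push_neg at hns
      have h1 : κ ≤ #(ULift.{u} ℕ) * ⨆ n : ULift.{u} ℕ, #(A n.down) :=
        hDbig.trans (mk_iUnion_le _)
      have h2 : #(ULift.{u} ℕ) * (⨆ n : ULift.{u} ℕ, #(A n.down)) < κ :=
        Cardinal.mul_lt_of_lt hκlt.le (by simp; exact hκlt) hns
      exact absurd h1 (not_le.2 h2)
    set f : ULift.{u} ℕ → Cardinal.{u} := fun n => #(A n.down) with hf
    have hf1 : ∀ n, f n < κ := fun n => hAne n.down
    -- successors stay below κ
    have hsucc : ∀ c : Cardinal.{u}, c < κ → Order.succ c < κ := by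
      intro c hc
      rcases lt_or_eq_of_le (Order.succ_le_of_lt hc) with h | h
      · exact h
      · exfalso
        have h1 : ∀ n, f n ≤ c := fun n => Order.lt_succ_iff.1 (by rw [h]; exact hf1 n)
        have h2 : (⨆ n, f n) ≤ c := ciSup_le' h1
        have h3 : κ ≤ c := hsupA.trans h2
        exact absurd h3 (not_le.2 hc)
    -- the cofinal sequence of regular cardinals
    set κseq : ℕ → Cardinal.{u} := fun n => Nat.rec (Order.succ (ℵ₀ ⊔ f ⟨0⟩))
      (fun n c => Order.succ (c ⊔ f ⟨n+1⟩)) n with hκseq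
    have hκseq0 : κseq 0 = Order.succ (ℵ₀ ⊔ f ⟨0⟩) := rfl
    have hκseqS : ∀ n, κseq (n+1) = Order.succ (κseq n ⊔ f ⟨n+1⟩) := fun n => rfl
    have hseqmono : ∀ k, κseq k ≤ κseq (k+1) := by
      intro k
      rw [hκseqS]
      exact le_sup_left.trans (Order.le_succ _)
    have hseqgt : ∀ k, ℵ₀ < κseq k := by
      intro k
      induction k with
      | zero => rw [hκseq0]; exact lt_of_le_of_lt le_sup_left (Order.lt_succ _)
      | succ k ih => exact ih.trans_le (hseqmono k)
    have hseqlt : ∀ k, κseq k < κ := by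
      intro k
      induction k with
      | zero =>
        rw [hκseq0]
        exact hsucc _ (sup_lt_iff.2 ⟨hκlt, hf1 _⟩)
      | succ k ih =>
        rw [hκseqS]
        exact hsucc _ (sup_lt_iff.2 ⟨ih, hf1 _⟩)
    have hseqge : ∀ k, ℵ₀ ≤ κseq k := fun k => (hseqgt k).le
    have hseqreg : ∀ k, (κseq k).IsRegular := by
      intro k
      cases k with
      | zero => exact Cardinal.isRegular_succ le_sup_left
      | succ k =>
        rw [hκseqS]
        exact Cardinal.isRegular_succ (le_sup_of_le_left (hseqge k))
    have hfle : ∀ n : ℕ, f ⟨n⟩ ≤ κseq n := by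
      intro n
      cases n with
      | zero => exact le_sup_right.trans (Order.le_succ _)
      | succ n => rw [hκseqS]; exact le_sup_right.trans (Order.le_succ _)
    have hcof : ∀ c : Cardinal.{u}, (∀ k, κseq k ≤ c) → κ ≤ c := by
      intro c hc
      refine hsupA.trans (ciSup_le' ?_)
      intro n
      have : f ⟨n.down⟩ ≤ κseq n.down := hfle n.down
      exact (by exact this : f n ≤ κseq n.down).trans (hc n.down)
    have hsupseq : ∀ c : Cardinal.{u}, c < κ → ∃ k : ℕ, c ≤ κseq k := by
      intro c hc
      by_contra h
      push_neg at h
      have h1 : ∀ k, κseq k ≤ c := fun k => (h k).le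
      exact absurd (hcof c h1) (not_le.2 hc)
    -- heavy/light dichotomy
    by_cases hH : ∃ x ∈ Z, ∀ ρ : ℝ, 0 < ρ → κ ≤ densC (Z ∩ ball x ρ)
    · obtain ⟨x, hx, hheavy⟩ := hH
      exact hFS (sol_of_heavy x hx hheavy hκlt IH hseqlt hseqge hcof)
    · push_neg at hH
      have hL : ∀ x ∈ Z, ∃ n : ℕ, densC (Z ∩ ball x (1/(n+1))) < κ := by
        intro x hxZ
        obtain ⟨ρ, hρ, hlt'⟩ := hH x hxZ
        obtain ⟨n, hn⟩ := exists_nat_one_div_lt hρ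
        refine ⟨n, ?_⟩
        have hsub : Z ∩ ball x (1/(n+1)) ⊆ Z ∩ ball x ρ :=
          inter_subset_inter_right Z (ball_subset_ball hn.le)
        calc densC (Z ∩ ball x (1/(n+1))) ≤ ℵ₀ ⊔ densC (Z ∩ ball x ρ) := densC_mono hsub
          _ < κ := sup_lt_iff.2 ⟨hκlt, hlt'⟩
      exact hFS (sol_of_light hκlt hFS IH hL hsupseq hseqlt hseqgt hseqreg hcof hdens)

/-! ### The analytic part: bump functions -/

/-- quadratic bump profile -/
noncomputable def hump (r d : ℝ) : ℝ := (max (r - d) 0)^2 / (2*r)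

theorem hump_nonneg {r : ℝ} (hr : 0 < r) (d : ℝ) : 0 ≤ hump r d := by
  unfold hump; positivity

theorem hump_zero {r : ℝ} (hr : 0 < r) : hump r 0 = r/2 := by
  unfold hump
  rw [sub_zero, max_eq_left hr.le]
  field_simp

theorem hump_of_ge {r d : ℝ} (hd : r ≤ d) : hump r d = 0 := by
  unfold hump
  rw [max_eq_right (by linarith)]
  simp

theorem hump_le_half {r : ℝ} (hr : 0 < r) {d : ℝ} (hd : 0 ≤ d) :
    hump r d ≤ (r - d)/2 ∨ hump r d = 0 := by
  rcases le_or_gt r d with h | h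
  · exact Or.inr (hump_of_ge h)
  · left
    unfold hump
    rw [max_eq_left (by linarith)]
    rw [div_le_div_iff₀ (by linarith) (by norm_num)]
    nlinarith

theorem hump_le_half' {r : ℝ} (hr : 0 < r) {d : ℝ} (hd : 0 ≤ d) (hdr : d < r) :
    hump r d ≤ (r - d)/2 := by
  unfold hump
  rw [max_eq_left (by linarith)]
  rw [div_le_div_iff₀ (by linarith) (by norm_num)]
  nlinarith

/-- strict 1-Lipschitz property of the profile -/
theorem hump_strict {r : ℝ} (hr : 0 < r) {u v : ℝ} (hu : 0 ≤ u) (hv : 0 ≤ v) (huv : u < v) :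
    0 ≤ hump r u - hump r v ∧ hump r u - hump r v < v - u := by
  set A := max (r - u) 0 with hA
  set B := max (r - v) 0 with hB
  have hA0 : 0 ≤ A := le_max_right _ _
  have hB0 : 0 ≤ B := le_max_right _ _
  have hAr : A ≤ r := by
    rw [hA, max_le_iff]; constructor <;> linarith
  have hAB : B ≤ A := by
    rw [hA, hB]
    exact max_le_max (by linarith) le_rfl
  have hABu : A - B ≤ v - u := by
    rw [hA, hB]
    rcases le_or_gt (r - u) 0 with h | h
    · rw [max_eq_right h]
      have : max (r - v) 0 = 0 ∨ max (r-v) 0 = r - v := by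
        rcases le_total (r-v) 0 with h' | h'
        · exact Or.inl (max_eq_right h')
        · exact Or.inr (max_eq_left h')
      rcases this with h' | h' <;> rw [h'] <;> linarith [le_max_right (r-v) (0:ℝ)]
    · rw [max_eq_left h.le]
      rcases le_total (r-v) 0 with h' | h'
      · rw [max_eq_right h']; linarith
      · rw [max_eq_left h']; linarith
  have key : hump r u - hump r v = (A - B)*(A + B)/(2*r) := by
    unfold hump
    rw [← hA, ← hB]
    field_simp
    ring
  constructor
  · rw [key]
    have : 0 ≤ (A - B)*(A+B) := mul_nonneg (by linarith) (by linarith)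
    positivity
  · rw [key]
    rcases eq_or_lt_of_le hAB with h | h
    · rw [← h]
      simp only [sub_self, zero_mul, zero_div]
      linarith
    · have hABr : A + B < 2*r := by
        rcases eq_or_lt_of_le hAr with h' | h'
        · -- A = r, so u ≤ 0, u = 0; B < A = r
          linarith
        · linarith
      rw [div_lt_iff₀ (by linarith)]
      have h1 : (A - B)*(A+B) < (A-B)*(2*r) := by
        apply mul_lt_mul_of_pos_left hABr
        linarith
      calc (A-B)*(A+B) < (A-B)*(2*r) := h1
        _ ≤ (v-u)*(2*r) := by
            apply mul_le_mul_of_nonneg_right hABu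
            linarith
  
theorem hump_lip {r : ℝ} (hr : 0 < r) {u v : ℝ} (hu : 0 ≤ u) (hv : 0 ≤ v) :
    |hump r u - hump r v| ≤ |u - v| := by
  rcases lt_trichotomy u v with h | h | h
  · obtain ⟨h1, h2⟩ := hump_strict hr hu hv h
    rw [abs_of_nonneg h1, abs_of_nonpos (by linarith)]
    linarith
  · subst h; simp
  · obtain ⟨h1, h2⟩ := hump_strict hr hv hu h
    rw [abs_sub_comm, abs_of_nonneg h1, abs_of_nonneg (by linarith : (0:ℝ) ≤ u - v)]
    linarith

theorem hump_lip_strict {r : ℝ} (hr : 0 < r) {u v : ℝ} (hu : 0 ≤ u) (hv : 0 ≤ v)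
    (huv : u ≠ v) : |hump r u - hump r v| < |u - v| ∨ hump r u = hump r v := by
  rcases lt_trichotomy u v with h | h | h
  · obtain ⟨h1, h2⟩ := hump_strict hr hu hv h
    rcases eq_or_lt_of_le h1 with he | he
    · exact Or.inr (by linarith)
    · left
      rw [abs_of_nonneg h1, abs_of_nonpos (by linarith)]
      linarith
  · exact absurd h huv
  · obtain ⟨h1, h2⟩ := hump_strict hr hv hu h
    rcases eq_or_lt_of_le h1 with he | he
    · exact Or.inr (by linarith)
    · left
      rw [abs_sub_comm, abs_of_nonneg h1, abs_of_nonneg (by linarith : (0:ℝ) ≤ u - v)]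
      linarith

theorem hump_slope {r : ℝ} (hr : 0 < r) {d : ℝ} (hd : 0 ≤ d) (hdr : d ≤ r) :
    hump r 0 - hump r d = d * (2*r - d) / (2*r) := by
  unfold hump
  rw [sub_zero, max_eq_left hr.le, max_eq_left (by linarith)]
  field_simp
  ring

section Family

variable {Γ : Type u} {c : Γ → M} {rr : Γ → ℝ}

open scoped Classical in
/-- the combined function with coefficient family `A` -/
noncomputable def famF (c : Γ → M) (rr : Γ → ℝ) (A : Γ → ℝ) (x : M) : ℝ :=
  if h : ∃ γ, dist x (c γ) < rr γ then
    A h.choose * hump (rr h.choose) (dist x (c h.choose)) else 0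

theorem famF_uniq (hr : ∀ γ, 0 < rr γ)
    (hsep : ∀ γ δ, γ ≠ δ → 2*(rr γ + rr δ) ≤ dist (c γ) (c δ)) {x : M} {γ δ : Γ}
    (h1 : dist x (c γ) < rr γ) (h2 : dist x (c δ) < rr δ) : γ = δ := by
  by_contra hne
  have h3 := hsep γ δ hne
  have h4 : dist (c γ) (c δ) ≤ dist (c γ) x + dist x (c δ) := dist_triangle _ _ _
  rw [dist_comm (c γ) x] at h4
  have := (hr γ).le
  have := (hr δ).le
  linarith

theorem famF_eval (hr : ∀ γ, 0 < rr γ)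
    (hsep : ∀ γ δ, γ ≠ δ → 2*(rr γ + rr δ) ≤ dist (c γ) (c δ)) {x : M} {γ : Γ}
    (h : dist x (c γ) < rr γ) (A : Γ → ℝ) :
    famF c rr A x = A γ * hump (rr γ) (dist x (c γ)) := by
  have hex : ∃ δ, dist x (c δ) < rr δ := ⟨γ, h⟩
  have hcs := hex.choose_spec
  have heq : hex.choose = γ := famF_uniq hr hsep hcs h
  unfold famF
  rw [dif_pos hex, heq]

theorem famF_far {x : M} (h : ¬ ∃ γ, dist x (c γ) < rr γ) (A : Γ → ℝ) :
    famF c rr A x = 0 := by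
  unfold famF
  rw [dif_neg h]

theorem famF_zero {x : M} (A : Γ → ℝ) (hA : ∀ γ, A γ = 0) : famF c rr A x = 0 := by
  unfold famF
  split_ifs with h
  · rw [hA]; ring
  · rfl

/-- case: x in the ball of γ, y far from all balls -/
theorem famF_case3 (hr : ∀ γ, 0 < rr γ)
    {A : Γ → ℝ} {C : ℝ} (hC : 0 < C) (hA : ∀ γ, |A γ| ≤ C) {x y : M} {γ : Γ}
    (hxγ : dist x (c γ) < rr γ) (hyfar : rr γ ≤ dist y (c γ)) :
    |A γ * hump (rr γ) (dist x (c γ))| < C * dist x y := by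
  set dx := dist x (c γ) with hdx
  have hdx0 : 0 ≤ dx := dist_nonneg
  have hφ : hump (rr γ) dx ≤ (rr γ - dx)/2 := hump_le_half' (hr γ) hdx0 hxγ
  have hφ0 : 0 ≤ hump (rr γ) dx := hump_nonneg (hr γ) dx
  have hd : rr γ - dx ≤ dist x y := by
    have h1 : dist y (c γ) ≤ dist y x + dist x (c γ) := dist_triangle _ _ _
    rw [dist_comm y x] at h1
    linarith
  have h2 : |A γ * hump (rr γ) dx| ≤ C * hump (rr γ) dx := by
    rw [abs_mul, abs_of_nonneg hφ0]
    exact mul_le_mul_of_nonneg_right (hA γ) hφ0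
  have h3 : C * hump (rr γ) dx < C * dist x y := by
    apply mul_lt_mul_of_pos_left _ hC
    calc hump (rr γ) dx ≤ (rr γ - dx)/2 := hφ
      _ < rr γ - dx := by linarith
      _ ≤ dist x y := hd
  linarith

/-- the master strict estimate -/
theorem famF_strict (hr : ∀ γ, 0 < rr γ)
    (hsep : ∀ γ δ, γ ≠ δ → 2*(rr γ + rr δ) ≤ dist (c γ) (c δ))
    (A : Γ → ℝ) {C : ℝ} (hC : 0 < C) (hA : ∀ γ, |A γ| ≤ C) {x y : M} (hxy : x ≠ y) :
    |famF c rr A x - famF c rr A y| < C * dist x y := by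
  have hdpos : 0 < dist x y := dist_pos.2 hxy
  by_cases hx : ∃ γ, dist x (c γ) < rr γ
  · obtain ⟨γ, hγ⟩ := hx
    rw [famF_eval hr hsep hγ]
    by_cases hy : ∃ δ, dist y (c δ) < rr δ
    · obtain ⟨δ, hδ⟩ := hy
      rw [famF_eval hr hsep hδ]
      by_cases hγδ : γ = δ
      · subst hγδ
        set dx := dist x (c γ)
        set dy := dist y (c γ)
        rw [← mul_sub, abs_mul]
        by_cases hdd : dx = dy
        · rw [hdd, sub_self, abs_zero, mul_zero]; positivity
        · rcases hump_lip_strict (hr γ) (dist_nonneg : (0:ℝ) ≤ dx)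
              (dist_nonneg : (0:ℝ) ≤ dy) hdd with hst | heq
          · calc |A γ| * |hump (rr γ) dx - hump (rr γ) dy|
                ≤ C * |hump (rr γ) dx - hump (rr γ) dy| :=
                  mul_le_mul_of_nonneg_right (hA γ) (abs_nonneg _)
              _ < C * |dx - dy| := mul_lt_mul_of_pos_left hst hC
              _ ≤ C * dist x y := by
                  apply mul_le_mul_of_nonneg_left _ hC.le
                  exact abs_dist_sub_le x y (c γ)
          · rw [heq, sub_self, abs_zero, mul_zero]
            positivity
      · -- different balls
        set dx := dist x (c γ)
        set dy := dist y (c δ)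
        have hφx : hump (rr γ) dx ≤ (rr γ - dx)/2 := hump_le_half' (hr γ) dist_nonneg hγ
        have hφy : hump (rr δ) dy ≤ (rr δ - dy)/2 := hump_le_half' (hr δ) dist_nonneg hδ
        have hφx0 : 0 ≤ hump (rr γ) dx := hump_nonneg (hr γ) _
        have hφy0 : 0 ≤ hump (rr δ) dy := hump_nonneg (hr δ) _
        have htri : dist (c γ) (c δ) ≤ dx + dist x y + dy := by
          calc dist (c γ) (c δ) ≤ dist (c γ) x + dist x (c δ) := dist_triangle _ _ _
            _ ≤ dist (c γ) x + (dist x y + dist y (c δ)) :=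
                add_le_add_right (dist_triangle _ _ _) _
            _ = dx + dist x y + dy := by rw [dist_comm (c γ) x]; ring
        have hsep' := hsep γ δ hγδ
        have hsum : hump (rr γ) dx + hump (rr δ) dy < dist x y := by
          have h1 : (rr γ - dx)/2 + (rr δ - dy)/2 < 2*(rr γ + rr δ) - dx - dy := by
            have := hr γ; have := hr δ
            linarith
          linarith
        calc |A γ * hump (rr γ) dx - A δ * hump (rr δ) dy|
            ≤ |A γ * hump (rr γ) dx| + |A δ * hump (rr δ) dy| := abs_sub _ _
          _ ≤ C * hump (rr γ) dx + C * hump (rr δ) dy := by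
              gcongr
              · rw [abs_mul, abs_of_nonneg hφx0]
                exact mul_le_mul_of_nonneg_right (hA γ) hφx0
              · rw [abs_mul, abs_of_nonneg hφy0]
                exact mul_le_mul_of_nonneg_right (hA δ) hφy0
          _ = C * (hump (rr γ) dx + hump (rr δ) dy) := by ring
          _ < C * dist x y := mul_lt_mul_of_pos_left hsum hC
    · -- y far
      rw [famF_far hy, sub_zero]
      push_neg at hy
      exact famF_case3 hr hC hA hγ (hy γ)
  · rw [famF_far hx]
    by_cases hy : ∃ δ, dist y (c δ) < rr δ
    · obtain ⟨δ, hδ⟩ := hy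
      rw [famF_eval hr hsep hδ]
      push_neg at hx
      rw [zero_sub, abs_neg, dist_comm x y]
      exact famF_case3 hr hC hA hδ (hx δ)
    · rw [famF_far hy, sub_zero, abs_zero]
      positivity

end Family

theorem famF_lip {Γ : Type u} {c : Γ → M} {rr : Γ → ℝ} (hr : ∀ γ, 0 < rr γ)
    (hsep : ∀ γ δ, γ ≠ δ → 2*(rr γ + rr δ) ≤ dist (c γ) (c δ))
    (A : Γ → ℝ) {C : ℝ} (hC0 : 0 ≤ C) (hA : ∀ γ, |A γ| ≤ C) (x y : M) :
    |famF c rr A x - famF c rr A y| ≤ C * dist x y := by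
  by_cases hxy : x = y
  · subst hxy; simp
  · rcases eq_or_lt_of_le hC0 with h | h
    · have hz : ∀ γ, A γ = 0 := by
        intro γ
        have := hA γ
        rw [← h] at this
        exact abs_nonpos_iff.1 this
      rw [famF_zero A hz, famF_zero A hz, sub_self, abs_zero]
      positivity
    · exact (famF_strict hr hsep A h hA hxy).le

/-- norm attainment for c₀ functions on a discrete space -/
theorem c0_norm_facts {Γ : Type u} [TopologicalSpace Γ] [DiscreteTopology Γ] [Nonempty Γ]
    (a : C₀(Γ, ℝ)) :
    (∀ γ, |a γ| ≤ ‖a‖) ∧ (a ≠ 0 → 0 < ‖a‖ ∧ ∃ γ, |a γ| = ‖a‖) := by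
  have hub : ∀ γ, |a γ| ≤ ‖a‖ := by
    intro γ
    have h1 : ‖a.toBCF γ‖ ≤ ‖a.toBCF‖ := BoundedContinuousFunction.norm_coe_le_norm _ γ
    rwa [ZeroAtInftyContinuousMap.norm_toBCF_eq_norm, Real.norm_eq_abs] at h1
  have hle : ∀ C : ℝ, 0 ≤ C → (∀ γ, |a γ| ≤ C) → ‖a‖ ≤ C := by
    intro C hC0 hC
    rw [← ZeroAtInftyContinuousMap.norm_toBCF_eq_norm]
    rw [BoundedContinuousFunction.norm_le hC0]
    intro γ
    rw [Real.norm_eq_abs]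
    exact hC γ
  refine ⟨hub, fun ha => ?_⟩
  have hpos : 0 < ‖a‖ := by
    rcases (norm_nonneg a).eq_or_lt with h | h
    · exfalso
      apply ha
      ext γ
      have h1 := hub γ
      rw [← h] at h1
      simpa using abs_nonpos_iff.1 h1
    · exact h
  refine ⟨hpos, ?_⟩
  set K : Set Γ := {γ | ‖a‖/2 ≤ |a γ|} with hK
  have hfin : K.Finite := by
    have h1 : Filter.Tendsto a (Filter.cocompact Γ) (nhds 0) :=
      ZeroAtInftyContinuousMap.zero_at_infty' a
    rw [Filter.cocompact_eq_cofinite] at h1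
    have h2 : ∀ᶠ γ in Filter.cofinite, dist (a γ) 0 < ‖a‖/2 :=
      Metric.tendsto_nhds.1 h1 _ (by linarith)
    have h3 : {γ | ¬ dist (a γ) 0 < ‖a‖/2}.Finite := Filter.eventually_cofinite.1 h2
    refine h3.subset ?_
    intro γ hγ
    rw [mem_setOf_eq, not_lt, Real.dist_eq, sub_zero]
    exact hγ
  by_cases hne : K.Nonempty
  · obtain ⟨γ₀, hγ₀, hmax⟩ := Set.exists_max_image K (fun γ => |a γ|) hfin hne
    have hall : ∀ γ, |a γ| ≤ |a γ₀| := by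
      intro γ
      by_cases h : γ ∈ K
      · exact hmax γ h
      · rw [hK, mem_setOf_eq, not_le] at h
        exact h.le.trans hγ₀
    exact ⟨γ₀, le_antisymm (hub γ₀) (hle _ (abs_nonneg _) hall)⟩
  · exfalso
    rw [Set.not_nonempty_iff_eq_empty] at hne
    have hall : ∀ γ, |a γ| ≤ ‖a‖/2 := by
      intro γ
      have : γ ∉ K := by rw [hne]; exact notMem_empty γ
      rw [hK, mem_setOf_eq, not_le] at this
      exact this.le
    have := hle _ (by linarith) hall
    linarith

theorem famF_add {Γ : Type u} {c : Γ → M} {rr : Γ → ℝ} (A B : Γ → ℝ) (x : M) :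
    famF c rr (A + B) x = famF c rr A x + famF c rr B x := by
  unfold famF
  split_ifs with h
  · simp only [Pi.add_apply]; ring
  · ring

theorem famF_smul {Γ : Type u} {c : Γ → M} {rr : Γ → ℝ} (t : ℝ) (A : Γ → ℝ) (x : M) :
    famF c rr (t • A) x = t * famF c rr A x := by
  unfold famF
  split_ifs with h
  · simp only [Pi.smul_apply, smul_eq_mul]; ring
  · ring

/-- If the set of accumulation points of an infinite metric space `M` has infinite density
character `Γ`, then `(PNA(M) \ SNA(M)) ∪ {0}` contains an isometric copy of `c₀(Γ)`. -/
theorem c0Gamma_in_PNA_not_SNA {M : Type u} [MetricSpace M] [Infinite M] (base : M)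
    (Γ : Type u) [Infinite Γ] [TopologicalSpace Γ] [DiscreteTopology Γ]
    (M' : Set M) (hM' : M' = {x : M | AccPt x (Filter.principal (Set.univ : Set M))})
    (hlow : ∀ D : Set M, D ⊆ M' → M' ⊆ closure D → Cardinal.mk Γ ≤ Cardinal.mk ↥D)
    (hex : ∃ D : Set M, D ⊆ M' ∧ M' ⊆ closure D ∧ Cardinal.mk ↥D = Cardinal.mk Γ) :
    ∃ T : C₀(Γ, ℝ) →ₗ[ℝ] (M → ℝ),
      ∀ a : C₀(Γ, ℝ),
        MemLip0 base (T a) ∧ lipNorm (T a) = ‖a‖ ∧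
        (a ≠ 0 → PointwiseAttains (T a) ∧ ¬ StronglyAttains (T a)) := by
  classical
  have hNM : Nonempty M := ⟨base⟩
  have hκℵ : ℵ₀ ≤ #Γ := Cardinal.aleph0_le_mk Γ
  have hdens : #Γ ≤ densC M' := le_densC fun D hD => hlow D hD.1 hD.2
  obtain ⟨S, brad, hS1, hS2, hS3, hS4⟩ := lemC (#Γ) M' hκℵ hdens
  obtain ⟨emb⟩ : Nonempty (Γ ↪ ↥S) := Cardinal.le_def Γ (↥S) |>.1 hS4
  set c : Γ → M := fun γ => ((emb γ : ↥S) : M) with hc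
  set rr : Γ → ℝ := fun γ => brad (c γ) / 4 with hrr
  have hcS : ∀ γ, c γ ∈ S := fun γ => (emb γ).2
  have hrpos : ∀ γ, 0 < rr γ := fun γ => by
    have := hS2 _ (hcS γ); positivity
  have hcne : ∀ {γ δ : Γ}, γ ≠ δ → c γ ≠ c δ := by
    intro γ δ h hcc
    exact h (emb.injective (Subtype.ext hcc))
  have hsep : ∀ γ δ, γ ≠ δ → 2*(rr γ + rr δ) ≤ dist (c γ) (c δ) := by
    intro γ δ h
    have h1 := hS3 _ (hcS γ) _ (hcS δ) (hcne h)
    have h2 := hS3 _ (hcS δ) _ (hcS γ) (hcne h.symm)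
    rw [dist_comm] at h2
    simp only [hrr]
    linarith
  have hacc : ∀ γ, ∀ ε : ℝ, 0 < ε → ∃ y : M, y ≠ c γ ∧ dist y (c γ) < ε := by
    intro γ ε hε
    have h1 : c γ ∈ M' := hS1 (hcS γ)
    rw [hM', mem_setOf_eq, accPt_iff_nhds] at h1
    obtain ⟨y, ⟨hy1, _⟩, hy2⟩ := h1 (ball (c γ) ε) (ball_mem_nhds _ hε)
    exact ⟨y, hy2, mem_ball.1 hy1⟩
  refine ⟨{ toFun := fun a => fun x => famF c rr (⇑a) x - famF c rr (⇑a) base,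
            map_add' := ?_, map_smul' := ?_ }, ?_⟩
  · intro a b
    funext x
    have hab : ⇑(a + b) = ⇑a + ⇑b := rfl
    simp only [hab, famF_add, Pi.add_apply]
    ring
  · intro t a
    funext x
    have hta : ⇑(t • a) = t • ⇑a := rfl
    simp only [hta, famF_smul, RingHom.id_apply, Pi.smul_apply, smul_eq_mul]
    ring
  intro a
  simp only [LinearMap.coe_mk, AddHom.coe_mk]
  set A : Γ → ℝ := ⇑a with hA
  set g : M → ℝ := fun x => famF c rr A x - famF c rr A base with hg
  obtain ⟨hub, hattain⟩ := c0_norm_facts a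
  have hweak : ∀ x y : M, |g x - g y| ≤ ‖a‖ * dist x y := by
    intro x y
    have : g x - g y = famF c rr A x - famF c rr A y := by simp only [hg]; ring
    rw [this]
    exact famF_lip hrpos hsep A (norm_nonneg a) hub x y
  -- the slope set
  set SlopeSet : Set ℝ := {r : ℝ | ∃ p q : M, p ≠ q ∧ r = |g p - g q| / dist p q}
    with hSlope
  have hslope_ne : SlopeSet.Nonempty := by
    obtain ⟨p, q, hpq⟩ := exists_pair_ne M
    exact ⟨_, p, q, hpq, rfl⟩
  have hslope_ub : ∀ r ∈ SlopeSet, r ≤ ‖a‖ := by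
    rintro r ⟨p, q, hpq, rfl⟩
    rw [div_le_iff₀ (dist_pos.2 hpq)]
    exact hweak p q
  have hslope_bdd : BddAbove SlopeSet := ⟨‖a‖, fun r hr => hslope_ub r hr⟩
  have hslope_nonneg : ∀ r ∈ SlopeSet, 0 ≤ r := by
    rintro r ⟨p, q, hpq, rfl⟩
    exact div_nonneg (abs_nonneg _) dist_nonneg
  -- the key slope estimates near an attaining index
  have hkey : ∀ γ₀ : Γ, |A γ₀| = ‖a‖ → 0 < ‖a‖ → ∀ ε : ℝ, 0 < ε →
      ∃ y : M, y ≠ c γ₀ ∧ ‖a‖ - ε < |g (c γ₀) - g y| / dist (c γ₀) y := by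
    intro γ₀ habs hpos ε hε
    set r := rr γ₀ with hr
    have hr0 : 0 < r := hrpos γ₀
    set δ : ℝ := min r (r * ε / ‖a‖) with hδ
    have hδ0 : 0 < δ := lt_min hr0 (by positivity)
    obtain ⟨y, hy1, hy2⟩ := hacc γ₀ δ hδ0
    set dq := dist y (c γ₀) with hdq
    have hdq0 : 0 < dq := dist_pos.2 hy1
    have hdqr : dq < r := lt_of_lt_of_le hy2 (min_le_left _ _)
    have hdqε : dq < r * ε / ‖a‖ := lt_of_lt_of_le hy2 (min_le_right _ _)
    refine ⟨y, hy1, ?_⟩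
    have he1 : famF c rr A (c γ₀) = A γ₀ * hump r 0 := by
      have hcond : dist (c γ₀) (c γ₀) < rr γ₀ := by rw [dist_self]; exact hr0
      rw [famF_eval hrpos hsep hcond A, dist_self]
    have he2 : famF c rr A y = A γ₀ * hump r dq := by
      have hcond : dist y (c γ₀) < rr γ₀ := hdqr
      rw [famF_eval hrpos hsep hcond A]
    have hgdiff : g (c γ₀) - g y = A γ₀ * (hump r 0 - hump r dq) := by
      simp only [hg, he1, he2]
      ring
    have hslopeval : hump r 0 - hump r dq = dq * (2*r - dq) / (2*r) :=
      hump_slope hr0 hdq0.le hdqr.le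
    have habs2 : |g (c γ₀) - g y| = ‖a‖ * (dq * (2*r - dq) / (2*r)) := by
      rw [hgdiff, hslopeval, abs_mul, habs]
      congr 1
      rw [abs_of_nonneg]
      apply div_nonneg (mul_nonneg hdq0.le (by linarith)) (by linarith)
    have hdist : dist (c γ₀) y = dq := dist_comm (c γ₀) y
    rw [habs2, hdist]
    have hval : ‖a‖ * (dq * (2*r - dq) / (2*r)) / dq = ‖a‖ * (2*r - dq) / (2*r) := by
      field_simp
    rw [hval]
    have h2 : ‖a‖ - ‖a‖ * (2*r - dq)/(2*r) = ‖a‖ * dq / (2*r) := by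
      field_simp
      ring
    have h3 : ‖a‖ * dq / (2*r) < ε := by
      rw [div_lt_iff₀ (by positivity)]
      have h4 : ‖a‖ * dq < ‖a‖ * (r * ε / ‖a‖) := by
        exact mul_lt_mul_of_pos_left hdqε hpos
      have h5 : ‖a‖ * (r * ε / ‖a‖) = r * ε := by field_simp
      rw [h5] at h4
      nlinarith [hr0, hε]
    linarith
  -- the Lipschitz norm
  have hlip : lipNorm g = ‖a‖ := by
    show sSup SlopeSet = ‖a‖
    by_cases ha : a = 0
    · subst ha
      have hz : ∀ x : M, g x = 0 := by
        intro x
        have h0 : ∀ γ, A γ = 0 := fun γ => rfl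
        simp only [hg, famF_zero A h0, sub_zero]
      have hset : SlopeSet = {0} := by
        apply Set.eq_of_subset_of_subset
        · rintro r ⟨p, q, hpq, rfl⟩
          simp [hz]
        · rintro r rfl
          obtain ⟨p, q, hpq⟩ := exists_pair_ne M
          exact ⟨p, q, hpq, by simp [hz]⟩
      rw [hset, csSup_singleton]
      simp
    · obtain ⟨hpos, γ₀, habs⟩ := hattain ha
      apply le_antisymm (csSup_le hslope_ne hslope_ub)
      by_contra hcon
      push_neg at hcon
      set ε := ‖a‖ - sSup SlopeSet with hε
      have hε0 : 0 < ε := by simp only [hε]; linarith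
      obtain ⟨y, hy1, hy2⟩ := hkey γ₀ habs hpos ε hε0
      have hmem : |g (c γ₀) - g y| / dist (c γ₀) y ∈ SlopeSet :=
        ⟨c γ₀, y, Ne.symm hy1, rfl⟩
      have := le_csSup hslope_bdd hmem
      simp only [hε] at hy2
      linarith
  refine ⟨⟨by simp only [hg, sub_self], ⟨‖a‖₊, ?_⟩⟩, hlip, ?_⟩
  · -- Lipschitz
    apply LipschitzWith.of_dist_le_mul
    intro x y
    have hco : (‖a‖₊ : ℝ) = ‖a‖ := rfl
    rw [Real.dist_eq, hco]
    exact hweak x y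
  intro ha
  obtain ⟨hpos, γ₀, habs⟩ := hattain ha
  constructor
  · -- PointwiseAttains
    refine ⟨c γ₀, ?_⟩
    rw [hlip]
    set PSet : Set ℝ := {r : ℝ | ∃ q : M, q ≠ c γ₀ ∧ r = |g (c γ₀) - g q| / dist (c γ₀) q}
      with hPSet
    have hP_ub : ∀ r ∈ PSet, r ≤ ‖a‖ := by
      rintro r ⟨q, hq, rfl⟩
      rw [div_le_iff₀ (dist_pos.2 (Ne.symm hq))]
      exact hweak _ _
    have hP_ne : PSet.Nonempty := by
      obtain ⟨y, hy1, _⟩ := hacc γ₀ 1 one_pos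
      exact ⟨_, y, hy1, rfl⟩
    have hP_bdd : BddAbove PSet := ⟨‖a‖, fun r hr => hP_ub r hr⟩
    apply le_antisymm (csSup_le hP_ne hP_ub)
    by_contra hcon
    push_neg at hcon
    set ε := ‖a‖ - sSup PSet with hε
    have hε0 : 0 < ε := by simp only [hε]; linarith
    obtain ⟨y, hy1, hy2⟩ := hkey γ₀ habs hpos ε hε0
    have hmem : |g (c γ₀) - g y| / dist (c γ₀) y ∈ PSet := ⟨y, hy1, rfl⟩
    have := le_csSup hP_bdd hmem
    simp only [hε] at hy2
    linarith
  · -- not StronglyAttains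
    rintro ⟨p, q, hpq, heq⟩
    rw [hlip] at heq
    have hstrict : |g p - g q| < ‖a‖ * dist p q := by
      have : g p - g q = famF c rr A p - famF c rr A q := by simp only [hg]; ring
      rw [this]
      exact famF_strict hrpos hsep A hpos hub hpq
    rw [heq] at hstrict
    exact lt_irrefl _ hstrict
end
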